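/- arXiv:2109.05630 — 3 statements merged into one kernel-verified Lean document; each statement's English description precedes it below -/
import Mathlib

section
/- For every integer m ≥ 1 and every tree T with m edges, there exists a partition of the vertex set of T into nonempty parts, each inducing a connected subgraph of T, such that the quotient graph (with one vertex per part, two parts adjacent if and only if some edge of T joins them) is a caterpillar with ⌈√(8m) − 2⌉ edges. -/
open SimpleGraph

/-- The number of edges of a simple graph. -/
noncomputable def edgeCount {V : Type*} (G : SimpleGraph V) : ℕ := G.edgeSet.ncard

/-- The degree of a vertex. -/
noncomputable def deg {V : Type*} (G : SimpleGraph V) (v : V) : ℕ := (G.neighborSet v).ncard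

/-- The number of leaves (vertices of degree 1). -/
noncomputable def leafCount {V : Type*} (G : SimpleGraph V) : ℕ := {v | deg G v = 1}.ncard

/-- The diameter: the maximum distance between two vertices. -/
noncomputable def treeDiam {V : Type*} (G : SimpleGraph V) : ℕ :=
  sSup {n | ∃ u v : V, G.dist u v = n}

/-- κ(T) = (number of leaves) + (diameter) - 2. -/
noncomputable def kappa {V : Type*} (G : SimpleGraph V) : ℕ :=
  leafCount G + treeDiam G - 2

/-- A graph is a path graph if it is acyclic, preconnected, and has maximum degree ≤ 2
(the empty graph counts as a path). -/
def IsPathGraph {W : Type*} (H : SimpleGraph W) : Prop :=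
  H.IsAcyclic ∧ H.Preconnected ∧
    ∀ v a b c : W, H.Adj v a → H.Adj v b → H.Adj v c → a = b ∨ a = c ∨ b = c

/-- A caterpillar is a tree whose non-leaf vertices induce a path. -/
def IsCaterpillar {V : Type*} (G : SimpleGraph V) : Prop :=
  G.IsTree ∧ IsPathGraph (G.induce {v | 2 ≤ deg G v})

/-- The quotient graph of `G` along a map `c` on vertices: two images are adjacent iff
they are distinct and some edge of `G` joins their fibers. -/
def quotientGraph {V W : Type*} (G : SimpleGraph V) (c : V → W) : SimpleGraph W where
  Adj a b := a ≠ b ∧ ∃ u v : V, c u = a ∧ c v = b ∧ G.Adj u v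
  symm := by
    constructor
    rintro a b ⟨hne, u, v, hu, hv, h⟩
    exact ⟨hne.symm, v, u, hv, hu, h.symm⟩
  loopless := by
    constructor
    rintro a ⟨hne, -⟩
    exact hne rfl

/-- A spider is a tree with at most one vertex of degree greater than 2. -/
def IsSpider {V : Type*} (G : SimpleGraph V) : Prop :=
  G.IsTree ∧ ∀ u v : V, 3 ≤ deg G u → 3 ≤ deg G v → u = v

/-- `k` is the maximum number of edges of a vertex-induced subgraph of `G`
that is a caterpillar. -/
def MaxInducedCaterpillar {V : Type*} (G : SimpleGraph V) (k : ℕ) : Prop :=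
  IsGreatest {j : ℕ | ∃ s : Set V, IsCaterpillar (G.induce s) ∧ edgeCount (G.induce s) = j} k


open scoped Classical

namespace CatAux
variable {V : Type*} {G : SimpleGraph V}

lemma getVert_injOn {a b : V} {p : G.Walk a b} (hp : p.IsPath) :
    ∀ i ≤ p.length, ∀ j ≤ p.length, p.getVert i = p.getVert j → i = j := by
  induction p with
  | nil => intro i hi j hj _; simp at hi hj; omega
  | @cons u v w h p ih =>
    rw [Walk.cons_isPath_iff] at hp
    intro i hi j hj hij
    match i, j with
    | 0, 0 => rfl
    | 0, j + 1 =>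
      exfalso; apply hp.2
      rw [Walk.getVert_zero] at hij
      rw [Walk.mem_support_iff_exists_getVert]
      exact ⟨j, by simpa [Walk.getVert_cons_succ] using hij.symm, by simpa using hj⟩
    | i + 1, 0 =>
      exfalso; apply hp.2
      rw [Walk.getVert_zero] at hij
      rw [Walk.mem_support_iff_exists_getVert]
      exact ⟨i, by simpa [Walk.getVert_cons_succ] using hij, by simpa using hi⟩
    | i + 1, j + 1 =>
      simp only [Walk.getVert_cons_succ] at hij
      have := ih hp.1 i (by simpa using hi) j (by simpa using hj) hij
      omega

lemma getVert_takeUntil {a b x : V} {p : G.Walk a b} (hx : x ∈ p.support) {r : ℕ}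
    (hr : r ≤ (p.takeUntil x hx).length) :
    (p.takeUntil x hx).getVert r = p.getVert r := by
  conv_rhs => rw [← Walk.take_spec p hx]
  rw [Walk.getVert_append]
  rcases lt_or_eq_of_le hr with h | h
  · simp [h]
  · subst h
    simp [Walk.getVert_length]

lemma length_takeUntil {a b : V} {p : G.Walk a b} (hp : p.IsPath) {i : ℕ} (hi : i ≤ p.length)
    (hx : p.getVert i ∈ p.support) :
    (p.takeUntil (p.getVert i) hx).length = i := by
  have h1 : (p.takeUntil (p.getVert i) hx).length ≤ p.length := Walk.length_takeUntil_le p hx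
  apply getVert_injOn hp _ h1 _ hi
  rw [← getVert_takeUntil hx (le_refl _), Walk.getVert_length]

/-- Reachability through a walk whose support lies in `S`. -/
def ReachIn (G : SimpleGraph V) (S : Set V) (a b : V) : Prop :=
  ∃ w : G.Walk a b, ∀ z ∈ w.support, z ∈ S

lemma ReachIn.refl {S : Set V} {a : V} (ha : a ∈ S) : ReachIn G S a a :=
  ⟨Walk.nil, by simp [ha]⟩

lemma ReachIn.trans {S : Set V} {a b c : V} (h1 : ReachIn G S a b) (h2 : ReachIn G S b c) :
    ReachIn G S a c := by
  obtain ⟨w1, hw1⟩ := h1; obtain ⟨w2, hw2⟩ := h2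
  refine ⟨w1.append w2, fun z hz => ?_⟩
  rw [Walk.mem_support_append_iff] at hz
  tauto

lemma ReachIn.cons {S : Set V} {a b c : V} (h : G.Adj a b) (ha : a ∈ S)
    (h2 : ReachIn G S b c) : ReachIn G S a c := by
  obtain ⟨w, hw⟩ := h2
  refine ⟨Walk.cons h w, fun z hz => ?_⟩
  rw [Walk.support_cons, List.mem_cons] at hz
  rcases hz with rfl | hz
  · exact ha
  · exact hw z hz

lemma ReachIn.mono {S T : Set V} {a b : V} (hST : S ⊆ T) (h : ReachIn G S a b) :
    ReachIn G T a b := by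
  obtain ⟨w, hw⟩ := h; exact ⟨w, fun z hz => hST (hw z hz)⟩

lemma ReachIn.mem_left {S : Set V} {a b : V} (h : ReachIn G S a b) : a ∈ S := by
  obtain ⟨w, hw⟩ := h; exact hw a w.start_mem_support

lemma ReachIn.reachable_induce {S : Set V} {a b : V} (h : ReachIn G S a b) :
    ∃ (ha : a ∈ S) (hb : b ∈ S), (G.induce S).Reachable ⟨a, ha⟩ ⟨b, hb⟩ := by
  obtain ⟨w, hw⟩ := h
  induction w with
  | nil => exact ⟨hw _ (by simp), hw _ (by simp), by rfl⟩
  | @cons u v c h p ih =>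
    have hu : u ∈ S := hw _ (by simp)
    have hrest : ∀ z ∈ p.support, z ∈ S := fun z hz => hw z (by simp [hz])
    obtain ⟨hv, hc, hr⟩ := ih hrest
    exact ⟨hu, hc, Reachable.trans (Adj.reachable (by simpa using h : (G.induce S).Adj ⟨u, hu⟩ ⟨v, hv⟩)) hr⟩

end CatAux

namespace CatAux
variable {V : Type*} {G : SimpleGraph V}

noncomputable def tpath (hG : G.IsTree) (a b : V) : G.Walk a b :=
  (hG.existsUnique_path a b).choose

lemma tpath_isPath (hG : G.IsTree) (a b : V) : (tpath hG a b).IsPath :=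
  (hG.existsUnique_path a b).choose_spec.1

lemma tpath_eq (hG : G.IsTree) {a b : V} (p : G.Walk a b) (hp : p.IsPath) :
    p = tpath hG a b :=
  (hG.existsUnique_path a b).choose_spec.2 p hp

lemma tpath_self (hG : G.IsTree) (a : V) : tpath hG a a = Walk.nil :=
  (tpath_eq hG Walk.nil (by simp)).symm

lemma length_tpath_eq_dist (hG : G.IsTree) (a b : V) :
    (tpath hG a b).length = G.dist a b := by
  refine le_antisymm ?_ (dist_le _)
  obtain ⟨w, hw⟩ := (hG.isConnected a b).exists_walk_length_eq_dist
  have := tpath_eq hG (w.toPath : G.Walk a b) (w.toPath.2)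
  calc (tpath hG a b).length = (w.toPath : G.Walk a b).length := by rw [← this]
    _ ≤ w.length := Walk.length_bypass_le _
    _ = G.dist a b := hw

lemma tpath_length_zero_iff (hG : G.IsTree) {a b : V} :
    (tpath hG a b).length = 0 ↔ a = b := by
  constructor
  · intro h
    have := (tpath hG a b).getVert_length
    rw [h, Walk.getVert_zero] at this; exact this
  · rintro rfl; rw [tpath_self]; rfl

/-- `parent` of a vertex along the unique path from the root `a`. -/
noncomputable def par (hG : G.IsTree) (a v : V) : V :=
  (tpath hG a v).getVert ((tpath hG a v).length - 1)

lemma adj_par (hG : G.IsTree) {a v : V} (h : v ≠ a) : G.Adj (par hG a v) v := by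
  have hlen : (tpath hG a v).length ≠ 0 := fun hc => h ((tpath_length_zero_iff hG).mp hc).symm
  have := (tpath hG a v).adj_getVert_succ (i := (tpath hG a v).length - 1) (by omega)
  rw [show (tpath hG a v).length - 1 + 1 = (tpath hG a v).length by omega,
    Walk.getVert_length] at this
  exact this

lemma par_mem_support (hG : G.IsTree) {a v : V} :
    par hG a v ∈ (tpath hG a v).support := by
  rw [Walk.mem_support_iff_exists_getVert]
  exact ⟨(tpath hG a v).length - 1, rfl, by omega⟩

lemma tpath_par (hG : G.IsTree) {a v : V} (h : v ≠ a) :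
    tpath hG a (par hG a v) = (tpath hG a v).takeUntil (par hG a v) (par_mem_support hG) :=
  (tpath_eq hG _ ((tpath_isPath hG a v).takeUntil _)).symm

lemma length_tpath_par (hG : G.IsTree) {a v : V} (h : v ≠ a) :
    (tpath hG a (par hG a v)).length = (tpath hG a v).length - 1 := by
  have hlen : (tpath hG a v).length ≠ 0 := fun hc => h ((tpath_length_zero_iff hG).mp hc).symm
  rw [tpath_par hG h]
  exact length_takeUntil (tpath_isPath hG a v) (by omega) _

lemma getVert_tpath_par (hG : G.IsTree) {a v : V} (h : v ≠ a) {r : ℕ}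
    (hr : r ≤ (tpath hG a v).length - 1) :
    (tpath hG a (par hG a v)).getVert r = (tpath hG a v).getVert r := by
  rw [tpath_par hG h]
  exact getVert_takeUntil _ (by rw [← tpath_par hG h, length_tpath_par hG h]; exact hr)

lemma mem_support_tpath_par (hG : G.IsTree) {a v z : V} (h : v ≠ a) :
    z ∈ (tpath hG a v).support ↔ z ∈ (tpath hG a (par hG a v)).support ∨ z = v := by
  have hlen : (tpath hG a v).length ≠ 0 := fun hc => h ((tpath_length_zero_iff hG).mp hc).symm
  have hL := length_tpath_par hG h
  constructor
  · intro hz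
    rw [Walk.mem_support_iff_exists_getVert] at hz
    obtain ⟨n, hn, hnl⟩ := hz
    rcases Nat.lt_or_ge n ((tpath hG a v).length) with hlt | hge
    · left
      rw [Walk.mem_support_iff_exists_getVert]
      exact ⟨n, by rw [getVert_tpath_par hG h (by omega)]; exact hn, by omega⟩
    · right
      have : n = (tpath hG a v).length := by omega
      rw [this, Walk.getVert_length] at hn; exact hn.symm
  · rintro (hz | rfl)
    · rw [tpath_par hG h] at hz
      exact Walk.support_takeUntil_subset _ _ hz
    · exact Walk.end_mem_support _

lemma not_mem_support_tpath_par (hG : G.IsTree) {a v : V} (h : v ≠ a) :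
    v ∉ (tpath hG a (par hG a v)).support := by
  intro hv
  rw [Walk.mem_support_iff_exists_getVert] at hv
  obtain ⟨n, hn, hnl⟩ := hv
  have hL := length_tpath_par hG h
  have hlen : (tpath hG a v).length ≠ 0 := fun hc => h ((tpath_length_zero_iff hG).mp hc).symm
  rw [getVert_tpath_par hG h (by omega)] at hn
  have := getVert_injOn (tpath_isPath hG a v) n (by omega) ((tpath hG a v).length)
    (le_refl _) (by rw [hn, Walk.getVert_length])
  omega

lemma tpath_concat (hG : G.IsTree) {a v : V} (h : v ≠ a) :
    tpath hG a v = (tpath hG a (par hG a v)).concat (adj_par hG h) := by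
  refine (tpath_eq hG _ ?_).symm
  rw [Walk.concat_eq_append]
  rw [Walk.isPath_def, Walk.support_append]
  refine List.Nodup.append ((tpath_isPath hG a (par hG a v)).2) (by simp) ?_
  intro z hz hz2
  simp only [Walk.support_cons, Walk.support_nil, List.tail_cons, List.mem_singleton] at hz2
  subst hz2
  exact not_mem_support_tpath_par hG h hz

/-- For adjacent vertices, one is the parent of the other. -/
lemma adj_cases (hG : G.IsTree) {a x y : V} (h : G.Adj x y) :
    (y ≠ a ∧ x = par hG a y) ∨ (x ≠ a ∧ y = par hG a x) := by
  by_cases hy : y ∈ (tpath hG a x).support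
  · right
    -- x is a "child" of y : tpath x = (tpath y).concat
    have hne : x ≠ y := h.ne
    have hxny : x ∉ (tpath hG a y).support := by
      have heq : tpath hG a y = (tpath hG a x).takeUntil y hy :=
        (tpath_eq hG _ ((tpath_isPath hG a x).takeUntil _)).symm
      rw [heq]
      intro hx
      have := Walk.take_spec (tpath hG a x) hy
      have hnodup := (tpath_isPath hG a x).2
      rw [← this, Walk.support_append] at hnodup
      rw [List.nodup_append] at hnodup
      refine hnodup.2.2 x hx x ?_ rfl
      have hxe : x ∈ ((tpath hG a x).dropUntil y hy).support := Walk.end_mem_support _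
      rw [Walk.support_eq_cons, List.mem_cons] at hxe
      rcases hxe with h1 | h1
      · exact absurd h1 hne
      · exact h1
    have hpath : ((tpath hG a y).concat h.symm).IsPath := by
      rw [Walk.concat_eq_append, Walk.isPath_def, Walk.support_append]
      refine List.Nodup.append ((tpath_isPath hG a y).2) (by simp) ?_
      intro z hz hz2
      simp only [Walk.support_cons, Walk.support_nil, List.tail_cons, List.mem_singleton] at hz2
      subst hz2; exact hxny hz
    have heq : (tpath hG a y).concat h.symm = tpath hG a x := tpath_eq hG _ hpath
    have hxa : x ≠ a := by
      intro hxa; subst hxa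
      have := congrArg Walk.length heq
      rw [Walk.length_concat] at this
      rw [tpath_self] at this
      simp at this
    refine ⟨hxa, ?_⟩
    unfold par
    rw [← heq, Walk.length_concat]
    simp only [Nat.add_sub_cancel]
    rw [Walk.concat_eq_append, Walk.getVert_append]
    simp
  · left
    have hpath : ((tpath hG a x).concat h).IsPath := by
      rw [Walk.concat_eq_append, Walk.isPath_def, Walk.support_append]
      refine List.Nodup.append ((tpath_isPath hG a x).2) (by simp) ?_
      intro z hz hz2
      simp only [Walk.support_cons, Walk.support_nil, List.tail_cons, List.mem_singleton] at hz2
      subst hz2; exact hy hz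
    have heq : (tpath hG a x).concat h = tpath hG a y := tpath_eq hG _ hpath
    have hya : y ≠ a := by
      intro hya; subst hya
      have := congrArg Walk.length heq
      rw [Walk.length_concat, tpath_self] at this
      simp at this
    refine ⟨hya, ?_⟩
    unfold par
    rw [← heq, Walk.length_concat]
    simp only [Nat.add_sub_cancel]
    rw [Walk.concat_eq_append, Walk.getVert_append]
    simp

end CatAux

namespace CatAux
variable {V W : Type*} {G : SimpleGraph V} {c : V → W}

lemma quotient_walk_reachable : ∀ {x y : V} (_ : G.Walk x y),
    (quotientGraph G c).Reachable (c x) (c y) := by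
  intro x y w
  induction w with
  | nil => rfl
  | @cons u v z h p ih =>
    by_cases hc : c u = c v
    · rwa [hc]
    · exact Reachable.trans (Adj.reachable ⟨hc, u, v, rfl, rfl, h⟩) ih

lemma fiber_walk_del {x y : V} {a b : W} (hx : c x = a) (hy : c y = b) (hab : a ≠ b) :
    ∀ {w0 : W} {p q : {z : V // z ∈ c ⁻¹' {w0}}} (_ : (G.induce (c ⁻¹' {w0})).Walk p q),
    (G \ fromEdgeSet {s(x, y)}).Reachable p.1 q.1 := by
  intro w0 p q wk
  induction wk with
  | nil => rfl
  | @cons u v z h pw ih =>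
    refine Reachable.trans (Adj.reachable ?_) ih
    have hGadj : G.Adj u.1 v.1 := h
    have hu : c u.1 = w0 := u.2
    have hv : c v.1 = w0 := v.2
    rw [sdiff_adj]
    refine ⟨hGadj, ?_⟩
    rw [fromEdgeSet_adj]
    rintro ⟨hmem, -⟩
    rw [Set.mem_singleton_iff, Sym2.eq_iff] at hmem
    rcases hmem with ⟨h1, h2⟩ | ⟨h1, h2⟩
    · exact hab (by rw [← hx, ← h1, hu, ← hv, h2, hy])
    · exact hab (by rw [← hx, ← h2, hv, ← hu, h1, hy])

lemma fiber_reach_del {x y : V} {a b : W} (hx : c x = a) (hy : c y = b) (hab : a ≠ b)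
    (hfib : ∀ w, (G.induce (c ⁻¹' {w})).Connected) {x' y' : V} (hsame : c x' = c y') :
    (G \ fromEdgeSet {s(x, y)}).Reachable x' y' := by
  have h1 : x' ∈ c ⁻¹' {c x'} := rfl
  have h2 : y' ∈ c ⁻¹' {c x'} := by simp [hsame.symm]
  obtain ⟨wk⟩ := (hfib (c x')).preconnected ⟨x', h1⟩ ⟨y', h2⟩
  exact fiber_walk_del hx hy hab wk

lemma lift_reach_del {x y : V} {a b : W} (hx : c x = a) (hy : c y = b) (hab : a ≠ b)
    (hfib : ∀ w, (G.induce (c ⁻¹' {w})).Connected) :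
    ∀ {a' b' : W} (_ : ((quotientGraph G c) \ fromEdgeSet {s(a, b)}).Walk a' b')
      (x' y' : V), c x' = a' → c y' = b' → (G \ fromEdgeSet {s(x, y)}).Reachable x' y' := by
  intro a' b' w
  induction w with
  | nil =>
    intro x' y' hx' hy'
    exact fiber_reach_del hx hy hab hfib (by rw [hx', hy'])
  | @cons a1 a2 a3 h p ih =>
    intro x' y' hx' hy'
    rw [sdiff_adj] at h
    obtain ⟨⟨hne, u', v', hu', hv', hGadj⟩, hnd⟩ := h
    have hstep : (G \ fromEdgeSet {s(x, y)}).Adj u' v' := by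
      rw [sdiff_adj]
      refine ⟨hGadj, ?_⟩
      rw [fromEdgeSet_adj]
      rintro ⟨hmem, -⟩
      rw [Set.mem_singleton_iff, Sym2.eq_iff] at hmem
      apply hnd
      rw [fromEdgeSet_adj]
      refine ⟨?_, hne⟩
      rw [Set.mem_singleton_iff, Sym2.eq_iff]
      rcases hmem with ⟨h1, h2⟩ | ⟨h1, h2⟩
      · left; constructor <;> [rw [← hu', h1, hx]; rw [← hv', h2, hy]]
      · right; constructor <;> [rw [← hu', h1, hy]; rw [← hv', h2, hx]]
    have hr1 : (G \ fromEdgeSet {s(x, y)}).Reachable x' u' :=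
      fiber_reach_del hx hy hab hfib (by rw [hx', hu'])
    have hr2 := ih v' y' hv' hy'
    exact hr1.trans (hstep.reachable.trans hr2)

lemma quotient_isTree (hG : G.IsTree) (hsurj : Function.Surjective c)
    (hfib : ∀ w, (G.induce (c ⁻¹' {w})).Connected) : (quotientGraph G c).IsTree := by
  have hconn : (quotientGraph G c).Connected := by
    rw [connected_iff]
    have hV : Nonempty V := hG.isConnected.nonempty
    refine ⟨?_, Nonempty.map c hV⟩
    intro a b
    obtain ⟨x, rfl⟩ := hsurj a
    obtain ⟨y, rfl⟩ := hsurj b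
    obtain ⟨w⟩ := hG.isConnected x y
    exact quotient_walk_reachable w
  refine ⟨hconn, ?_⟩
  rw [isAcyclic_iff_forall_adj_isBridge]
  intro a b hadj
  obtain ⟨hne, x, y, hx, hy, hxy⟩ := hadj
  rw [isBridge_iff]
  intro hreach
  obtain ⟨w⟩ := hreach
  have hlift : (G \ fromEdgeSet {s(x, y)}).Reachable x y :=
    lift_reach_del hx hy hne hfib w x y hx hy
  have hbridge := (isAcyclic_iff_forall_adj_isBridge.mp hG.IsAcyclic) hxy
  rw [isBridge_iff] at hbridge
  exact hbridge hlift

end CatAux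

namespace CatAux

/-- Generic "induced subgraph of an acyclic graph is acyclic". -/
lemma isAcyclic_induce {V : Type*} {G : SimpleGraph V} (h : G.IsAcyclic) (S : Set V) :
    (G.induce S).IsAcyclic := by
  intro v w hw
  have hinj : Function.Injective (Embedding.induce (G := G) S) := (Embedding.induce S).injective
  exact h _ ((Walk.map_isCycle_iff_of_injective (p := w) (f := (Embedding.induce S).toHom)
    hinj).mpr hw)

/-- The caterpillar graph: a path `0, …, t` with `s` pendant legs, leg `a` attached at `φ a`. -/
def catG (t s : ℕ) (φ : Fin s → Fin (t + 1)) : SimpleGraph (Fin (t + 1) ⊕ Fin s) where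
  Adj x y :=
    match x, y with
    | .inl i, .inl i' => i.1 + 1 = i'.1 ∨ i'.1 + 1 = i.1
    | .inl i, .inr a => φ a = i
    | .inr a, .inl i => φ a = i
    | .inr _, .inr _ => False
  symm := by constructor; rintro (i | a) (i' | b) h <;> simp_all <;> omega
  loopless := by constructor; rintro (i | a) h <;> simp_all

variable {t s : ℕ} {φ : Fin s → Fin (t + 1)}

lemma catG_adj_inl_inl {i i' : Fin (t + 1)} :
    (catG t s φ).Adj (.inl i) (.inl i') ↔ (i.1 + 1 = i'.1 ∨ i'.1 + 1 = i.1) := Iff.rfl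

lemma catG_adj_inl_inr {i : Fin (t + 1)} {a : Fin s} :
    (catG t s φ).Adj (.inl i) (.inr a) ↔ φ a = i := Iff.rfl

lemma catG_adj_inr_inl {i : Fin (t + 1)} {a : Fin s} :
    (catG t s φ).Adj (.inr a) (.inl i) ↔ φ a = i := Iff.rfl

lemma catG_adj_inr_inr {a b : Fin s} : ¬ (catG t s φ).Adj (.inr a) (.inr b) := fun h => h

lemma neighborSet_inr (a : Fin s) :
    (catG t s φ).neighborSet (.inr a) = {.inl (φ a)} := by
  ext (i | b)
  · simp only [mem_neighborSet, Set.mem_singleton_iff]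
    rw [catG_adj_inr_inl]
    constructor
    · rintro rfl; rfl
    · rintro h; injection h with h; exact h.symm
  · simp only [mem_neighborSet, Set.mem_singleton_iff]
    constructor
    · intro h; exact absurd h catG_adj_inr_inr
    · rintro ⟨⟩

lemma deg_inr (a : Fin s) : deg (catG t s φ) (.inr a) = 1 := by
  rw [deg, neighborSet_inr, Set.ncard_singleton]

lemma inr_not_nonleaf (a : Fin s) :
    (Sum.inr a : Fin (t + 1) ⊕ Fin s) ∉ {w | 2 ≤ deg (catG t s φ) w} := by
  simp [deg_inr]

lemma two_le_deg_interior {i : Fin (t + 1)} (h0 : 0 < i.1) (ht : i.1 < t) :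
    2 ≤ deg (catG t s φ) (.inl i) := by
  rw [deg]
  rw [show (2 : ℕ) = 1 + 1 from rfl]
  refine Nat.succ_le_of_lt ?_
  rw [Set.one_lt_ncard_iff (Set.toFinite _)]
  refine ⟨.inl ⟨i.1 - 1, by omega⟩, .inl ⟨i.1 + 1, by omega⟩, ?_, ?_, ?_⟩
  case refine_3 =>
    intro hne
    injection hne with hne
    have := congrArg Fin.val hne
    simp only [] at this
    omega
  · rw [mem_neighborSet, catG_adj_inl_inl]; right; simp; omega
  · rw [mem_neighborSet, catG_adj_inl_inl]; left; rfl

lemma two_le_deg_end_iff (htt : 1 ≤ t) {i : Fin (t + 1)} (hi : i.1 = 0 ∨ i.1 = t) :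
    2 ≤ deg (catG t s φ) (.inl i) ↔ ∃ a, φ a = i := by
  set o : Fin (t + 1) := if i.1 = 0 then ⟨1, by omega⟩ else ⟨t - 1, by omega⟩ with ho
  have hadj_o : (catG t s φ).Adj (.inl i) (.inl o) := by
    rw [catG_adj_inl_inl, ho]
    split
    · left; simp only [Fin.val_mk]; omega
    · right; simp; omega
  have honly : ∀ i' : Fin (t + 1), (catG t s φ).Adj (.inl i) (.inl i') → i' = o := by
    intro i' hadj
    rw [catG_adj_inl_inl] at hadj
    have h2 := i'.2
    rw [ho]
    split
    · ext; simp; omega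
    · ext; simp; omega
  constructor
  · intro h2
    by_contra hno
    push_neg at hno
    have hsub : (catG t s φ).neighborSet (.inl i) ⊆ {.inl o} := by
      rintro (i' | a) hadj
      · rw [mem_neighborSet] at hadj
        rw [Set.mem_singleton_iff, honly i' hadj]
      · rw [mem_neighborSet, catG_adj_inl_inr] at hadj
        exact absurd hadj (hno a)
    have := Set.ncard_le_ncard hsub (Set.toFinite _)
    rw [Set.ncard_singleton] at this
    rw [deg] at h2
    omega
  · rintro ⟨a, ha⟩
    rw [deg, show (2 : ℕ) = 1 + 1 from rfl]
    refine Nat.succ_le_of_lt ?_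
    rw [Set.one_lt_ncard_iff (Set.toFinite _)]
    exact ⟨.inr a, .inl o, (by rw [mem_neighborSet, catG_adj_inl_inr]; exact ha),
      (by rw [mem_neighborSet]; exact hadj_o), by simp⟩

lemma mem_S_iff (htt : 1 ≤ t) {w : Fin (t + 1) ⊕ Fin s} :
    w ∈ {w | 2 ≤ deg (catG t s φ) w} ↔
      ∃ i : Fin (t + 1), w = .inl i ∧
        ((0 < i.1 ∧ i.1 < t) ∨ ((i.1 = 0 ∨ i.1 = t) ∧ ∃ a, φ a = i)) := by
  cases w with
  | inl i =>
    constructor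
    · intro hw
      refine ⟨i, rfl, ?_⟩
      by_cases hint : 0 < i.1 ∧ i.1 < t
      · exact Or.inl hint
      · have hi : i.1 = 0 ∨ i.1 = t := by omega
        exact Or.inr ⟨hi, (two_le_deg_end_iff htt hi).mp hw⟩
    · rintro ⟨i', hi', hcases⟩
      injection hi' with hi'; subst hi'
      rcases hcases with ⟨h0, ht⟩ | ⟨hi, ha⟩
      · exact two_le_deg_interior h0 ht
      · exact (two_le_deg_end_iff htt hi).mpr ha
  | inr a => simp [inr_not_nonleaf a, Set.mem_setOf_eq, deg_inr]

lemma edgeCount_catG : edgeCount (catG t s φ) = t + s := by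
  classical
  set f : Fin t ⊕ Fin s → Sym2 (Fin (t + 1) ⊕ Fin s) := fun x =>
    match x with
    | .inl r => s(.inl ⟨r.1, by omega⟩, .inl ⟨r.1 + 1, by omega⟩)
    | .inr a => s(.inr a, .inl (φ a)) with hf
  have hrange : (catG t s φ).edgeSet = Set.range f := by
    ext e
    induction e with
    | _ x y =>
      rw [mem_edgeSet]
      constructor
      · intro hadj
        match x, y with
        | .inl i, .inl i' =>
          rcases (catG_adj_inl_inl.mp hadj) with h | h
          · refine ⟨.inl ⟨i.1, by omega⟩, ?_⟩
            simp only [hf]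
            congr 1 <;> simp [Fin.ext_iff, h]
          · refine ⟨.inl ⟨i'.1, by omega⟩, ?_⟩
            simp only [hf]
            rw [Sym2.eq_swap]
            congr 1 <;> simp [Fin.ext_iff, h]
        | .inl i, .inr a =>
          refine ⟨.inr a, ?_⟩
          simp only [hf]
          rw [Sym2.eq_swap]
          congr 1
          rw [catG_adj_inl_inr.mp hadj]
        | .inr a, .inl i =>
          refine ⟨.inr a, ?_⟩
          simp only [hf]
          congr 1
          rw [catG_adj_inr_inl.mp hadj]
        | .inr a, .inr b => exact absurd hadj catG_adj_inr_inr
      · rintro ⟨(r | a), he⟩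
        · have : s(Sum.inl (⟨r.1, by omega⟩ : Fin (t+1)) , Sum.inl (⟨r.1 + 1, by omega⟩ : Fin (t+1))) = s(x, y) := he
          rw [Sym2.eq_iff] at this
          rcases this with ⟨hx, hy⟩ | ⟨hx, hy⟩ <;> subst hx <;> subst hy
          · exact Or.inl rfl
          · exact Or.inr rfl
        · have : s(Sum.inr a, Sum.inl (φ a)) = s(x, y) := he
          rw [Sym2.eq_iff] at this
          rcases this with ⟨hx, hy⟩ | ⟨hx, hy⟩ <;> subst hx <;> subst hy
          · exact rfl
          · exact rfl
  have hinj : Function.Injective f := by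
    rintro (r | a) (r' | a') heq <;> simp only [hf] at heq <;> rw [Sym2.eq_iff] at heq
    · rcases heq with ⟨h1, h2⟩ | ⟨h1, h2⟩
      · injection h1 with h1
        congr
        ext
        have := congrArg Fin.val h1
        simpa using this
      · injection h1 with h1; injection h2 with h2
        have h1 := congrArg Fin.val h1
        have h2 := congrArg Fin.val h2
        simp at h1 h2
        omega
    · rcases heq with ⟨h1, h2⟩ | ⟨h1, h2⟩ <;> simp at h1 h2
    · rcases heq with ⟨h1, h2⟩ | ⟨h1, h2⟩ <;> simp at h1 h2
    · rcases heq with ⟨h1, h2⟩ | ⟨h1, h2⟩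
      · injection h1 with h1; rw [h1]
      · exact absurd h1 (by simp)
  rw [edgeCount, hrange, ← Set.image_univ, Set.ncard_image_of_injective _ hinj,
    Set.ncard_univ, Nat.card_eq_fintype_card]
  simp

end CatAux

namespace CatAux
variable {t s : ℕ} {φ : Fin s → Fin (t + 1)}

lemma chainS (htt : 1 ≤ t) :
    ∀ (n : ℕ) (i i' : Fin (t + 1)) (hi : (.inl i) ∈ {w | 2 ≤ deg (catG t s φ) w})
      (hi' : (.inl i') ∈ {w | 2 ≤ deg (catG t s φ) w}), i'.1 = i.1 + n →
      ((catG t s φ).induce {w | 2 ≤ deg (catG t s φ) w}).Reachable ⟨.inl i, hi⟩ ⟨.inl i', hi'⟩ := by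
  intro n
  induction n with
  | zero =>
    intro i i' hi hi' h
    have : i = i' := by ext; omega
    subst this
    rfl
  | succ n ih =>
    intro i i' hi hi' h
    have hmidlt : i.1 + n < t + 1 := by have := i'.2; omega
    set mid : Fin (t + 1) := ⟨i.1 + n, hmidlt⟩ with hmid
    have hmidS : (Sum.inl mid : Fin (t + 1) ⊕ Fin s) ∈ {w | 2 ≤ deg (catG t s φ) w} := by
      rcases Nat.eq_zero_or_pos n with rfl | hn
      · have : mid = i := by ext; simp [hmid]
        rwa [this]
      · refine two_le_deg_interior (by simp [hmid]; omega) ?_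
        have h2 := i'.2
        simp only [hmid]
        rcases (mem_S_iff htt).mp hi' with ⟨iw, hiw, hcase⟩
        injection hiw with hiw
        subst hiw
        omega
    refine Reachable.trans (ih i mid hi hmidS (by simp [hmid])) (Adj.reachable ?_)
    have : (catG t s φ).Adj (.inl mid) (.inl i') := by
      rw [catG_adj_inl_inl]; left; simp [hmid]; omega
    exact this

lemma isCaterpillar_catG (htt : 1 ≤ t) (htree : (catG t s φ).IsTree) :
    IsCaterpillar (catG t s φ) := by
  refine ⟨htree, ?_, ?_, ?_⟩
  · exact isAcyclic_induce htree.IsAcyclic _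
  · -- preconnected
    rintro ⟨x, hx⟩ ⟨y, hy⟩
    obtain ⟨i, rfl, -⟩ := (mem_S_iff htt).mp hx
    obtain ⟨i', rfl, -⟩ := (mem_S_iff htt).mp hy
    rcases le_total i.1 i'.1 with h | h
    · exact chainS htt (i'.1 - i.1) i i' hx hy (by omega)
    · exact (chainS htt (i.1 - i'.1) i' i hy hx (by omega)).symm
  · -- max degree two
    rintro ⟨v, hv⟩ ⟨a, ha⟩ ⟨b, hb⟩ ⟨c, hc⟩ hva hvb hvc
    obtain ⟨i, rfl, -⟩ := (mem_S_iff htt).mp hv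
    have hval : ∀ (z : Fin (t + 1) ⊕ Fin s) (hz : z ∈ {w | 2 ≤ deg (catG t s φ) w}),
        (catG t s φ).Adj (.inl i) z → ∃ zi : Fin (t + 1), z = .inl zi ∧
          (i.1 + 1 = zi.1 ∨ zi.1 + 1 = i.1) := by
      intro z hz hadj
      obtain ⟨zi, rfl, -⟩ := (mem_S_iff htt).mp hz
      exact ⟨zi, rfl, catG_adj_inl_inl.mp hadj⟩
    obtain ⟨ai, rfl, hai⟩ := hval a ha hva
    obtain ⟨bi, rfl, hbi⟩ := hval b hb hvb
    obtain ⟨ci, rfl, hci⟩ := hval c hc hvc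
    have htri : ai.1 = bi.1 ∨ ai.1 = ci.1 ∨ bi.1 = ci.1 := by omega
    rcases htri with h | h | h
    · left; ext1; rw [Sum.inl.injEq]; ext; exact h
    · right; left; ext1; rw [Sum.inl.injEq]; ext; exact h
    · right; right; ext1; rw [Sum.inl.injEq]; ext; exact h

end CatAux

namespace CatAux
variable {V : Type*} {G : SimpleGraph V}

/-- Not lying on the spine `q`. -/
def OffSpine {u0 ud : V} (q : G.Walk u0 ud) (z : V) : Prop :=
  ∀ i ≤ q.length, q.getVert i ≠ z

/-- The index of the last spine vertex on the path from `u0` to `v`. -/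
noncomputable def jj (hG : G.IsTree) {u0 ud : V} (q : G.Walk u0 ud) (v : V) : ℕ :=
  Nat.findGreatest (fun i => q.getVert i ∈ (tpath hG u0 v).support) q.length

lemma jj_le (hG : G.IsTree) {u0 ud : V} (q : G.Walk u0 ud) (v : V) :
    jj hG q v ≤ q.length := Nat.findGreatest_le _

lemma tpath_spine (hG : G.IsTree) {u0 ud : V} (q : G.Walk u0 ud) (hq : q.IsPath)
    {i : ℕ} (hi : i ≤ q.length) :
    tpath hG u0 (q.getVert i) =
      q.takeUntil (q.getVert i) (Walk.mem_support_iff_exists_getVert.mpr ⟨i, rfl, hi⟩) :=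
  (tpath_eq hG _ (hq.takeUntil _)).symm

lemma spine_mem_support_iff (hG : G.IsTree) {u0 ud : V} (q : G.Walk u0 ud) (hq : q.IsPath)
    {i : ℕ} (hi : i ≤ q.length) {z : V} :
    z ∈ (tpath hG u0 (q.getVert i)).support ↔ ∃ r, r ≤ i ∧ q.getVert r = z := by
  rw [tpath_spine hG q hq hi, Walk.mem_support_iff_exists_getVert]
  have hlen : (q.takeUntil (q.getVert i)
      (Walk.mem_support_iff_exists_getVert.mpr ⟨i, rfl, hi⟩)).length = i :=
    length_takeUntil hq hi _
  constructor
  · rintro ⟨n, hn, hnl⟩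
    rw [hlen] at hnl
    exact ⟨n, hnl, by rw [← getVert_takeUntil _ (by rw [hlen]; exact hnl)]; exact hn⟩
  · rintro ⟨r, hr, hrz⟩
    exact ⟨r, by rw [getVert_takeUntil _ (by rw [hlen]; exact hr)]; exact hrz,
      by rw [hlen]; exact hr⟩

lemma jj_spine (hG : G.IsTree) {u0 ud : V} (q : G.Walk u0 ud) (hq : q.IsPath)
    {i : ℕ} (hi : i ≤ q.length) : jj hG q (q.getVert i) = i := by
  rw [jj, Nat.findGreatest_eq_iff]
  refine ⟨hi, fun _ => (spine_mem_support_iff hG q hq hi).mpr ⟨i, le_refl _, rfl⟩, ?_⟩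
  intro n hn hnle hmem
  rw [spine_mem_support_iff hG q hq hi] at hmem
  obtain ⟨r, hr, hrz⟩ := hmem
  have := getVert_injOn hq r (by omega) n (by omega) hrz
  omega

lemma jj_spec (hG : G.IsTree) {u0 ud : V} (q : G.Walk u0 ud) (v : V) :
    q.getVert (jj hG q v) ∈ (tpath hG u0 v).support := by
  have := Nat.findGreatest_spec (P := fun i => q.getVert i ∈ (tpath hG u0 v).support)
    (m := 0) (n := q.length) (Nat.zero_le _)
    (by show q.getVert 0 ∈ _; rw [Walk.getVert_zero]; exact Walk.start_mem_support _)
  exact this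

lemma le_jj_of_mem (hG : G.IsTree) {u0 ud : V} (q : G.Walk u0 ud) {v : V} {i : ℕ}
    (hi : i ≤ q.length) (hmem : q.getVert i ∈ (tpath hG u0 v).support) :
    i ≤ jj hG q v := by
  by_contra h
  push_neg at h
  exact Nat.findGreatest_is_greatest
    (P := fun i => q.getVert i ∈ (tpath hG u0 v).support) h hi hmem

lemma jj_par (hG : G.IsTree) {u0 ud : V} (q : G.Walk u0 ud) {v : V}
    (hv : v ≠ u0) (hoff : OffSpine q v) : jj hG q v = jj hG q (par hG u0 v) := by
  apply le_antisymm
  · apply le_jj_of_mem hG q (jj_le hG q v)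
    have := jj_spec hG q v
    rw [mem_support_tpath_par hG hv] at this
    rcases this with h | h
    · exact h
    · exact absurd h.symm (hoff _ (jj_le hG q v) ∘ Eq.symm)
  · apply le_jj_of_mem hG q (jj_le hG q (par hG u0 v))
    rw [mem_support_tpath_par hG hv]
    exact Or.inl (jj_spec hG q (par hG u0 v))

lemma par_spine (hG : G.IsTree) {u0 ud : V} (q : G.Walk u0 ud) (hq : q.IsPath)
    {i : ℕ} (h1 : 1 ≤ i) (hi : i ≤ q.length) :
    par hG u0 (q.getVert i) = q.getVert (i - 1) := by
  rw [par, tpath_spine hG q hq hi]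
  have hlen : (q.takeUntil (q.getVert i)
      (Walk.mem_support_iff_exists_getVert.mpr ⟨i, rfl, hi⟩)).length = i :=
    length_takeUntil hq hi _
  rw [hlen, getVert_takeUntil _ (by omega)]

lemma reach_spine {u0 ud : V} (q : G.Walk u0 ud) (t : ℕ) :
    ∀ (n : ℕ) {r : ℕ}, r = t + n → r ≤ q.length →
      ReachIn G {z | ∃ i, t ≤ i ∧ i ≤ r ∧ q.getVert i = z} (q.getVert r) (q.getVert t) := by
  intro n
  induction n with
  | zero =>
    intro r hr hrl
    rw [Nat.add_zero] at hr
    rw [hr]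
    exact ReachIn.refl ⟨t, le_refl _, le_refl _, rfl⟩
  | succ n ih =>
    intro r hr hrl
    have hadj : G.Adj (q.getVert r) (q.getVert (r - 1)) := by
      have := q.adj_getVert_succ (i := r - 1) (by omega)
      rw [show r - 1 + 1 = r by omega] at this
      exact this.symm
    refine ReachIn.cons hadj ⟨r, by omega, le_refl _, rfl⟩ ?_
    have := ih (r := r - 1) (by omega) (by omega)
    rw [show r - 1 = t + n by omega] at this ⊢
    refine this.mono ?_
    rintro z ⟨i, h1, h2, h3⟩
    exact ⟨i, h1, by omega, h3⟩

lemma reach_jj [Fintype V] (hG : G.IsTree) {u0 ud : V} (q : G.Walk u0 ud) (hq : q.IsPath) :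
    ∀ v : V, ReachIn G
      {z | jj hG q z = jj hG q v ∧ (z = v ∨ ¬OffSpine q z ∨ 2 ≤ deg G z)}
      v (q.getVert (jj hG q v)) := by
  suffices H : ∀ (n : ℕ) (v : V), (tpath hG u0 v).length = n → ReachIn G
      {z | jj hG q z = jj hG q v ∧ (z = v ∨ ¬OffSpine q z ∨ 2 ≤ deg G z)}
      v (q.getVert (jj hG q v)) by
    intro v; exact H _ v rfl
  intro n
  induction n using Nat.strong_induction_on with
  | _ n ih =>
    intro v hn
    by_cases hoff : OffSpine q v
    · -- v is off the spine
      have hvne : v ≠ u0 := by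
        intro h; subst h
        exact hoff 0 (Nat.zero_le _) (Walk.getVert_zero q)
      have hlen0 : (tpath hG u0 v).length ≠ 0 := fun hc =>
        hvne ((tpath_length_zero_iff hG).mp hc).symm
      set x := par hG u0 v with hx
      have hjj : jj hG q v = jj hG q x := jj_par hG q hvne hoff
      have hlenx : (tpath hG u0 x).length = (tpath hG u0 v).length - 1 :=
        length_tpath_par hG hvne
      have hrec := ih ((tpath hG u0 v).length - 1) (by omega) x (by omega)
      have hadjxv : G.Adj x v := adj_par hG hvne
      refine ReachIn.cons hadjxv.symm ⟨rfl, Or.inl rfl⟩ ?_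
      rw [hjj]
      refine hrec.mono ?_
      rintro z ⟨hz1, hz2⟩
      refine ⟨hz1, ?_⟩
      rcases hz2 with heq | h | h
      · -- z = x : either on the spine or has degree ≥ 2
        rw [heq]
        by_cases hoffx : OffSpine q x
        · right; right
          have hzne : x ≠ u0 := by
            intro h; rw [h] at hoffx
            exact hoffx 0 (Nat.zero_le _) (Walk.getVert_zero q)
          have hadjpz : G.Adj (par hG u0 x) x := adj_par hG hzne
          have hne2 : par hG u0 x ≠ v := by
            intro h
            have hmem : par hG u0 x ∈ (tpath hG u0 x).support := par_mem_support hG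
            rw [h, hx] at hmem
            exact not_mem_support_tpath_par hG hvne hmem
          rw [deg, show (2:ℕ) = 1 + 1 from rfl]
          refine Nat.succ_le_of_lt ?_
          rw [Set.one_lt_ncard_iff (Set.toFinite _)]
          refine ⟨v, par hG u0 x, ?_, hadjpz.symm, fun hc => hne2 hc.symm⟩
          exact hadjxv
        · right; left; exact hoffx
      · right; left; exact h
      · right; right; exact h
    · -- v on the spine
      unfold OffSpine at hoff
      push_neg at hoff
      obtain ⟨i, hi, hieq⟩ := hoff
      subst hieq
      rw [jj_spine hG q hq hi]
      exact ReachIn.refl ⟨jj_spine hG q hq hi, Or.inl rfl⟩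

end CatAux

namespace CatAux
variable {V : Type*} {G : SimpleGraph V}

lemma ncard_prod {α β : Type*} (s : Set α) (t : Set β) (hs : s.Finite) (ht : t.Finite) :
    (s ×ˢ t).ncard = s.ncard * t.ncard := by
  rw [Set.ncard_eq_toFinset_card _ (hs.prod ht), Set.ncard_eq_toFinset_card _ hs,
    Set.ncard_eq_toFinset_card _ ht, ← Finset.card_product]
  congr 1
  ext ⟨a, b⟩
  simp

/-- Every off-spine vertex `v` lies on the path from the root to an off-spine leaf `z`,
at distance less than `q.length / 2` from `z`. -/
lemma offspine_to_leaf [Fintype V] (hG : G.IsTree) {u0 ud : V} (q : G.Walk u0 ud)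
    (hq : q.IsPath) (hmax : ∀ x y : V, G.dist x y ≤ q.length)
    {v : V} (hv : OffSpine q v) :
    ∃ z r, (deg G z = 1 ∧ OffSpine q z) ∧ r ≤ (tpath hG u0 z).length ∧
      (tpath hG u0 z).getVert r = v ∧ (tpath hG u0 z).length - r < q.length / 2 := by
  -- choose a deepest vertex whose root-path contains v
  have hAne : (Finset.univ.filter (fun z : V => v ∈ (tpath hG u0 z).support)).Nonempty :=
    ⟨v, by simp [Walk.end_mem_support]⟩
  obtain ⟨z, hzA, hzmax⟩ := Finset.exists_max_image _ (fun z => (tpath hG u0 z).length) hAne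
  rw [Finset.mem_filter] at hzA
  have hvz : v ∈ (tpath hG u0 z).support := hzA.2
  -- z is off the spine
  have hzoff : OffSpine q z := by
    intro i hi hiz
    have := (spine_mem_support_iff hG q hq hi (z := v)).mp (by rw [hiz]; exact hvz)
    obtain ⟨r, hr, hrz⟩ := this
    exact hv r (by omega) hrz
  have hzne : z ≠ u0 := fun h => hzoff 0 (Nat.zero_le _) (by rw [Walk.getVert_zero, h])
  -- z is a leaf
  have hdeg1 : deg G z = 1 := by
    have hadjp : G.Adj z (par hG u0 z) := (adj_par hG hzne).symm
    have hge1 : 1 ≤ deg G z := by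
      rw [deg, Nat.one_le_iff_ne_zero]
      intro hc
      rw [Set.ncard_eq_zero (Set.toFinite _)] at hc
      exact absurd hadjp (by rw [← mem_neighborSet, hc]; exact id)
    by_contra hne1
    have h2 : 2 ≤ deg G z := by omega
    rw [deg] at h2
    obtain ⟨y, hy, hyne⟩ := Set.exists_ne_of_one_lt_ncard (s := G.neighborSet z) (by omega) (par hG u0 z)
    rw [mem_neighborSet] at hy
    rcases adj_cases hG (a := u0) hy with ⟨hyne0, hzy⟩ | ⟨_, hyz⟩
    · -- z = par y : y is deeper, contradiction with maximality
      have hlen : (tpath hG u0 y).length ≠ 0 := fun hc =>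
        hyne0 ((tpath_length_zero_iff hG).mp hc).symm
      have hly : (tpath hG u0 (par hG u0 y)).length = (tpath hG u0 y).length - 1 :=
        length_tpath_par hG hyne0
      rw [← hzy] at hly
      have hvy : v ∈ (tpath hG u0 y).support := by
        rw [mem_support_tpath_par hG hyne0, ← hzy]
        exact Or.inl hvz
      have := hzmax y (by simp [hvy])
      omega
    · exact hyne hyz
  -- positions on the path to z
  set L := (tpath hG u0 z).length with hL
  set jz := jj hG q z with hjz
  have hjzd : jz ≤ q.length := jj_le hG q z
  have hwmem : q.getVert jz ∈ (tpath hG u0 z).support := jj_spec hG q z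
  -- the takeUntil of the junction in (tpath z) is the unique path to the junction
  have htake2 : tpath hG u0 (q.getVert jz) = (tpath hG u0 z).takeUntil _ hwmem :=
    (tpath_eq hG _ ((tpath_isPath hG u0 z).takeUntil _)).symm
  have htau : ((tpath hG u0 z).takeUntil _ hwmem).length = jz := by
    rw [← htake2, tpath_spine hG q hq hjzd]
    exact length_takeUntil hq hjzd _
  have hjzL : jz ≤ L := by
    rw [← htau, hL]; exact Walk.length_takeUntil_le _ _
  -- v's position r on the path to z
  obtain ⟨r, hrv, hrL⟩ := Walk.mem_support_iff_exists_getVert.mp hvz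
  have hrgt : jz < r := by
    by_contra hc
    push_neg at hc
    have hvin : v ∈ ((tpath hG u0 z).takeUntil _ hwmem).support := by
      rw [Walk.mem_support_iff_exists_getVert]
      exact ⟨r, by rw [getVert_takeUntil _ (by omega)]; exact hrv, by omega⟩
    rw [← htake2, tpath_spine hG q hq hjzd] at hvin
    rw [Walk.mem_support_iff_exists_getVert] at hvin
    obtain ⟨n, hn, hnl⟩ := hvin
    have hlt : (q.takeUntil (q.getVert jz)
        (Walk.mem_support_iff_exists_getVert.mpr ⟨jz, rfl, hjzd⟩)).length = jz :=
      length_takeUntil hq hjzd _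
    rw [hlt] at hnl
    rw [getVert_takeUntil _ (by rw [hlt]; exact hnl)] at hn
    exact hv n (by omega) hn
  -- L ≤ q.length
  have hLd : L ≤ q.length := by
    rw [hL, length_tpath_eq_dist]
    exact hmax u0 z
  -- the path from ud to z via the junction
  have hwq : q.getVert jz ∈ q.support := Walk.mem_support_iff_exists_getVert.mpr ⟨jz, rfl, hjzd⟩
  have hlen_dropq : (q.dropUntil _ hwq).length = q.length - jz := by
    have := congrArg Walk.length (Walk.take_spec q hwq)
    rw [Walk.length_append] at this
    have h2 : (q.takeUntil _ hwq).length = jz := length_takeUntil hq hjzd _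
    omega
  have hlen_drop2 : ((tpath hG u0 z).dropUntil _ hwmem).length = L - jz := by
    have := congrArg Walk.length (Walk.take_spec (tpath hG u0 z) hwmem)
    rw [Walk.length_append] at this
    omega
  -- supports
  have hsupp_dropq : ∀ x ∈ (q.dropUntil _ hwq).support, ∃ i, jz ≤ i ∧ i ≤ q.length ∧
      q.getVert i = x := by
    intro x hx
    rw [Walk.mem_support_iff_exists_getVert] at hx
    obtain ⟨n, hn, hnl⟩ := hx
    refine ⟨jz + n, by omega, by omega, ?_⟩
    conv_lhs => rw [← Walk.take_spec q hwq]
    rw [Walk.getVert_append]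
    have h2 : (q.takeUntil _ hwq).length = jz := length_takeUntil hq hjzd _
    rw [h2]
    simp only [Nat.add_sub_cancel_left, if_neg (by omega : ¬ jz + n < jz)]
    exact hn
  have hsupp_drop2_sub : ((tpath hG u0 z).dropUntil _ hwmem).support ⊆
      (tpath hG u0 z).support := by
    intro x hx
    rw [← Walk.take_spec (tpath hG u0 z) hwmem, Walk.mem_support_append_iff]
    exact Or.inr hx
  have hdisj : ∀ x ∈ ((q.dropUntil _ hwq).reverse).support,
      x ∉ ((tpath hG u0 z).dropUntil _ hwmem).support.tail := by
    intro x hx hx2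
    rw [Walk.support_reverse, List.mem_reverse] at hx
    obtain ⟨i, hi1, hi2, hi3⟩ := hsupp_dropq x hx
    have hxz : x ∈ (tpath hG u0 z).support := hsupp_drop2_sub (List.mem_of_mem_tail hx2)
    have : i ≤ jz := le_jj_of_mem hG q hi2 (by rw [hi3]; exact hxz)
    have hieq : i = jz := by omega
    subst hieq
    rw [← hi3] at hx2
    -- x = junction appears in the tail of drop2's support: contradiction with nodup
    have hnodup : ((tpath hG u0 z).dropUntil _ hwmem).support.Nodup :=
      ((tpath_isPath hG u0 z).dropUntil hwmem).2
    rw [Walk.support_eq_cons] at hnodup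
    exact (List.nodup_cons.mp hnodup).1 hx2
  set w2 : G.Walk ud z :=
    ((q.dropUntil _ hwq).reverse).append ((tpath hG u0 z).dropUntil _ hwmem) with hw2
  have hw2path : w2.IsPath := by
    rw [hw2, Walk.isPath_def, Walk.support_append]
    refine List.Nodup.append ?_ ?_ ?_
    · exact ((hq.dropUntil hwq).reverse).2
    · have hnodup : ((tpath hG u0 z).dropUntil _ hwmem).support.Nodup :=
        ((tpath_isPath hG u0 z).dropUntil hwmem).2
      rw [Walk.support_eq_cons] at hnodup
      exact (List.nodup_cons.mp hnodup).2
    · intro x hx hx2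
      exact hdisj x hx hx2
  have hw2len : w2.length = (q.length - jz) + (L - jz) := by
    rw [hw2, Walk.length_append, Walk.length_reverse, hlen_dropq, hlen_drop2]
  have hdistud : G.dist ud z = w2.length := by
    rw [← length_tpath_eq_dist hG ud z, tpath_eq hG w2 hw2path]
  have hkey : (q.length - jz) + (L - jz) ≤ q.length := by
    rw [← hw2len, ← hdistud]
    exact hmax ud z
  -- conclude
  refine ⟨z, r, ⟨hdeg1, hzoff⟩, hrL, hrv, ?_⟩
  omega

end CatAux

namespace CatAux
variable {V : Type*} {G : SimpleGraph V}

lemma card_V [Fintype V] (hG : G.IsTree) {m : ℕ} (hE : edgeCount G = m) :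
    Fintype.card V = m + 1 := by
  classical
  letI : Fintype G.edgeSet := Fintype.ofFinite _
  have h := hG.card_edgeFinset
  have h2 : G.edgeFinset.card = m := by
    rw [← hE, edgeCount, ← Set.ncard_coe_finset, coe_edgeFinset]
  omega

lemma spine_ncard {u0 ud : V} (q : G.Walk u0 ud) (hq : q.IsPath) [Fintype V] :
    {z : V | ¬ OffSpine q z}.ncard = q.length + 1 := by
  have heq : {z : V | ¬ OffSpine q z} = (fun i => q.getVert i) '' (Set.Iic q.length) := by
    ext z
    simp only [Set.mem_setOf_eq, Set.mem_image, Set.mem_Iic, OffSpine]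
    push_neg
    constructor
    · rintro ⟨i, hi, h⟩; exact ⟨i, hi, h⟩
    · rintro ⟨i, hi, h⟩; exact ⟨i, hi, h⟩
  have hinj : Set.InjOn (fun i => q.getVert i) (Set.Iic q.length) :=
    fun i hi j hj hij => getVert_injOn hq i hi j hj hij
  rw [heq, Set.ncard_image_of_injOn hinj]
  rw [show Set.Iic q.length = ↑(Finset.range (q.length + 1)) by
    rw [Finset.coe_range]; ext x; simp [Nat.lt_succ_iff]]
  rw [Set.ncard_coe_finset, Finset.card_range]

lemma offspine_ncard [Fintype V] (hG : G.IsTree) {u0 ud : V} (q : G.Walk u0 ud)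
    (hq : q.IsPath) {m : ℕ} (hE : edgeCount G = m) (hd : q.length ≤ m) :
    {v : V | OffSpine q v}.ncard = m - q.length := by
  have hcompl : {v : V | OffSpine q v} = Set.univ \ {z : V | ¬ OffSpine q z} := by
    ext v; simp [Set.mem_diff]
  rw [hcompl, Set.ncard_diff (Set.subset_univ _) (Set.toFinite _), Set.ncard_univ,
    Nat.card_eq_fintype_card, card_V hG hE, spine_ncard q hq]
  omega

lemma count_main [Fintype V] (hG : G.IsTree) {u0 ud : V} (q : G.Walk u0 ud)
    (hq : q.IsPath) (hmax : ∀ x y : V, G.dist x y ≤ q.length)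
    {m : ℕ} (hE : edgeCount G = m) (hd : q.length ≤ m) :
    m - q.length ≤ {z : V | deg G z = 1 ∧ OffSpine q z}.ncard * (q.length / 2) := by
  classical
  rw [← offspine_ncard hG q hq hE hd]
  have key : ∀ v : V, OffSpine q v →
      ∃ z r, (deg G z = 1 ∧ OffSpine q z) ∧ r ≤ (tpath hG u0 z).length ∧
        (tpath hG u0 z).getVert r = v ∧ (tpath hG u0 z).length - r < q.length / 2 :=
    fun v hv => offspine_to_leaf hG q hq hmax hv
  choose! zf rf hzf hrf hvf hltf using key
  have hle := Set.ncard_le_ncard_of_injOn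
    (f := fun v => (zf v, (tpath hG u0 (zf v)).length - rf v))
    (s := {v : V | OffSpine q v})
    (t := {z : V | deg G z = 1 ∧ OffSpine q z} ×ˢ Set.Iio (q.length / 2))
    (fun v hv => Set.mem_prod.mpr ⟨hzf v hv, hltf v hv⟩)
    (by
      intro v hv v' hv' heq
      have h1 : zf v = zf v' := congrArg Prod.fst heq
      have h2 : (tpath hG u0 (zf v)).length - rf v =
          (tpath hG u0 (zf v')).length - rf v' := congrArg Prod.snd heq
      rw [← h1] at h2
      have hr1 := hrf v hv
      have hr2 := hrf v' hv'
      rw [← h1] at hr2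
      have hreq : rf v = rf v' := by omega
      rw [← hvf v hv, ← hvf v' hv', ← h1, hreq])
    (Set.toFinite _)
  refine hle.trans ?_
  rw [ncard_prod _ _ (Set.toFinite _) (Set.toFinite _)]
  have : (Set.Iio (q.length / 2)).ncard = q.length / 2 := by
    rw [← Finset.coe_range, Set.ncard_coe_finset, Finset.card_range]
  rw [this]

lemma key_numeric {m d l2 : ℕ} (hcount : m - d ≤ l2 * (d / 2)) (hdm : d ≤ m) :
    Real.sqrt (8 * (m : ℝ)) ≤ (l2 : ℝ) + d + 2 := by
  have hm : m ≤ d + l2 * (d / 2) := by omega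
  have hdiv : 2 * (d / 2) ≤ d := by omega
  have hz : (8 * m : ℤ) ≤ ((l2 : ℤ) + d + 2) ^ 2 := by
    have h1 : (m : ℤ) ≤ (d : ℤ) + l2 * (d / 2 : ℕ) := by exact_mod_cast hm
    have h2 : (2 : ℤ) * ((d / 2 : ℕ) : ℤ) ≤ (d : ℤ) := by exact_mod_cast hdiv
    nlinarith [sq_nonneg ((l2 : ℤ) + 2 - d), Int.ofNat_nonneg l2, Int.ofNat_nonneg d,
      Int.ofNat_nonneg (d / 2)]
  have hr : (8 * (m : ℝ)) ≤ ((l2 : ℝ) + d + 2) ^ 2 := by exact_mod_cast hz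
  calc Real.sqrt (8 * (m : ℝ)) ≤ Real.sqrt (((l2 : ℝ) + d + 2) ^ 2) := Real.sqrt_le_sqrt hr
    _ = (l2 : ℝ) + d + 2 := Real.sqrt_sq (by positivity)

lemma ceil_pos_of_m (m : ℕ) (hm : 1 ≤ m) : (1 : ℤ) ≤ ⌈Real.sqrt (8 * (m : ℝ)) - 2⌉ := by
  have h4 : (2 : ℝ) < Real.sqrt (8 * (m : ℝ)) := by
    rw [Real.lt_sqrt (by norm_num)]
    have : (1 : ℝ) ≤ (m : ℝ) := by exact_mod_cast hm
    nlinarith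
  have : (0 : ℝ) < Real.sqrt (8 * (m : ℝ)) - 2 := by linarith
  exact Int.ceil_pos.mpr this

lemma ceil_le_of_bound {m d l2 : ℕ} (hcount : m - d ≤ l2 * (d / 2)) (hdm : d ≤ m) :
    ⌈Real.sqrt (8 * (m : ℝ)) - 2⌉ ≤ (l2 : ℤ) + d := by
  rw [Int.ceil_le]
  push_cast
  have := key_numeric hcount hdm
  linarith

end CatAux

open CatAux

/-- For every integer `m ≥ 1` and every tree `T` with `m` edges, there is a
partition of the vertex set into nonempty connected parts (given by the fibers of a surjection
`c`) whose quotient graph is a caterpillar with `⌈√(8m) − 2⌉` edges. -/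
theorem contract_tree_to_caterpillar (m : ℕ) (hm : 1 ≤ m)
    {V : Type*} [Fintype V] (G : SimpleGraph V) (hG : G.IsTree) (hE : edgeCount G = m) :
    ∃ (W : Type) (_ : Fintype W) (c : V → W),
      Function.Surjective c ∧
      (∀ w : W, (G.induce (c ⁻¹' {w})).Connected) ∧
      IsCaterpillar (quotientGraph G c) ∧
      (edgeCount (quotientGraph G c) : ℤ) = ⌈Real.sqrt (8 * (m : ℝ)) - 2⌉ := by
  classical
  have hVne : Nonempty V := hG.isConnected.nonempty
  -- an edge exists
  have hm0 : G.edgeSet.ncard ≠ 0 := by rw [show G.edgeSet.ncard = m from hE]; omega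
  obtain ⟨e0, he0⟩ := Set.nonempty_of_ncard_ne_zero hm0
  obtain ⟨x0, y0, hxy0⟩ : ∃ x y : V, G.Adj x y := by
    revert he0
    refine Sym2.ind (fun x y he => ?_) e0
    rw [mem_edgeSet] at he
    exact ⟨x, y, he⟩
  -- a diametral pair and a diametral path q
  obtain ⟨p0, -, hp0max⟩ := Finset.exists_max_image Finset.univ
    (fun p : V × V => G.dist p.1 p.2) ⟨(x0, y0), Finset.mem_univ _⟩
  obtain ⟨u0, ud⟩ := p0
  have hmax0 : ∀ x y : V, G.dist x y ≤ G.dist u0 ud :=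
    fun x y => hp0max (x, y) (Finset.mem_univ _)
  obtain ⟨w0, hw0⟩ := (hG.isConnected u0 ud).exists_walk_length_eq_dist
  set q : G.Walk u0 ud := (w0.toPath : G.Walk u0 ud) with hqdef
  have hq : q.IsPath := w0.toPath.2
  have hqlen : q.length = G.dist u0 ud :=
    le_antisymm (by rw [← hw0]; exact Walk.length_bypass_le _) (dist_le _)
  have hmaxd : ∀ x y : V, G.dist x y ≤ q.length := fun x y => hqlen ▸ hmax0 x y
  have hd1 : 1 ≤ q.length := by
    have h1 := hG.isConnected.pos_dist_of_ne hxy0.ne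
    have h2 := hmaxd x0 y0
    omega
  have hdm : q.length ≤ m := by
    have hsub : q.edges.toFinset ⊆ G.edgeSet.toFinset := by
      intro e he
      rw [List.mem_toFinset] at he
      rw [Set.mem_toFinset]
      exact q.edges_subset_edgeSet he
    have hcard := Finset.card_le_card hsub
    rw [List.toFinset_card_of_nodup hq.isTrail.edges_nodup, Walk.length_edges] at hcard
    rw [← hE, edgeCount, Set.ncard_eq_toFinset_card']
    exact hcard
  -- numerics
  set kZ : ℤ := ⌈Real.sqrt (8 * (m : ℝ)) - 2⌉ with hkZ
  have hk1 : 1 ≤ kZ := ceil_pos_of_m m hm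
  set k : ℕ := kZ.toNat with hkdef
  have hkcast : (k : ℤ) = kZ := Int.toNat_of_nonneg (by omega)
  have hk1' : 1 ≤ k := by omega
  set d := q.length with hddef
  set OL := {z : V | deg G z = 1 ∧ OffSpine q z} with hOLdef
  have hcount : m - d ≤ OL.ncard * (d / 2) := count_main hG q hq hmaxd hE hdm
  have hkle : kZ ≤ (OL.ncard : ℤ) + d := ceil_le_of_bound hcount hdm
  clear_value d
  set t := min k d with htdef
  set s := k - t with hsdef
  clear_value k
  clear_value t
  clear_value s
  have ht1 : 1 ≤ t := by omega
  have htd : t ≤ d := by omega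
  have hts : t + s = k := by omega
  have hsl2 : s ≤ OL.ncard := by omega
  -- choose s off-spine leaves
  obtain ⟨Lset, hLsub, hLcard⟩ := Set.exists_subset_card_eq hsl2
  have hLfin : Lset.Finite := Set.toFinite _
  have hLcct : hLfin.toFinset.card = s := by
    rw [← Set.ncard_eq_toFinset_card _ hLfin]; exact hLcard
  set gE := Finset.equivFinOfCardEq hLcct with hgEdef
  set g : Fin s → V := fun a => (gE.symm a).1 with hgdef
  have hginj : Function.Injective g := by
    intro a b hab
    exact gE.symm.injective (Subtype.ext hab)
  have hgOL : ∀ a, g a ∈ OL := by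
    intro a
    apply hLsub
    have := (gE.symm a).2
    rwa [Set.Finite.mem_toFinset] at this
  have hgoff : ∀ a, OffSpine q (g a) := fun a => (hgOL a).2
  have hgleaf : ∀ a, deg G (g a) = 1 := fun a => (hgOL a).1
  have hgne0 : ∀ a, g a ≠ u0 := fun a h =>
    (hgoff a) 0 (Nat.zero_le _) (by rw [Walk.getVert_zero, h])
  have hnotr_spine : ∀ i, i ≤ d → q.getVert i ∉ Set.range g := by
    rintro i hi ⟨a, ha⟩
    exact (hgoff a) i (by omega) ha.symm
  -- the contraction map
  set c : V → (Fin (t + 1) ⊕ Fin s) := fun v =>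
    if h : ∃ a : Fin s, g a = v then Sum.inr h.choose
    else Sum.inl ⟨min t (jj hG q v), Nat.lt_succ_of_le (min_le_left _ _)⟩ with hcdef
  have hcg : ∀ a, c (g a) = Sum.inr a := by
    intro a
    have hex : ∃ b : Fin s, g b = g a := ⟨a, rfl⟩
    rw [hcdef]
    simp only [dif_pos hex]
    congr 1
    exact hginj hex.choose_spec
  have hcn : ∀ v (hv : v ∉ Set.range g),
      c v = Sum.inl ⟨min t (jj hG q v), Nat.lt_succ_of_le (min_le_left _ _)⟩ := by
    intro v hv
    rw [hcdef]
    simp only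
    rw [dif_neg]
    rintro ⟨a, ha⟩
    exact hv ⟨a, ha⟩
  have hcspine : ∀ (i : ℕ) (hi : i ≤ t), c (q.getVert i) = Sum.inl ⟨i, Nat.lt_succ_of_le hi⟩ := by
    intro i hi
    rw [hcn _ (hnotr_spine i (by omega))]
    congr 1
    apply Fin.ext
    show min t (jj hG q (q.getVert i)) = i
    rw [jj_spine hG q hq (by omega)]
    exact min_eq_right hi
  have hparg : ∀ a, par hG u0 (g a) ∉ Set.range g := by
    intro a
    by_cases hoffp : OffSpine q (par hG u0 (g a))
    · rintro ⟨b, hb⟩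
      have hdegb : deg G (g b) = 1 := hgleaf b
      have hpne0 : par hG u0 (g a) ≠ u0 := fun h =>
        hoffp 0 (Nat.zero_le _) (by rw [Walk.getVert_zero, h])
      have h1 : G.Adj (par hG u0 (par hG u0 (g a))) (par hG u0 (g a)) := adj_par hG hpne0
      have h2 : G.Adj (par hG u0 (g a)) (g a) := adj_par hG (hgne0 a)
      have hne12 : par hG u0 (par hG u0 (g a)) ≠ g a := by
        intro h
        have hmem := par_mem_support hG (a := u0) (v := par hG u0 (g a))
        rw [h] at hmem
        exact not_mem_support_tpath_par hG (hgne0 a) hmem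
      have hdeg2 : 2 ≤ deg G (par hG u0 (g a)) := by
        rw [deg, show (2:ℕ) = 1 + 1 from rfl]
        refine Nat.succ_le_of_lt ?_
        rw [Set.one_lt_ncard_iff (Set.toFinite _)]
        exact ⟨g a, par hG u0 (par hG u0 (g a)), h2, h1.symm, fun h => hne12 h.symm⟩
      rw [← hb] at hdeg2
      omega
    · rintro ⟨b, hb⟩
      unfold OffSpine at hoffp
      push_neg at hoffp
      obtain ⟨i, hi, hieq⟩ := hoffp
      exact (hgoff b) i hi (by rw [hieq, hb])
  have hnbr : ∀ a (y : V), G.Adj (g a) y → y = par hG u0 (g a) := by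
    intro a y hadj
    have h1 : deg G (g a) = 1 := hgleaf a
    rw [deg] at h1
    obtain ⟨w, hw⟩ := Set.ncard_eq_one.mp h1
    have hy : y ∈ G.neighborSet (g a) := hadj
    have hp : par hG u0 (g a) ∈ G.neighborSet (g a) := (adj_par hG (hgne0 a)).symm
    rw [hw, Set.mem_singleton_iff] at hy hp
    rw [hy, ← hp]
  set φ : Fin s → Fin (t + 1) := fun a =>
    ⟨min t (jj hG q (par hG u0 (g a))), Nat.lt_succ_of_le (min_le_left _ _)⟩ with hφdef
  have hcpar : ∀ a, c (par hG u0 (g a)) = Sum.inl (φ a) := fun a => hcn _ (hparg a)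
  -- surjectivity
  have hsurj : Function.Surjective c := by
    rintro (i | a)
    · refine ⟨q.getVert i.1, ?_⟩
      rw [hcspine i.1 (Nat.lt_succ_iff.mp i.isLt)]
    · exact ⟨g a, hcg a⟩
  -- fibers are connected
  have hfib : ∀ w, (G.induce (c ⁻¹' {w})).Connected := by
    rintro (i | a)
    case inr =>
      have hfeq : c ⁻¹' {Sum.inr a} = {g a} := by
        ext v
        simp only [Set.mem_preimage, Set.mem_singleton_iff]
        constructor
        · intro hv
          by_cases hr : v ∈ Set.range g
          · obtain ⟨b, rfl⟩ := hr
            rw [hcg b] at hv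
            injection hv with hv
            rw [hv]
          · rw [hcn v hr] at hv
            exact absurd hv (by simp)
        · rintro rfl
          exact hcg a
      rw [hfeq, connected_iff]
      refine ⟨?_, ⟨⟨g a, rfl⟩⟩⟩
      rintro ⟨x, hx⟩ ⟨y, hy⟩
      have hxy : x = y := by
        rw [Set.mem_singleton_iff] at hx hy
        rw [hx, hy]
      subst hxy
      rfl
    case inl =>
      have hfeq : c ⁻¹' {Sum.inl i} =
          {v | v ∉ Set.range g ∧ min t (jj hG q v) = i.1} := by
        ext v
        simp only [Set.mem_preimage, Set.mem_singleton_iff, Set.mem_setOf_eq]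
        constructor
        · intro hv
          by_cases hr : v ∈ Set.range g
          · obtain ⟨b, rfl⟩ := hr
            rw [hcg b] at hv
            exact absurd hv (by simp)
          · rw [hcn v hr] at hv
            injection hv with hv
            exact ⟨hr, by rw [← hv]⟩
        · rintro ⟨hr, hmin⟩
          rw [hcn v hr]
          congr 1
          exact Fin.ext hmin
      rw [hfeq]
      set F := {v : V | v ∉ Set.range g ∧ min t (jj hG q v) = i.1} with hFdef
      have hanchor_mem : q.getVert i.1 ∈ F := by
        have hit : i.1 ≤ t := Nat.lt_succ_iff.mp i.isLt
        refine ⟨hnotr_spine i.1 (by omega), ?_⟩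
        rw [jj_spine hG q hq (by omega)]
        exact min_eq_right hit
      have hanchor : ∀ v (hv : v ∈ F),
          (G.induce F).Reachable ⟨v, hv⟩ ⟨q.getVert i.1, hanchor_mem⟩ := by
        intro v hv
        have hit : i.1 ≤ t := Nat.lt_succ_iff.mp i.isLt
        have hijj : i.1 ≤ jj hG q v := by
          rw [← hv.2]
          exact min_le_right _ _
        have hR1 := reach_jj hG q hq v
        have hR2 := reach_spine q i.1 (jj hG q v - i.1) (r := jj hG q v)
          (by omega) (jj_le hG q v)
        have hsub1 : {z | jj hG q z = jj hG q v ∧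
            (z = v ∨ ¬OffSpine q z ∨ 2 ≤ deg G z)} ⊆ F := by
          rintro z ⟨hz1, hz2⟩
          refine ⟨?_, by rw [hz1]; exact hv.2⟩
          rcases hz2 with rfl | hoffz | hdegz
          · exact hv.1
          · unfold OffSpine at hoffz
            push_neg at hoffz
            obtain ⟨i', hi', hieq⟩ := hoffz
            rw [← hieq]
            exact hnotr_spine i' (by omega)
          · rintro ⟨b, hb⟩
            have := hgleaf b
            rw [hb] at this
            omega
        have hsub2 : {z | ∃ r, i.1 ≤ r ∧ r ≤ jj hG q v ∧ q.getVert r = z} ⊆ F := by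
          rintro z ⟨r, hr1, hr2, rfl⟩
          have hrd : r ≤ q.length := le_trans hr2 (jj_le hG q v)
          refine ⟨hnotr_spine r (by omega), ?_⟩
          rw [jj_spine hG q hq (by omega)]
          rcases le_total t (jj hG q v) with h1 | h1
          · have hti : i.1 = t := by rw [← hv.2, min_eq_left h1]
            rw [min_eq_left (by omega : t ≤ r), hti]
          · have hti : i.1 = jj hG q v := by rw [← hv.2, min_eq_right h1]
            have hri : r = i.1 := by omega
            have hit : i.1 ≤ t := Nat.lt_succ_iff.mp i.isLt
            rw [hri, min_eq_right hit]
        have hcomb := (hR1.mono hsub1).trans (hR2.mono hsub2)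
        obtain ⟨h1, h2, hreach⟩ := hcomb.reachable_induce
        exact hreach
      rw [connected_iff]
      refine ⟨?_, ⟨⟨q.getVert i.1, hanchor_mem⟩⟩⟩
      rintro ⟨x, hx⟩ ⟨y, hy⟩
      exact (hanchor x hx).trans (hanchor y hy).symm
  -- the quotient graph is the explicit caterpillar
  have hQeq : quotientGraph G c = catG t s φ := by
    ext x y
    constructor
    · rintro ⟨hne, xw, yw, rfl, rfl, hadj⟩
      by_cases hxr : xw ∈ Set.range g
      · obtain ⟨a, rfl⟩ := hxr
        have hyw : yw = par hG u0 (g a) := hnbr a yw hadj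
        rw [hcg a, hyw, hcpar a]
        exact rfl
      · by_cases hyr : yw ∈ Set.range g
        · obtain ⟨a, rfl⟩ := hyr
          have hxw : xw = par hG u0 (g a) := hnbr a xw hadj.symm
          rw [hcg a, hxw, hcpar a]
          exact rfl
        · rw [hcn _ hxr, hcn _ hyr] at hne ⊢
          rcases adj_cases hG (a := u0) hadj with ⟨hyne0, hxp⟩ | ⟨hxne0, hyp⟩
          · by_cases hoffy : OffSpine q yw
            · exfalso
              apply hne
              rw [hxp, ← jj_par hG q hyne0 hoffy]
            · unfold OffSpine at hoffy
              push_neg at hoffy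
              obtain ⟨i', hi', hieq⟩ := hoffy
              have hi'0 : i' ≠ 0 := by
                intro h
                rw [h, Walk.getVert_zero] at hieq
                exact hyne0 hieq.symm
              have hxw2 : xw = q.getVert (i' - 1) := by
                rw [hxp, ← hieq, par_spine hG q hq (by omega) hi']
              have hjx : jj hG q xw = i' - 1 := by
                rw [hxw2, jj_spine hG q hq (by omega)]
              have hjy : jj hG q yw = i' := by
                rw [← hieq, jj_spine hG q hq hi']
              simp only [ne_eq, Sum.inl.injEq, Fin.mk.injEq] at hne
              rw [hjx, hjy] at hne
              rw [catG_adj_inl_inl]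
              show min t (jj hG q xw) + 1 = min t (jj hG q yw) ∨
                min t (jj hG q yw) + 1 = min t (jj hG q xw)
              rw [hjx, hjy]
              rcases le_or_gt i' t with hc | hc
              · left
                rw [min_eq_right (by omega), min_eq_right (by omega)]
                omega
              · exfalso
                exact hne (by rw [min_eq_left (by omega), min_eq_left (by omega)])
          · by_cases hoffx : OffSpine q xw
            · exfalso
              apply hne
              rw [hyp, ← jj_par hG q hxne0 hoffx]
            · unfold OffSpine at hoffx
              push_neg at hoffx
              obtain ⟨i', hi', hieq⟩ := hoffx
              have hi'0 : i' ≠ 0 := by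
                intro h
                rw [h, Walk.getVert_zero] at hieq
                exact hxne0 hieq.symm
              have hyw2 : yw = q.getVert (i' - 1) := by
                rw [hyp, ← hieq, par_spine hG q hq (by omega) hi']
              have hjy : jj hG q yw = i' - 1 := by
                rw [hyw2, jj_spine hG q hq (by omega)]
              have hjx : jj hG q xw = i' := by
                rw [← hieq, jj_spine hG q hq hi']
              simp only [ne_eq, Sum.inl.injEq, Fin.mk.injEq] at hne
              rw [hjx, hjy] at hne
              rw [catG_adj_inl_inl]
              show min t (jj hG q xw) + 1 = min t (jj hG q yw) ∨
                min t (jj hG q yw) + 1 = min t (jj hG q xw)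
              rw [hjx, hjy]
              rcases le_or_gt i' t with hc | hc
              · right
                rw [min_eq_right (by omega), min_eq_right (by omega)]
                omega
              · exfalso
                exact hne (by rw [min_eq_left (by omega), min_eq_left (by omega)])
    · match x, y with
      | .inl i, .inl i' =>
        intro hadj
        have hcons : i.1 + 1 = i'.1 ∨ i'.1 + 1 = i.1 := hadj
        have hit : i.1 ≤ t := Nat.lt_succ_iff.mp i.isLt
        have hit' : i'.1 ≤ t := Nat.lt_succ_iff.mp i'.isLt
        refine ⟨?_, q.getVert i.1, q.getVert i'.1, ?_, ?_, ?_⟩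
        · intro h
          injection h with h
          have := congrArg Fin.val h
          omega
        · rw [hcspine i.1 hit]
        · rw [hcspine i'.1 hit']
        · rcases hcons with h | h
          · have := q.adj_getVert_succ (i := i.1) (by omega)
            rw [show i.1 + 1 = i'.1 from h] at this
            exact this
          · have := q.adj_getVert_succ (i := i'.1) (by omega)
            rw [show i'.1 + 1 = i.1 from h] at this
            exact this.symm
      | .inl i, .inr a =>
        intro hadj
        have hφ : φ a = i := hadj
        exact ⟨by simp, par hG u0 (g a), g a, by rw [hcpar a, hφ], hcg a,
          adj_par hG (hgne0 a)⟩
      | .inr a, .inl i =>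
        intro hadj
        have hφ : φ a = i := hadj
        exact ⟨by simp, g a, par hG u0 (g a), hcg a, by rw [hcpar a, hφ],
          (adj_par hG (hgne0 a)).symm⟩
      | .inr a, .inr b =>
        intro hadj
        exact absurd hadj catG_adj_inr_inr
  -- conclusion
  have htree : (quotientGraph G c).IsTree := quotient_isTree hG hsurj hfib
  refine ⟨Fin (t + 1) ⊕ Fin s, inferInstance, c, hsurj, hfib, ?_, ?_⟩
  · rw [hQeq]
    exact isCaterpillar_catG ht1 (hQeq ▸ htree)
  · rw [hQeq, edgeCount_catG, hts]
    exact hkcast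
end

section
/- For every integer m ≥ 1 there exists a tree T with m edges such that every caterpillar obtained from T by contracting edges (i.e., every quotient of T by a partition of its vertex set into nonempty connected parts that happens to be a caterpillar) has at most ⌈√(8m) − 2⌉ edges. -/
open SimpleGraph

namespace SpiderAux

/-- general closed-set lemma -/
lemma walk_closed {V : Type*} {G : SimpleGraph V} (S : Set V)
    (hS : ∀ x y, G.Adj x y → x ∈ S → y ∈ S) {u v : V} (w : G.Walk u v) (hu : u ∈ S) : v ∈ S := by
  induction w with
  | nil => exact hu
  | cons h p ih => exact ih (hS _ _ h hu)

/-- general crossing lemma -/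
lemma crossing {V : Type*} {G : SimpleGraph V} (S : Set V) (v0 : V)
    (hS : ∀ x y, G.Adj x y → x ∉ S → y ∈ S → x = v0 ∨ y = v0) {u v : V} (w : G.Walk u v)
    (hu : u ∉ S) (hv : v ∈ S) : v0 ∈ w.support := by
  induction w with
  | nil => exact absurd hv hu
  | @cons _ x _ h p ih =>
    by_cases hx : x ∈ S
    · rcases hS _ _ h hu hx with rfl | rfl
      · exact SimpleGraph.Walk.start_mem_support _
      · rw [SimpleGraph.Walk.support_cons]
        exact List.mem_cons_of_mem _ (SimpleGraph.Walk.start_mem_support _)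
    · rw [SimpleGraph.Walk.support_cons]
      exact List.mem_cons_of_mem _ (ih hx hv)

/-- walks in induced graphs give walks with support in the set -/
lemma walk_in_set {V : Type*} {G : SimpleGraph V} {s : Set V} :
    ∀ {x y : s}, ((G.induce s).Walk x y) →
      ∃ w' : G.Walk x.val y.val, ∀ v ∈ w'.support, v ∈ s := by
  intro x y w
  induction w with
  | nil => exact ⟨SimpleGraph.Walk.nil, by simp⟩
  | @cons u z _ h p ih =>
    obtain ⟨w', hw'⟩ := ih
    refine ⟨SimpleGraph.Walk.cons (by simpa using h) w', ?_⟩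
    intro v hv
    rw [SimpleGraph.Walk.support_cons] at hv
    rcases List.mem_cons.1 hv with rfl | hv
    · exact u.2
    · exact hw' v hv

variable (m a : ℕ)

/-- the parent of a leg vertex -/
def par (t : Fin m) : Option (Fin m) :=
  if h : 0 < a ∧ a ≤ (t : ℕ) then
    some ⟨(t : ℕ) - a, lt_of_le_of_lt (Nat.sub_le _ _) t.isLt⟩
  else none

lemma par_ne_self (t : Fin m) : par m a t ≠ some t := by
  unfold par
  split_ifs with h
  · intro hc
    have := congrArg (fun x => (Option.map Fin.val x)) hc
    simp at this
    omega
  · simp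

lemma par_eq_some {t u : Fin m} (h : par m a t = some u) :
    0 < a ∧ a ≤ (t : ℕ) ∧ (u : ℕ) = (t : ℕ) - a := by
  unfold par at h
  split_ifs at h with h'
  · refine ⟨h'.1, h'.2, ?_⟩
    rw [← Option.some_inj.mp h]

lemma par_eq_none {t : Fin m} (h : par m a t = none) : ¬(0 < a ∧ a ≤ (t : ℕ)) := by
  unfold par at h
  split_ifs at h with h'
  · exact h'

/-- The spider graph with legs distributed round-robin modulo `a`. -/
def spider : SimpleGraph (Option (Fin m)) where
  Adj x y := (∃ t, x = par m a t ∧ y = some t) ∨ (∃ t, y = par m a t ∧ x = some t)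
  symm := by
    constructor
    rintro x y (⟨t, h1, h2⟩ | ⟨t, h1, h2⟩)
    · exact Or.inr ⟨t, h1, h2⟩
    · exact Or.inl ⟨t, h1, h2⟩
  loopless := by
    constructor
    rintro x (⟨t, h1, h2⟩ | ⟨t, h1, h2⟩) <;>
    · subst h2
      exact par_ne_self m a t h1.symm

lemma spider_adj {x y : Option (Fin m)} :
    (spider m a).Adj x y ↔
      (∃ t, x = par m a t ∧ y = some t) ∨ (∃ t, y = par m a t ∧ x = some t) := Iff.rfl

lemma adj_par (t : Fin m) : (spider m a).Adj (par m a t) (some t) :=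
  Or.inl ⟨t, rfl, rfl⟩

lemma mod_sub_self (a u : ℕ) (h : a ≤ u) : (u - a) % a = u % a := by
  conv_rhs => rw [← Nat.sub_add_cancel h]
  rw [Nat.add_mod_right]

lemma step_ge {a t u : ℕ} (h : u % a = t % a) (h2 : t < u) : t + a ≤ u := by
  rcases Nat.eq_zero_or_pos a with rfl | ha
  · omega
  have hd : a ∣ u - t := (Nat.modEq_iff_dvd' (le_of_lt h2)).mp (h.symm : t ≡ u [MOD a])
  obtain ⟨k, hk⟩ := hd
  have hk0 : k ≠ 0 := by rintro rfl; omega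
  have : a ≤ a * k := Nat.le_mul_of_pos_right a (Nat.pos_of_ne_zero hk0)
  omega

lemma reach_none (t : ℕ) : ∀ (ht : t < m),
    (spider m a).Reachable (some ⟨t, ht⟩) none := by
  induction t using Nat.strong_induction_on with
  | _ t ih =>
    intro ht
    by_cases hle : 0 < a ∧ a ≤ t
    · have ht' : t - a < m := lt_of_le_of_lt (Nat.sub_le _ _) ht
      have hpar : par m a ⟨t, ht⟩ = some ⟨t - a, ht'⟩ := by
        unfold par; rw [dif_pos hle]
      have h1 : (spider m a).Reachable (some ⟨t, ht⟩) (some ⟨t - a, ht'⟩) := by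
        rw [← hpar]; exact ((adj_par m a ⟨t, ht⟩).symm).reachable
      exact h1.trans (ih (t - a) (by omega) ht')
    · have hpar : par m a ⟨t, ht⟩ = none := by
        unfold par; rw [dif_neg hle]
      rw [← hpar]
      exact ((adj_par m a ⟨t, ht⟩).symm).reachable

lemma spider_connected : (spider m a).Connected := by
  have hne : Nonempty (Option (Fin m)) := ⟨none⟩
  apply Connected.mk
  have key : ∀ z : Option (Fin m), (spider m a).Reachable z none := by
    rintro (_ | t)
    · exact Reachable.refl _
    · exact reach_none m a t.1 t.2
  exact fun x y => (key x).trans (key y).symm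

lemma edge_inj : Function.Injective (fun t : Fin m => s(par m a t, some t)) := by
  intro t u h
  simp only [Sym2.eq, Sym2.rel_iff', Prod.mk.injEq, Prod.swap_prod_mk] at h
  rcases h with ⟨h1, h2⟩ | ⟨h1, h2⟩
  · exact Option.some_inj.mp h2
  · obtain ⟨ha, hle, he⟩ := par_eq_some m a h2.symm
    obtain ⟨ha', hle', he'⟩ := par_eq_some m a h1
    exfalso; omega

lemma spider_edgeSet :
    (spider m a).edgeSet = Set.range (fun t : Fin m => s(par m a t, some t)) := by
  ext e
  refine e.ind (fun x y => ?_)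
  simp only [mem_edgeSet, Set.mem_range]
  constructor
  · rintro (⟨t, rfl, rfl⟩ | ⟨t, rfl, rfl⟩)
    · exact ⟨t, rfl⟩
    · exact ⟨t, Sym2.eq_swap⟩
  · rintro ⟨t, ht⟩
    rw [Sym2.eq_iff] at ht
    rcases ht with ⟨h1, h2⟩ | ⟨h1, h2⟩
    · exact Or.inl ⟨t, h1.symm, h2.symm⟩
    · exact Or.inr ⟨t, h1.symm, h2.symm⟩

lemma spider_edgeCount : (spider m a).edgeSet.ncard = m := by
  rw [spider_edgeSet, ← Set.image_univ, Set.ncard_image_of_injective _ (edge_inj m a),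
    Set.ncard_univ, Nat.card_eq_fintype_card, Fintype.card_fin]

/-- the set of descendants of leg vertex `t` (same residue, at least `t`). -/
def desc (t : Fin m) : Set (Option (Fin m)) :=
  {x | ∃ u : Fin m, x = some u ∧ (u : ℕ) % a = (t : ℕ) % a ∧ (t : ℕ) ≤ (u : ℕ)}

lemma spider_bridge (t : Fin m) : (spider m a).IsBridge s(par m a t, some t) := by
  rw [isBridge_iff]
  rintro ⟨w⟩
  have hclosed : ∀ x y, ((spider m a) \ fromEdgeSet {s(par m a t, some t)}).Adj x y →
      x ∈ (desc m a t)ᶜ → y ∈ (desc m a t)ᶜ := by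
    intro x y hxy hx hy
    rw [sdiff_adj, fromEdgeSet_adj] at hxy
    obtain ⟨hadj, hne⟩ := hxy
    apply hx
    obtain ⟨u, rfl, hmod, hle⟩ := hy
    rcases hadj with ⟨u', h1, h2⟩ | ⟨u', h1, h2⟩
    · -- x = par u', some u = some u'
      have hequ : u' = u := (Option.some_inj.mp h2).symm
      subst hequ
      by_cases hut : (u' : ℕ) = (t : ℕ)
      · obtain rfl : u' = t := Fin.ext hut
        exact absurd ⟨by rw [h1]; exact rfl, by rw [h1]; exact (adj_par m a u').ne⟩ hne
      · have hlt : (t : ℕ) + a ≤ (u' : ℕ) := step_ge hmod (by omega)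
        have ha : 0 < a := by
          rcases Nat.eq_zero_or_pos a with rfl | ha
          · simp [Nat.mod_zero] at hmod; omega
          · exact ha
        have hu' : (u' : ℕ) - a < m := lt_of_le_of_lt (Nat.sub_le _ _) u'.2
        have hpar : par m a u' = some ⟨(u' : ℕ) - a, hu'⟩ := by
          unfold par; rw [dif_pos ⟨ha, by omega⟩]
        refine ⟨⟨(u' : ℕ) - a, hu'⟩, by rw [h1, hpar], ?_, ?_⟩
        · simp only []
          rw [mod_sub_self a u' (by omega)]
          exact hmod
        · simp only []; omega
    · -- some u = par u', x = some u'
      obtain ⟨ha, hle', he⟩ := par_eq_some m a h1.symm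
      refine ⟨u', h2, ?_, by omega⟩
      rw [← hmod, he, mod_sub_self a u' hle']
  have hstart : par m a t ∈ (desc m a t)ᶜ := by
    intro hmem
    obtain ⟨u, hu, hmod, hle⟩ := hmem
    obtain ⟨ha, hle', he⟩ := par_eq_some m a hu
    omega
  have hend := walk_closed _ hclosed w hstart
  exact hend ⟨t, rfl, rfl, le_refl _⟩

lemma spider_acyclic : (spider m a).IsAcyclic := by
  rw [isAcyclic_iff_forall_adj_isBridge]
  intro x y hxy
  rcases hxy with ⟨u, rfl, rfl⟩ | ⟨u, rfl, rfl⟩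
  · exact spider_bridge m a u
  · rw [Sym2.eq_swap]; exact spider_bridge m a u

lemma spider_isTree : (spider m a).IsTree :=
  ⟨spider_connected m a, spider_acyclic m a⟩

section QuotientAnalysis

variable {W : Type*} (c : Option (Fin m) → W)

/-- the leg of residue `i`: all vertices with that residue. -/
def leg (i : ℕ) : Set (Option (Fin m)) :=
  {x | ∃ u : Fin m, x = some u ∧ (u : ℕ) % a = i}

lemma leg_boundary {i : ℕ} (x y : Option (Fin m)) (hxy : (spider m a).Adj x y)
    (hx : x ∉ leg m a i) (hy : y ∈ leg m a i) : x = none ∨ y = none := by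
  obtain ⟨u, rfl, hmod⟩ := hy
  rcases hxy with ⟨u', h1, h2⟩ | ⟨u', h1, h2⟩
  · have hequ : u' = u := (Option.some_inj.mp h2).symm
    subst hequ
    rcases hpar : par m a u' with _ | v
    · exact Or.inl (h1.trans hpar)
    · exfalso
      obtain ⟨ha, hle, he⟩ := par_eq_some m a hpar
      refine hx ⟨v, h1.trans hpar, ?_⟩
      rw [he, mod_sub_self a u' hle]; exact hmod
  · exfalso
    obtain ⟨ha, hle, he⟩ := par_eq_some m a h1.symm
    refine hx ⟨u', h2, ?_⟩
    rw [← hmod, he, mod_sub_self a u' hle]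

lemma desc_boundary {t1 : Fin m} (x y : Option (Fin m)) (hxy : (spider m a).Adj x y)
    (hx : x ∉ desc m a t1) (hy : y ∈ desc m a t1) : x = some t1 ∨ y = some t1 := by
  obtain ⟨u, rfl, hmod, hle⟩ := hy
  rcases hxy with ⟨u', h1, h2⟩ | ⟨u', h1, h2⟩
  · have hequ : u' = u := (Option.some_inj.mp h2).symm
    subst hequ
    by_cases hut : (u' : ℕ) = (t1 : ℕ)
    · exact Or.inr (by rw [Fin.ext hut])
    · exfalso
      have hlt : (t1 : ℕ) + a ≤ (u' : ℕ) := step_ge hmod (by omega)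
      have ha : 0 < a := by
        rcases Nat.eq_zero_or_pos a with rfl | ha
        · simp [Nat.mod_zero] at hmod; omega
        · exact ha
      have hu' : (u' : ℕ) - a < m := lt_of_le_of_lt (Nat.sub_le _ _) u'.2
      have hpar : par m a u' = some ⟨(u' : ℕ) - a, hu'⟩ := by
        unfold par; rw [dif_pos ⟨ha, by omega⟩]
      refine hx ⟨⟨(u' : ℕ) - a, hu'⟩, h1.trans hpar, ?_, ?_⟩
      · simp only []
        rw [mod_sub_self a u' (by omega)]
        exact hmod
      · simp only []; omega
  · exfalso
    obtain ⟨ha, hle', he⟩ := par_eq_some m a h1.symm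
    refine hx ⟨u', h2, ?_, by omega⟩
    rw [← hmod, he, mod_sub_self a u' hle']

/-- extract a walk inside a fiber. -/
lemma fiber_walk (hfib : ∀ w : W, ((spider m a).induce (c ⁻¹' {w})).Connected)
    {w : W} {x y : Option (Fin m)} (hx : c x = w) (hy : c y = w) :
    ∃ p : (spider m a).Walk x y, ∀ v ∈ p.support, c v = w := by
  have hre := ((hfib w).preconnected) ⟨x, hx⟩ ⟨y, hy⟩
  obtain ⟨p⟩ := hre
  obtain ⟨p', hp'⟩ := walk_in_set p
  exact ⟨p', fun v hv => hp' v hv⟩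

/-- main structural lemma: each leg with two cuts yields a degree-2 neighbor of the hub. -/
lemma leg_data (hfib : ∀ w : W, ((spider m a).induce (c ⁻¹' {w})).Connected)
    (t1 t2 : Fin m) (hmod12 : (t2 : ℕ) % a = (t1 : ℕ) % a) (h12 : t1 < t2)
    (hcut2 : c (par m a t2) ≠ c (some t2))
    (hmin1 : ∀ t : Fin m, (t : ℕ) % a = (t1 : ℕ) % a →
       c (par m a t) ≠ c (some t) → t1 ≤ t)
    (hmin2 : ∀ t : Fin m, (t : ℕ) % a = (t1 : ℕ) % a →
       c (par m a t) ≠ c (some t) → t ≠ t1 → t2 ≤ t)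
    (hcut1 : c (par m a t1) ≠ c (some t1)) :
    (quotientGraph (spider m a) c).Adj (c none) (c (some t1)) ∧
    ∃ x, (quotientGraph (spider m a) c).Adj (c (some t1)) x ∧ x ≠ c none := by
  have ha : 0 < a := by
    rcases Nat.eq_zero_or_pos a with rfl | ha
    · exfalso
      have : (t2 : ℕ) = (t1 : ℕ) := by simpa [Nat.mod_zero] using hmod12
      omega
    · exact ha
  -- everything below t1 on the leg is in the hub fiber
  have L1 : ∀ t : ℕ, ∀ (htm : t < m), t % a = (t1 : ℕ) % a → t < (t1 : ℕ) →
      c (some ⟨t, htm⟩) = c none := by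
    intro t
    induction t using Nat.strong_induction_on with
    | _ t ih =>
      intro htm hmod hlt
      have hnc : c (par m a ⟨t, htm⟩) = c (some ⟨t, htm⟩) := by
        by_contra hcc
        have h2 : (t1 : ℕ) ≤ t := hmin1 ⟨t, htm⟩ hmod hcc
        omega
      rcases hpar : par m a ⟨t, htm⟩ with _ | v
      · rw [← hnc, hpar]
      · obtain ⟨_, hle, he⟩ := par_eq_some m a hpar
        have hle' : a ≤ t := hle
        have he' : (v : ℕ) = t - a := he
        have hv : (v : ℕ) % a = (t1 : ℕ) % a := by
          rw [he', mod_sub_self a t hle']; exact hmod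
        have hres := ih (v : ℕ) (by omega) v.2 hv (by omega)
        rw [← hnc, hpar, ← hres]
  have L2 : c (par m a t1) = c none := by
    rcases hpar : par m a t1 with _ | v
    · rfl
    · obtain ⟨_, hle, he⟩ := par_eq_some m a hpar
      have := L1 (v : ℕ) v.2 (by rw [he]; rw [mod_sub_self a t1 hle]) (by omega)
      rw [← this]
  have hQ1 : (quotientGraph (spider m a) c).Adj (c none) (c (some t1)) := by
    refine ⟨by rw [← L2]; exact hcut1, par m a t1, some t1, L2, rfl, adj_par m a t1⟩
  -- everything in [t1, t2) on the leg is in the fiber of t1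
  have L4 : ∀ t : ℕ, ∀ (htm : t < m), t % a = (t1 : ℕ) % a → (t1 : ℕ) ≤ t → t < (t2 : ℕ) →
      c (some ⟨t, htm⟩) = c (some t1) := by
    intro t
    induction t using Nat.strong_induction_on with
    | _ t ih =>
      intro htm hmod hge hlt
      by_cases het : t = (t1 : ℕ)
      · congr 1
        exact congrArg some (Fin.ext het)
      · have hnc : c (par m a ⟨t, htm⟩) = c (some ⟨t, htm⟩) := by
          by_contra hcc
          have hne' : (⟨t, htm⟩ : Fin m) ≠ t1 := fun hh => het (congrArg Fin.val hh)
          have h2 : (t2 : ℕ) ≤ t := hmin2 ⟨t, htm⟩ hmod hcc hne'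
          omega
        have hstep : (t1 : ℕ) + a ≤ t := step_ge hmod (by omega)
        have hu' : t - a < m := by omega
        have hpar : par m a ⟨t, htm⟩ = some ⟨t - a, hu'⟩ := by
          unfold par
          rw [dif_pos ⟨ha, show a ≤ t by omega⟩]
        have hv : (t - a) % a = (t1 : ℕ) % a := by
          rw [mod_sub_self a t (by omega)]; exact hmod
        have hres := ih (t - a) (by omega) hu' hv (by omega) (by omega)
        rw [← hnc, hpar]
        exact hres
  have hat2 : (t1 : ℕ) + a ≤ (t2 : ℕ) := step_ge hmod12 h12
  have hu2 : (t2 : ℕ) - a < m := by omega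
  have hpar2 : par m a t2 = some ⟨(t2 : ℕ) - a, hu2⟩ := by
    unfold par; rw [dif_pos ⟨ha, by omega⟩]
  have L5 : c (par m a t2) = c (some t1) := by
    rw [hpar2]
    exact L4 ((t2 : ℕ) - a) hu2 (by rw [mod_sub_self a t2 (by omega)]; exact hmod12)
      (by omega) (by omega)
  have hQ2 : (quotientGraph (spider m a) c).Adj (c (some t1)) (c (some t2)) := by
    refine ⟨by rw [← L5]; exact hcut2, par m a t2, some t2, L5, rfl, adj_par m a t2⟩
  refine ⟨hQ1, c (some t2), hQ2, ?_⟩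
  -- c (some t2) ≠ c none, else the hub fiber crosses some t1
  intro heq
  obtain ⟨p, hp⟩ := fiber_walk m a c hfib (rfl : c none = c none) heq
  have hcross := crossing (desc m a t1) (some t1)
    (fun x y hxy hx hy => desc_boundary m a x y hxy hx hy) p
    (by rintro ⟨u, hu, -⟩; cases hu)
    ⟨t2, rfl, hmod12, le_of_lt h12⟩
  have := hp _ hcross
  exact hQ1.1 this.symm

/-- parts other than the hub part living on different legs are distinct -/
lemma legs_distinct (hfib : ∀ w : W, ((spider m a).induce (c ⁻¹' {w})).Connected)
    (t1 t1' : Fin m) (hmodne : (t1 : ℕ) % a ≠ (t1' : ℕ) % a)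
    (hn1 : c (some t1) ≠ c none) :
    c (some t1) ≠ c (some t1') := by
  intro heq
  obtain ⟨p, hp⟩ := fiber_walk m a c hfib heq.symm (rfl : c (some t1) = c (some t1))
  have hcross := crossing (leg m a ((t1 : ℕ) % a)) none
    (fun x y hxy hx hy => leg_boundary m a x y hxy hx hy) p
    (by rintro ⟨u, hu, hmod⟩; exact hmodne (by rw [Option.some_inj.mp hu]; exact hmod.symm))
    ⟨t1, rfl, rfl⟩
  exact hn1 (hp _ hcross).symm

set_option maxHeartbeats 2000000 in
lemma quotient_bound (ha : 0 < a) (b : ℕ) (hb : 0 < b) (hab : m ≤ a * b)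
    [Finite W]
    (hfib : ∀ w : W, ((spider m a).induce (c ⁻¹' {w})).Connected)
    (hcat : IsCaterpillar (quotientGraph (spider m a) c)) :
    edgeCount (quotientGraph (spider m a) c) + 2 ≤ a + 2 * b := by
  classical
  set Q := quotientGraph (spider m a) c with hQdef
  set C : Finset (Fin m) := Finset.univ.filter (fun t => c (par m a t) ≠ c (some t)) with hCdef
  have hCmem : ∀ t : Fin m, t ∈ C ↔ c (par m a t) ≠ c (some t) := by
    intro t
    rw [hCdef, Finset.mem_filter]
    simp
  -- Step 1 : edges of the quotient are covered by cut edges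
  have h1 : edgeCount Q ≤ C.card := by
    have hsub : Q.edgeSet ⊆
        (fun t : Fin m => s(c (par m a t), c (some t))) '' (C : Set (Fin m)) := by
      intro e he
      revert he
      refine e.ind (fun x y => ?_)
      intro he
      rw [mem_edgeSet] at he
      obtain ⟨hne, u, v, hu, hv, hadj⟩ := he
      rcases hadj with ⟨t, h1', h2'⟩ | ⟨t, h1', h2'⟩
      · subst h1'; subst h2'
        exact ⟨t, Finset.mem_coe.mpr ((hCmem t).mpr (by rw [hu, hv]; exact hne)),
          by simp only []; rw [hu, hv]⟩
      · subst h1'; subst h2'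
        exact ⟨t, Finset.mem_coe.mpr ((hCmem t).mpr (by rw [hu, hv]; exact hne.symm)),
          by simp only []; rw [hu, hv]; exact Sym2.eq_swap⟩
    calc edgeCount Q ≤ ((fun t : Fin m => s(c (par m a t), c (some t))) ''
          (C : Set (Fin m))).ncard :=
        Set.ncard_le_ncard hsub ((C : Set (Fin m)).toFinite.image _)
      _ ≤ (C : Set (Fin m)).ncard := Set.ncard_image_le (C : Set (Fin m)).toFinite
      _ = C.card := Set.ncard_coe_finset C
  -- Step 2 : split cut edges by residue
  have h2 : C.card = ∑ i ∈ Finset.range a, (C.filter (fun t : Fin m => t.val % a = i)).card :=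
    Finset.card_eq_sum_card_fiberwise (fun t _ => Finset.mem_range.mpr (Nat.mod_lt _ ha))
  -- Step 3 : each residue class has at most b cut edges
  have h3 : ∀ i, (C.filter (fun t : Fin m => t.val % a = i)).card ≤ b := by
    intro i
    have hba : m ≤ b * a := by rw [mul_comm]; exact hab
    have hcard := Finset.card_le_card_of_injOn
      (s := C.filter (fun t : Fin m => t.val % a = i)) (t := Finset.range b)
      (fun t : Fin m => (t : ℕ) / a)
      (fun t _ => Finset.mem_range.mpr ((Nat.div_lt_iff_lt_mul ha).mpr
        (lt_of_lt_of_le t.2 hba)))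
      (fun t ht u hu he => by
        have htm : (t : ℕ) % a = i := (Finset.mem_filter.mp ht).2
        have hum : (u : ℕ) % a = i := (Finset.mem_filter.mp hu).2
        refine Fin.ext ?_
        rw [← Nat.div_add_mod (t : ℕ) a, ← Nat.div_add_mod (u : ℕ) a, htm, hum]
        simp only [] at he
        rw [he])
    simpa using hcard
  -- Step 4 : at most two residues have ≥ 2 cut edges
  set B := (Finset.range a).filter
    (fun i => 2 ≤ (C.filter (fun t : Fin m => t.val % a = i)).card) with hBdef
  have extract : ∀ i ∈ B, ∃ t1 : Fin m, (t1 : ℕ) % a = i ∧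
      Q.Adj (c none) (c (some t1)) ∧
      ∃ x, Q.Adj (c (some t1)) x ∧ x ≠ c none := by
    intro i hiB
    rw [hBdef, Finset.mem_filter] at hiB
    obtain ⟨hir, hic⟩ := hiB
    set Ci := C.filter (fun t : Fin m => t.val % a = i) with hCi
    have hne : Ci.Nonempty := Finset.card_pos.mp (by omega)
    set t1 := Ci.min' hne with ht1def
    have ht1 : t1 ∈ Ci := Finset.min'_mem _ _
    have hne2 : (Ci.erase t1).Nonempty := by
      rw [← Finset.card_pos, Finset.card_erase_of_mem ht1]; omega
    set t2 := (Ci.erase t1).min' hne2 with ht2def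
    have ht2 : t2 ∈ Ci.erase t1 := Finset.min'_mem _ _
    have ht2C : t2 ∈ Ci := Finset.mem_of_mem_erase ht2
    have ht2ne : t2 ≠ t1 := Finset.ne_of_mem_erase ht2
    have ht1cut : c (par m a t1) ≠ c (some t1) :=
      (hCmem t1).mp (Finset.mem_filter.mp ht1).1
    have ht1mod : (t1 : ℕ) % a = i := (Finset.mem_filter.mp ht1).2
    have ht2cut : c (par m a t2) ≠ c (some t2) :=
      (hCmem t2).mp (Finset.mem_filter.mp ht2C).1
    have ht2mod : (t2 : ℕ) % a = i := (Finset.mem_filter.mp ht2C).2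
    have hmemCi : ∀ t : Fin m, (t : ℕ) % a = (t1 : ℕ) % a →
        c (par m a t) ≠ c (some t) → t ∈ Ci := by
      intro t hmt hct
      rw [hCi, Finset.mem_filter]
      exact ⟨(hCmem t).mpr hct, by rw [hmt, ht1mod]⟩
    have hmin1 : ∀ t : Fin m, (t : ℕ) % a = (t1 : ℕ) % a →
        c (par m a t) ≠ c (some t) → t1 ≤ t :=
      fun t hmt hct => Finset.min'_le _ _ (hmemCi t hmt hct)
    have hmin2 : ∀ t : Fin m, (t : ℕ) % a = (t1 : ℕ) % a →
        c (par m a t) ≠ c (some t) → t ≠ t1 → t2 ≤ t :=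
      fun t hmt hct htne =>
        Finset.min'_le _ _ (Finset.mem_erase.mpr ⟨htne, hmemCi t hmt hct⟩)
    have h12 : t1 < t2 :=
      lt_of_le_of_ne (Finset.min'_le _ _ ht2C) (Ne.symm ht2ne)
    obtain ⟨hQ1, x, hQ2, hxne⟩ := leg_data m a c hfib t1 t2
      (by rw [ht2mod, ht1mod]) h12 ht2cut hmin1 hmin2 ht1cut
    exact ⟨t1, ht1mod, hQ1, x, hQ2, hxne⟩
  have h4 : B.card ≤ 2 := by
    by_contra hB
    push_neg at hB
    obtain ⟨i, j, l, hi, hj, hl, hij, hil, hjl⟩ := Finset.two_lt_card_iff.mp hB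
    obtain ⟨ti, hmi, hQ1i, xi, hQ2i, hxi⟩ := extract i hi
    obtain ⟨tj, hmj, hQ1j, xj, hQ2j, hxj⟩ := extract j hj
    obtain ⟨tl, hml, hQ1l, xl, hQ2l, hxl⟩ := extract l hl
    have hwij : c (some ti) ≠ c (some tj) :=
      legs_distinct m a c hfib ti tj (by rw [hmi, hmj]; exact hij) hQ1i.1.symm
    have hwil : c (some ti) ≠ c (some tl) :=
      legs_distinct m a c hfib ti tl (by rw [hmi, hml]; exact hil) hQ1i.1.symm
    have hwjl : c (some tj) ≠ c (some tl) :=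
      legs_distinct m a c hfib tj tl (by rw [hmj, hml]; exact hjl) hQ1j.1.symm
    have hdeg : ∀ y x1 x2 : W, Q.Adj y x1 → Q.Adj y x2 → x1 ≠ x2 → 2 ≤ deg Q y := by
      intro y x1 x2 ha1 ha2 hne'
      exact (Set.one_lt_ncard (Set.toFinite _)).mpr ⟨x1, ha1, x2, ha2, hne'⟩
    have hw0 : 2 ≤ deg Q (c none) := hdeg _ _ _ hQ1i hQ1j hwij
    have hwi : 2 ≤ deg Q (c (some ti)) := hdeg _ _ _ hQ1i.symm hQ2i (Ne.symm hxi)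
    have hwj : 2 ≤ deg Q (c (some tj)) := hdeg _ _ _ hQ1j.symm hQ2j (Ne.symm hxj)
    have hwl : 2 ≤ deg Q (c (some tl)) := hdeg _ _ _ hQ1l.symm hQ2l (Ne.symm hxl)
    obtain ⟨-, -, hP⟩ := hcat.2
    have := hP ⟨c none, hw0⟩ ⟨c (some ti), hwi⟩ ⟨c (some tj), hwj⟩ ⟨c (some tl), hwl⟩
      (by exact hQ1i) (by exact hQ1j) (by exact hQ1l)
    rcases this with h | h | h
    · exact hwij (congrArg Subtype.val h)
    · exact hwil (congrArg Subtype.val h)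
    · exact hwjl (congrArg Subtype.val h)
  -- Step 5 : combine
  have hsplit : ∑ i ∈ B, (C.filter (fun t : Fin m => t.val % a = i)).card +
      ∑ i ∈ (Finset.range a).filter
        (fun i => ¬ 2 ≤ (C.filter (fun t : Fin m => t.val % a = i)).card),
        (C.filter (fun t : Fin m => t.val % a = i)).card =
      ∑ i ∈ Finset.range a, (C.filter (fun t : Fin m => t.val % a = i)).card := by
    rw [hBdef]
    exact Finset.sum_filter_add_sum_filter_not _ _ _
  have hbig : ∑ i ∈ B, (C.filter (fun t : Fin m => t.val % a = i)).card ≤ B.card * b := by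
    have := Finset.sum_le_card_nsmul B
      (fun i => (C.filter (fun t : Fin m => t.val % a = i)).card) b (fun i _ => h3 i)
    simpa [smul_eq_mul] using this
  have hsmall : ∑ i ∈ (Finset.range a).filter
      (fun i => ¬ 2 ≤ (C.filter (fun t : Fin m => t.val % a = i)).card),
      (C.filter (fun t : Fin m => t.val % a = i)).card ≤
      ((Finset.range a).filter
        (fun i => ¬ 2 ≤ (C.filter (fun t : Fin m => t.val % a = i)).card)).card * 1 := by
    have := Finset.sum_le_card_nsmul ((Finset.range a).filter
      (fun i => ¬ 2 ≤ (C.filter (fun t : Fin m => t.val % a = i)).card))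
      (fun i => (C.filter (fun t : Fin m => t.val % a = i)).card) 1
      (fun i hi => by
        have h5 := (Finset.mem_filter.mp hi).2
        show (C.filter (fun t : Fin m => t.val % a = i)).card ≤ 1
        omega)
    simpa [smul_eq_mul] using this
  have hcards : B.card + ((Finset.range a).filter
      (fun i => ¬ 2 ≤ (C.filter (fun t : Fin m => t.val % a = i)).card)).card = a := by
    rw [hBdef]
    rw [Finset.card_filter_add_card_filter_not, Finset.card_range]
  obtain ⟨b1, rfl⟩ : ∃ b1, b = b1 + 1 := ⟨b - 1, by omega⟩
  have h6 : B.card * b1 ≤ 2 * b1 := Nat.mul_le_mul_right _ h4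
  have h7 : B.card * (b1 + 1) = B.card * b1 + B.card := by ring
  linarith [h1, h2, hsplit, hbig, hsmall, hcards, h6, h7]

end QuotientAnalysis

lemma choose_ab (m : ℕ) (hm : 1 ≤ m) :
    ∃ a b s : ℕ, 0 < a ∧ 0 < b ∧ m ≤ a * b ∧ a + 2 * b = s ∧
      3 ≤ s ∧ (s - 1) * (s - 1) < 8 * m := by
  set s := Nat.sqrt (8 * m - 1) + 1 with hs
  have hsq1 : 8 * m - 1 < s * s := Nat.lt_succ_sqrt (8 * m - 1)
  have hsq2 : Nat.sqrt (8 * m - 1) * Nat.sqrt (8 * m - 1) ≤ 8 * m - 1 :=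
    Nat.sqrt_le (8 * m - 1)
  have h8 : 8 * m ≤ s * s := by
    have h9 : 8 * m - 1 + 1 = 8 * m := by omega
    rw [← h9]
    exact Nat.succ_le_of_lt hsq1
  have hlt : (s - 1) * (s - 1) < 8 * m := by
    have h9 : s - 1 = Nat.sqrt (8 * m - 1) := by omega
    rw [h9]
    exact lt_of_le_of_lt hsq2 (by omega)
  have hs3 : 3 ≤ s := by
    by_contra hcon
    push_neg at hcon
    have h9 : s * s ≤ 2 * 2 := Nat.mul_le_mul (by omega) (by omega)
    omega
  clear_value s
  clear hs hsq1 hsq2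
  obtain ⟨k, r, hr, hskr⟩ : ∃ k r, r < 4 ∧ s = 4 * k + r :=
    ⟨s / 4, s % 4, Nat.mod_lt _ (by norm_num), by omega⟩
  subst hskr
  interval_cases r
  · refine ⟨2 * k, k, 4 * k + 0, by omega, by omega, ?_, by ring, hs3, hlt⟩
    have h8' : 8 * m ≤ 16 * (k * k) := by
      have he : (4 * k + 0) * (4 * k + 0) = 16 * (k * k) := by ring
      rw [← he]; exact h8
    have hab : 2 * k * k = 2 * (k * k) := by ring
    rw [hab]
    generalize k * k = K at h8' ⊢
    omega
  · refine ⟨2 * k + 1, k, 4 * k + 1, by omega, by omega, ?_, by ring, hs3, hlt⟩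
    have h8' : 8 * m ≤ 16 * (k * k) + 8 * k + 1 := by
      have he : (4 * k + 1) * (4 * k + 1) = 16 * (k * k) + 8 * k + 1 := by ring
      rw [← he]; exact h8
    have hab : (2 * k + 1) * k = 2 * (k * k) + k := by ring
    rw [hab]
    generalize k * k = K at h8' ⊢
    omega
  · refine ⟨2 * k, k + 1, 4 * k + 2, by omega, by omega, ?_, by ring, hs3, hlt⟩
    have h8' : 8 * m ≤ 16 * (k * k) + 16 * k + 4 := by
      have he : (4 * k + 2) * (4 * k + 2) = 16 * (k * k) + 16 * k + 4 := by ring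
      rw [← he]; exact h8
    have hab : 2 * k * (k + 1) = 2 * (k * k) + 2 * k := by ring
    rw [hab]
    generalize k * k = K at h8' ⊢
    omega
  · refine ⟨2 * k + 1, k + 1, 4 * k + 3, by omega, by omega, ?_, by ring, hs3, hlt⟩
    have h8' : 8 * m ≤ 16 * (k * k) + 24 * k + 9 := by
      have he : (4 * k + 3) * (4 * k + 3) = 16 * (k * k) + 24 * k + 9 := by ring
      rw [← he]; exact h8
    have hab : (2 * k + 1) * (k + 1) = 2 * (k * k) + 3 * k + 1 := by ring
    rw [hab]
    generalize k * k = K at h8' ⊢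
    omega

end SpiderAux

/-- For every `m ≥ 1` there is a tree with `m` edges such that every
caterpillar obtained from it by contracting edges (i.e., every quotient by a partition of the
vertex set into nonempty connected parts that is a caterpillar) has at most `⌈√(8m) − 2⌉`
edges. -/
theorem exists_tree_contraction_upper_bound (m : ℕ) (hm : 1 ≤ m) :
    ∃ (V : Type) (_ : Fintype V) (G : SimpleGraph V),
      G.IsTree ∧ edgeCount G = m ∧
      ∀ (W : Type*) (c : V → W),
        Function.Surjective c →
        (∀ w : W, (G.induce (c ⁻¹' {w})).Connected) →
        IsCaterpillar (quotientGraph G c) →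
        (edgeCount (quotientGraph G c) : ℤ) ≤ ⌈Real.sqrt (8 * (m : ℝ)) - 2⌉ := by
  obtain ⟨a, b, s, ha, hb, hab, habs, hs3, hlt⟩ := SpiderAux.choose_ab m hm
  refine ⟨Option (Fin m), inferInstance, SpiderAux.spider m a,
    SpiderAux.spider_isTree m a, SpiderAux.spider_edgeCount m a, ?_⟩
  intro W c hsurj hfib hcat
  haveI : Finite W := Finite.of_surjective c hsurj
  have hbound := SpiderAux.quotient_bound m a c ha b hb hab hfib hcat
  have hceil : ⌈Real.sqrt (8 * (m : ℝ)) - 2⌉ = ⌈Real.sqrt (8 * (m : ℝ))⌉ - 2 := by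
    rw [show (2 : ℝ) = ((2 : ℤ) : ℝ) by norm_num, Int.ceil_sub_intCast]
  rw [hceil]
  have hsZ : (s : ℤ) ≤ ⌈Real.sqrt (8 * (m : ℝ))⌉ := by
    have h1 : ((s : ℝ) - 1) < Real.sqrt (8 * (m : ℝ)) := by
      have hcast : ((s : ℝ) - 1) = (((s - 1 : ℕ) : ℝ)) := by
        rw [Nat.cast_sub (by omega : 1 ≤ s)]
        norm_num
      rw [hcast]
      refine (Real.lt_sqrt (by positivity)).mpr ?_
      have : (((s - 1) * (s - 1) : ℕ) : ℝ) < ((8 * m : ℕ) : ℝ) := by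
        exact_mod_cast hlt
      push_cast at this ⊢
      nlinarith [this]
    have h2 : ((s : ℤ) - 1) < ⌈Real.sqrt (8 * (m : ℝ))⌉ := by
      rw [Int.lt_ceil]
      push_cast
      exact h1
    omega
  have hQ : (edgeCount (quotientGraph (SpiderAux.spider m a) c) : ℤ) + 2 ≤ (s : ℤ) := by
    have : edgeCount (quotientGraph (SpiderAux.spider m a) c) + 2 ≤ s := by
      rw [← habs]; exact hbound
    exact_mod_cast this
  omega
end

section
/- For every finite tree T with at least one edge, the maximum number of edges of a caterpillar that can be obtained from T by contracting edges (i.e., as a quotient of T by a partition of its vertex set into nonempty connected parts) equals κ(T), where κ(T) is the number of leaves of T plus the diameter of T minus 2. -/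
open SimpleGraph

section AuxA

open SimpleGraph Walk Function

variable {V : Type*} {G : SimpleGraph V}

/-- The inclusion homomorphism from an induced subgraph. -/
def inclHom (G : SimpleGraph V) (S : Set V) : (G.induce S) →g G :=
  ⟨Subtype.val, fun {_ _} h => h⟩

lemma inclHom_injective (G : SimpleGraph V) (S : Set V) : Function.Injective (inclHom G S) :=
  Subtype.val_injective

lemma reachable_induce_of_walk {S : Set V} {u v : V} (hu : u ∈ S) (hv : v ∈ S)
    (q : G.Walk u v) (hs : ∀ x ∈ q.support, x ∈ S) :
    (G.induce S).Reachable ⟨u, hu⟩ ⟨v, hv⟩ := by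
  induction q with
  | nil => rfl
  | @cons a b c h r ih =>
      have hb : b ∈ S := hs b (by simp)
      have h1 : (G.induce S).Adj ⟨a, hu⟩ ⟨b, hb⟩ := h
      exact h1.reachable.trans (ih hb hv (fun x hx => hs x (by simp [hx])))

lemma exists_walk_of_induce_reachable {S : Set V} {u v : ↥S}
    (h : (G.induce S).Reachable u v) :
    ∃ q : G.Walk u.val v.val, ∀ x ∈ q.support, x ∈ S := by
  obtain ⟨p⟩ := h
  refine ⟨p.map (inclHom G S), ?_⟩
  intro x hx
  change x ∈ (p.map (inclHom G S)).support at hx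
  rw [Walk.support_map] at hx
  obtain ⟨y, _, rfl⟩ := List.mem_map.mp hx
  exact y.2

lemma IsAcyclic.length_eq_dist (hA : G.IsAcyclic) {u v : V} (p : G.Walk u v)
    (hp : p.IsPath) : p.length = G.dist u v := by
  obtain ⟨q, hq, hql⟩ := p.reachable.exists_path_of_dist
  have : (⟨p, hp⟩ : G.Path u v) = ⟨q, hq⟩ := isAcyclic_iff_path_unique.mp hA _ _
  rw [← hql]
  exact congrArg Walk.length (congrArg Subtype.val this)

lemma IsAcyclic.no_triangle (hA : G.IsAcyclic) {x y z : V} (hxy : G.Adj x y)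
    (hyz : G.Adj y z) (hxz : G.Adj x z) : False := by
  have hp1 : (Walk.cons hxz Walk.nil : G.Walk x z).IsPath := by simp [hxz.ne]
  have hp2 : (Walk.cons hxy (Walk.cons hyz Walk.nil) : G.Walk x z).IsPath := by
    simp [hxy.ne, hxz.ne, hyz.ne]
  have := isAcyclic_iff_path_unique.mp hA (⟨_, hp1⟩ : G.Path x z) ⟨_, hp2⟩
  have hl := congrArg Walk.length (congrArg Subtype.val this)
  simp at hl

/-- an internal vertex of a path has two distinct neighbours on the path. -/
lemma internal_two_neighbors {u v x : V} (p : G.Walk u v) (hp : p.IsPath)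
    (hx : x ∈ p.support) (hxu : x ≠ u) (hxv : x ≠ v) :
    ∃ a b : V, a ≠ b ∧ G.Adj x a ∧ G.Adj x b ∧ a ∈ p.support ∧ b ∈ p.support := by
  induction p with
  | nil => simp at hx; exact absurd hx hxu
  | @cons a b c h r ih =>
      rw [Walk.support_cons, List.mem_cons] at hx
      rcases hx with rfl | hx
      · exact absurd rfl hxu
      rcases eq_or_ne x b with rfl | hxb
      · cases r with
        | nil => exact absurd rfl hxv
        | @cons b w c h' r' =>
            refine ⟨a, w, ?_, h.symm, h', by simp, by simp⟩
            intro haw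
            have := hp.2
            rw [Walk.support_cons] at this
            exact (List.nodup_cons.mp this).1 (by simp [haw])
      · obtain ⟨a', b', h1, h2, h3, h4, h5⟩ :=
          ih ((Walk.cons_isPath_iff _ _).mp hp).1 hx hxb hxv
        exact ⟨a', b', h1, h2, h3, by simp [h4], by simp [h5]⟩

lemma two_le_deg_of_two_adj [Finite V] {x a b : V} (hab : a ≠ b) (ha : G.Adj x a)
    (hb : G.Adj x b) : 2 ≤ deg G x := by
  have h1 : ({a, b} : Set V) ⊆ G.neighborSet x := by
    intro z hz; rcases hz with rfl | hz
    · exact ha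
    · simp at hz; subst hz; exact hb
  calc 2 = ({a, b} : Set V).ncard := (Set.ncard_pair hab).symm
    _ ≤ _ := Set.ncard_le_ncard h1 (Set.toFinite _)

lemma exists_adj_of_ne {u v : V} (h : G.Reachable v u) (hne : v ≠ u) : ∃ z, G.Adj v z := by
  obtain ⟨q⟩ := h
  cases q with
  | nil => exact absurd rfl hne
  | cons h _ => exact ⟨_, h⟩

lemma one_le_deg_of_adj [Finite V] {v z : V} (h : G.Adj v z) : 1 ≤ deg G v := by
  rw [deg, Nat.one_le_iff_ne_zero, ← Nat.pos_iff_ne_zero]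
  rw [Set.ncard_pos (Set.toFinite _)]
  exact ⟨z, h⟩

end AuxA
section AuxA2

open SimpleGraph Walk Function

variable {V : Type*} {G : SimpleGraph V}

lemma distSet_bddAbove [Fintype V] : BddAbove {n | ∃ u v : V, G.dist u v = n} := by
  refine ⟨Fintype.card V, ?_⟩
  rintro n ⟨u, v, rfl⟩
  by_cases h : G.Reachable u v
  · obtain ⟨p, hp, hl⟩ := h.exists_path_of_dist
    rw [← hl]
    exact (hp.length_lt).le
  · rw [SimpleGraph.dist_eq_zero_of_not_reachable h]
    exact Nat.zero_le _

lemma dist_le_treeDiam [Fintype V] (u v : V) : G.dist u v ≤ treeDiam G :=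
  le_csSup distSet_bddAbove ⟨u, v, rfl⟩

lemma treeDiam_le [Fintype V] [Nonempty V] {m : ℕ} (h : ∀ u v : V, G.dist u v ≤ m) :
    treeDiam G ≤ m := by
  refine csSup_le ⟨0, Classical.arbitrary V, Classical.arbitrary V, by simp⟩ ?_
  rintro n ⟨u, v, rfl⟩
  exact h u v

lemma exists_dist_eq_treeDiam [Fintype V] [Nonempty V] :
    ∃ u v : V, G.dist u v = treeDiam G := by
  have hne : ({n : ℕ | ∃ u v : V, G.dist u v = n}).Nonempty :=
    ⟨0, Classical.arbitrary V, Classical.arbitrary V, by simp⟩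
  exact Nat.sSup_mem hne distSet_bddAbove

/-- existence of a maximal (longest) path in a finite graph -/
lemma exists_maximal_path [Fintype V] [Nonempty V] (G : SimpleGraph V) :
    ∃ (u v : V) (p : G.Walk u v), p.IsPath ∧
      ∀ (a b : V) (q : G.Walk a b), q.IsPath → q.length ≤ p.length := by
  classical
  set N := {n : ℕ | ∃ (a b : V) (q : G.Walk a b), q.IsPath ∧ q.length = n} with hN
  have hne : N.Nonempty := ⟨0, Classical.arbitrary V, Classical.arbitrary V, Walk.nil, Walk.IsPath.nil, rfl⟩
  have hbdd : BddAbove N := by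
    refine ⟨Fintype.card V, ?_⟩
    rintro n ⟨a, b, q, hq, rfl⟩
    exact hq.length_lt.le
  obtain ⟨a, b, q, hq, hl⟩ := Nat.sSup_mem hne hbdd
  refine ⟨a, b, q, hq, ?_⟩
  intro x y r hr
  rw [hl]
  exact le_csSup hbdd ⟨x, y, r, hr, rfl⟩

/-- in a path, there is at most one edge at the starting vertex -/
lemma start_unique_edge {u v b c : V} {q : G.Walk u v} (hq : q.IsPath)
    (hb : s(u, b) ∈ q.edges) (hc : s(u, c) ∈ q.edges) : b = c := by
  cases q with
  | nil => simp at hb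
  | @cons _ w _ h r =>
      rw [Walk.edges_cons, List.mem_cons] at hb hc
      have hr : u ∉ r.support := ((Walk.cons_isPath_iff _ _).mp hq).2
      rcases hb with hb | hb
      · rcases hc with hc | hc
        · rw [Sym2.congr_right.mp hb, Sym2.congr_right.mp hc]
        · exact absurd (Walk.fst_mem_support_of_mem_edges r hc) hr
      · exact absurd (Walk.fst_mem_support_of_mem_edges r hb) hr

/-- the first endpoint of a maximal path in an acyclic graph has degree one
    (provided the path is not trivial). -/
lemma maximal_path_end_deg [Fintype V] (hA : G.IsAcyclic) {u v : V} {p : G.Walk u v}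
    (hp : p.IsPath)
    (hmax : ∀ (a b : V) (q : G.Walk a b), q.IsPath → q.length ≤ p.length)
    (hlen : 1 ≤ p.length) : deg G u = 1 := by
  classical
  cases p with
  | nil => simp at hlen
  | @cons _ w _ h r =>
      have hr : u ∉ r.support := ((Walk.cons_isPath_iff _ _).mp hp).2
      have hns : G.neighborSet u = {w} := by
        ext z
        simp only [mem_neighborSet, Set.mem_singleton_iff]
        constructor
        · intro hz
          by_contra hzw
          by_cases hzs : z ∈ (Walk.cons h r).support
          · -- z on the path, z ≠ w : produces a cycle
            have hzu : z ≠ u := fun hh => G.loopless.irrefl u (hh ▸ hz)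
            have hedge : s(u, z) ∉ ((Walk.cons h r).takeUntil z hzs).edges := by
              intro hmem
              have hsub := Walk.edges_takeUntil_subset (Walk.cons h r) hzs
              have : s(u, z) ∈ (Walk.cons h r).edges := hsub hmem
              exact hzw (start_unique_edge hp this
                (by rw [Walk.edges_cons]; exact List.mem_cons_self))
            have htp : ((Walk.cons h r).takeUntil z hzs).IsPath := hp.takeUntil hzs
            have hrev : (((Walk.cons h r).takeUntil z hzs).reverse).IsPath := htp.reverse
            have hedge' : s(u, z) ∉ (((Walk.cons h r).takeUntil z hzs).reverse).edges := by
              rw [Walk.edges_reverse]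
              intro hmem
              exact hedge (List.mem_reverse.mp hmem)
            have hcyc := SimpleGraph.Path.cons_isCycle
              (⟨_, hrev⟩ : G.Path z u) hz hedge'
            exact hA _ hcyc
          · -- z off the path : extend
            have hlonger : (Walk.cons (hz.symm) (Walk.cons h r)).IsPath :=
              (Walk.cons_isPath_iff _ _).mpr ⟨hp, hzs⟩
            have := hmax _ _ _ hlonger
            simp at this
        · intro hz; subst hz; exact h
      rw [deg, hns, Set.ncard_singleton]

/-- a nontrivial path cannot be a loop -/
lemma isPath_ne_of_length_pos {u v : V} {p : G.Walk u v} (hp : p.IsPath)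
    (hlen : 1 ≤ p.length) : u ≠ v := by
  cases p with
  | nil => simp at hlen
  | @cons _ w _ h r =>
      rintro rfl
      exact ((Walk.cons_isPath_iff _ _).mp hp).2 r.end_mem_support

/-- a finite tree with an edge has two distinct leaves. -/
lemma tree_two_leaves [Fintype V] (hG : G.IsTree) {x0 y0 : V} (hadj : G.Adj x0 y0) :
    ∃ x y : V, x ≠ y ∧ deg G x = 1 ∧ deg G y = 1 := by
  have : Nonempty V := ⟨x0⟩
  obtain ⟨u, v, p, hp, hmax⟩ := exists_maximal_path G
  have hlen : 1 ≤ p.length := by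
    have h1 : (Walk.cons hadj Walk.nil : G.Walk x0 y0).IsPath := by simp [hadj.ne]
    have := hmax _ _ _ h1
    simpa using this
  have hrevmax : ∀ (a b : V) (q : G.Walk a b), q.IsPath → q.length ≤ p.reverse.length := by
    intro a b q hq
    rw [Walk.length_reverse]
    exact hmax a b q hq
  refine ⟨u, v, isPath_ne_of_length_pos hp hlen, ?_, ?_⟩
  · exact maximal_path_end_deg hG.IsAcyclic hp hmax hlen
  · exact maximal_path_end_deg hG.IsAcyclic hp.reverse hrevmax (by rwa [Walk.length_reverse])

end AuxA2
section AuxB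

open SimpleGraph Walk Function

variable {V W : Type*} {G : SimpleGraph V} {c : V → W}

lemma quotient_adj {a b : W} :
    (quotientGraph G c).Adj a b ↔ a ≠ b ∧ ∃ u v, c u = a ∧ c v = b ∧ G.Adj u v := Iff.rfl

lemma quotient_walk_le {u v : V} (q : G.Walk u v) :
    ∃ p : (quotientGraph G c).Walk (c u) (c v), p.length ≤ q.length := by
  induction q with
  | nil => exact ⟨Walk.nil, by simp⟩
  | @cons x y z h r ih =>
      obtain ⟨p, hp⟩ := ih
      by_cases he : c x = c y
      · exact ⟨p.copy he.symm rfl, by rw [Walk.length_copy, Walk.length_cons]; omega⟩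
      · exact ⟨Walk.cons (quotient_adj.mpr ⟨he, x, y, rfl, rfl, h⟩) p, by simp; omega⟩

lemma quotient_preconnected (hs : Surjective c) (hG : G.Preconnected) :
    (quotientGraph G c).Preconnected := by
  intro a b
  obtain ⟨u, rfl⟩ := hs a
  obtain ⟨v, rfl⟩ := hs b
  obtain ⟨q⟩ := hG u v
  obtain ⟨p, -⟩ := quotient_walk_le (c := c) q
  exact ⟨p⟩

lemma quotient_connected (hs : Surjective c) (hG : G.Connected) :
    (quotientGraph G c).Connected := by
  have : Nonempty V := hG.nonempty
  haveI : Nonempty W := Nonempty.map c this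
  exact ⟨quotient_preconnected hs hG.preconnected⟩

lemma quotient_dist_le (hr : G.Reachable u v) :
    (quotientGraph G c).dist (c u) (c v) ≤ G.dist u v := by
  obtain ⟨q, hq, hl⟩ := hr.exists_path_of_dist
  obtain ⟨p, hp⟩ := quotient_walk_le (c := c) q
  calc (quotientGraph G c).dist (c u) (c v) ≤ p.length := SimpleGraph.dist_le p
    _ ≤ q.length := hp
    _ = _ := hl

lemma quotient_treeDiam_le [Fintype V] [Fintype W] (hs : Surjective c)
    (hG : G.Connected) : treeDiam (quotientGraph G c) ≤ treeDiam G := by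
  have : Nonempty V := hG.nonempty
  have : Nonempty W := Nonempty.map c ‹_›
  refine treeDiam_le ?_
  intro a b
  obtain ⟨u, rfl⟩ := hs a
  obtain ⟨v, rfl⟩ := hs b
  exact le_trans (quotient_dist_le (hG.preconnected u v)) (dist_le_treeDiam u v)

lemma fiber_walk (hfib : ∀ w, (G.induce (c ⁻¹' {w})).Connected) {u v : V}
    (h : c u = c v) : ∃ q : G.Walk u v, ∀ x ∈ q.support, c x = c u := by
  have h1 : u ∈ c ⁻¹' {c u} := rfl
  have h2 : v ∈ c ⁻¹' {c u} := by simp [h.symm]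
  obtain ⟨q, hq⟩ := exists_walk_of_induce_reachable
    ((hfib (c u)).preconnected ⟨u, h1⟩ ⟨v, h2⟩)
  exact ⟨q, fun x hx => hq x hx⟩

lemma lift_walk (hfib : ∀ w, (G.induce (c ⁻¹' {w})).Connected) {a b : W}
    (p : (quotientGraph G c).Walk a b) :
    ∀ {u v : V}, c u = a → c v = b →
      ∃ q : G.Walk u v,
        (∀ e ∈ q.edges, Sym2.map c e ∈ p.edges ∨ (Sym2.map c e).IsDiag) ∧
        (∀ x ∈ q.support, c x ∈ p.support) := by
  induction p with
  | nil =>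
      intro u v hu hv
      obtain ⟨q, hq⟩ := fiber_walk hfib (show c u = c v from hu.trans hv.symm)
      refine ⟨q, ?_, ?_⟩
      · intro e he
        refine Or.inr ?_
        induction e with
        | h x y =>
            have hx := hq x (Walk.fst_mem_support_of_mem_edges q he)
            have hy := hq y (Walk.snd_mem_support_of_mem_edges q he)
            simpa using hx.trans hy.symm
      · intro x hx
        rw [hq x hx, hu]
        simp
  | @cons a a₁ b h r ih =>
      intro u v hu hv
      obtain ⟨hne, x, y, hx, hy, hxy⟩ := id h
      obtain ⟨q₁, hq₁⟩ := fiber_walk hfib (show c u = c x from hu.trans hx.symm)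
      obtain ⟨q₂, hq₂e, hq₂s⟩ := ih (hy.trans rfl) hv
      refine ⟨q₁.append (Walk.cons hxy q₂), ?_, ?_⟩
      · intro e he
        rw [Walk.edges_append, List.mem_append] at he
        rcases he with he | he
        · refine Or.inr ?_
          induction e with
          | h s t =>
              have hs := hq₁ s (Walk.fst_mem_support_of_mem_edges q₁ he)
              have ht := hq₁ t (Walk.snd_mem_support_of_mem_edges q₁ he)
              simpa using hs.trans ht.symm
        · rw [Walk.edges_cons, List.mem_cons] at he
          rcases he with rfl | he
          · refine Or.inl ?_
            rw [Walk.edges_cons]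
            have : Sym2.map c s(x, y) = s(a, a₁) := by
              simp [hx, hy]
            rw [this]
            exact List.mem_cons_self
          · rcases hq₂e e he with h1 | h1
            · exact Or.inl (by rw [Walk.edges_cons]; exact List.mem_cons_of_mem _ h1)
            · exact Or.inr h1
      · intro z hz
        rw [Walk.support_append, List.mem_append] at hz
        rcases hz with hz | hz
        · rw [hq₁ z hz, hu]
          simp
        · have : z ∈ (Walk.cons hxy q₂).support := List.mem_of_mem_tail hz
          rw [Walk.support_cons, List.mem_cons] at this
          rcases this with rfl | hz'
          · rw [Walk.support_cons, List.mem_cons]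
            exact Or.inl hx
          · rw [Walk.support_cons, List.mem_cons]
            exact Or.inr (hq₂s z hz')

lemma quotient_isAcyclic (hfib : ∀ w, (G.induce (c ⁻¹' {w})).Connected)
    (hA : G.IsAcyclic) : (quotientGraph G c).IsAcyclic := by
  classical
  intro a w hw
  cases w with
  | nil => exact hw.ne_nil rfl
  | @cons a a₁ _ h r =>
      have hedges : s(a, a₁) ∉ r.edges := by
        have := hw.edges_nodup
        rw [Walk.edges_cons] at this
        exact (List.nodup_cons.mp this).1
      obtain ⟨hne, x, y, hx, hy, hxy⟩ := h
      obtain ⟨q, hqe, -⟩ := lift_walk hfib r hy hx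
      have hnotin : s(x, y) ∉ q.edges := by
        intro hmem
        rcases hqe _ hmem with h1 | h1
        · rw [show Sym2.map c s(x, y) = s(a, a₁) by simp [hx, hy]] at h1
          exact hedges h1
        · rw [show Sym2.map c s(x, y) = s(a, a₁) by simp [hx, hy]] at h1
          exact hne h1
      have hnotin' : s(x, y) ∉ q.bypass.edges :=
        fun hmem => hnotin (Walk.edges_bypass_subset q hmem)
      exact hA _ (SimpleGraph.Path.cons_isCycle ⟨q.bypass, q.bypass_isPath⟩ hxy hnotin')

lemma unique_cross (hfib : ∀ w, (G.induce (c ⁻¹' {w})).Connected) (hA : G.IsAcyclic)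
    {a b : W} (hab : a ≠ b) {u₁ v₁ u₂ v₂ : V}
    (hu₁ : c u₁ = a) (hv₁ : c v₁ = b) (hu₂ : c u₂ = a) (hv₂ : c v₂ = b)
    (h₁ : G.Adj u₁ v₁) (h₂ : G.Adj u₂ v₂) : u₁ = u₂ ∧ v₁ = v₂ := by
  classical
  by_contra hcon
  have hsym : s(u₁, v₁) ≠ s(u₂, v₂) := by
    intro hh
    rw [Sym2.eq_iff] at hh
    rcases hh with ⟨h1, h2⟩ | ⟨h1, h2⟩
    · exact hcon ⟨h1, h2⟩
    · subst h1; exact hab (hu₁ ▸ hv₂ ▸ rfl)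
  obtain ⟨qa, hqa⟩ := fiber_walk hfib (show c u₁ = c u₂ from hu₁.trans hu₂.symm)
  obtain ⟨qb, hqb⟩ := fiber_walk hfib (show c v₂ = c v₁ from hv₂.trans hv₁.symm)
  set Wk : G.Walk u₁ v₁ := qa.append (Walk.cons h₂ qb) with hWk
  have havoid : s(u₁, v₁) ∉ Wk.edges := by
    intro hmem
    rw [hWk, Walk.edges_append, List.mem_append, Walk.edges_cons, List.mem_cons] at hmem
    rcases hmem with hmem | hmem | hmem
    · have := hqa v₁ (Walk.snd_mem_support_of_mem_edges qa hmem)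
      rw [hv₁, hu₁] at this
      exact hab this.symm
    · exact hsym hmem
    · have := hqb u₁ (Walk.fst_mem_support_of_mem_edges qb hmem)
      rw [hu₁, hv₂] at this
      exact hab this
  have havoid' : s(u₁, v₁) ∉ Wk.reverse.bypass.edges := by
    intro hmem
    have := Walk.edges_bypass_subset _ hmem
    rw [Walk.edges_reverse, List.mem_reverse] at this
    exact havoid this
  exact hA _ (SimpleGraph.Path.cons_isCycle
    ⟨Wk.reverse.bypass, Wk.reverse.bypass_isPath⟩ h₁ havoid')

lemma quotient_comp {X : Type*} (G : SimpleGraph V) (c₁ : V → X) (c₂ : X → W) :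
    quotientGraph G (c₂ ∘ c₁) = quotientGraph (quotientGraph G c₁) c₂ := by
  ext a b
  constructor
  · rintro ⟨hne, u, v, hu, hv, h⟩
    by_cases he : c₁ u = c₁ v
    · exact absurd (hu ▸ hv ▸ (show c₂ (c₁ u) = c₂ (c₁ v) from congrArg c₂ he)) hne
    · exact ⟨hne, c₁ u, c₁ v, hu, hv, ⟨he, u, v, rfl, rfl, h⟩⟩
  · rintro ⟨hne, x, y, hx, hy, ⟨-, u, v, hu, hv, h⟩⟩
    exact ⟨hne, u, v, by simp [hu, hx], by simp [hv, hy], h⟩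

lemma comp_fibers_connected {X : Type*} {c₁ : V → X} {c₂ : X → W}
    (hfib₁ : ∀ x, (G.induce (c₁ ⁻¹' {x})).Connected)
    (hfib₂ : ∀ w, ((quotientGraph G c₁).induce (c₂ ⁻¹' {w})).Connected)
    (hs₁ : Surjective c₁) (hs₂ : Surjective c₂) :
    ∀ w, (G.induce ((c₂ ∘ c₁) ⁻¹' {w})).Connected := by
  intro w
  have hne : ((c₂ ∘ c₁) ⁻¹' {w}).Nonempty := by
    obtain ⟨x, hx⟩ := hs₂ w
    obtain ⟨u, hu⟩ := hs₁ x
    exact ⟨u, by simp [hu, hx]⟩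
  haveI : Nonempty ↑((c₂ ∘ c₁) ⁻¹' {w}) := ⟨⟨hne.choose, hne.choose_spec⟩⟩
  constructor
  rintro ⟨u, hu⟩ ⟨v, hv⟩
  have hu' : c₂ (c₁ u) = w := hu
  have hv' : c₂ (c₁ v) = w := hv
  obtain ⟨p, hp⟩ := exists_walk_of_induce_reachable
    ((hfib₂ w).preconnected ⟨c₁ u, hu'⟩ ⟨c₁ v, hv'⟩)
  obtain ⟨q, -, hqs⟩ := lift_walk hfib₁ p rfl rfl
  exact reachable_induce_of_walk hu hv q (fun x hx => hp (c₁ x) (hqs x hx))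

end AuxB
section AuxB2

open SimpleGraph Walk Function

variable {V W : Type*} {G : SimpleGraph V} {c : V → W}

lemma induce_isAcyclic (hA : G.IsAcyclic) (S : Set V) : (G.induce S).IsAcyclic := by
  intro v w hw
  exact hA _ ((Walk.map_isCycle_iff_of_injective (inclHom_injective G S)).mpr hw)

lemma deg_induce_eq_of_no_cross {S : Set V} {x : V} (hx : x ∈ S)
    (hnb : ∀ z, G.Adj x z → z ∈ S) : deg (G.induce S) ⟨x, hx⟩ = deg G x := by
  have himg : Subtype.val '' ((G.induce S).neighborSet ⟨x, hx⟩) = G.neighborSet x := by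
    ext z
    simp only [Set.mem_image, mem_neighborSet]
    constructor
    · rintro ⟨⟨z', hz'⟩, hadj, rfl⟩
      exact hadj
    · intro hz
      exact ⟨⟨z, hnb z hz⟩, hz, rfl⟩
  rw [deg, deg, ← himg, Set.ncard_image_of_injOn Subtype.val_injective.injOn]

lemma quotient_leaf_part [Fintype V] [Fintype W] (hfib : ∀ w, (G.induce (c ⁻¹' {w})).Connected)
    (hG : G.IsTree) (hcard : 2 ≤ Fintype.card V)
    {w : W} (hw : deg (quotientGraph G c) w = 1) : ∃ v, c v = w ∧ deg G v = 1 := by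
  classical
  obtain ⟨b, hb⟩ := Set.ncard_eq_one.mp hw
  have hQb : (quotientGraph G c).Adj w b := by
    have : b ∈ (quotientGraph G c).neighborSet w := by rw [hb]; rfl
    exact this
  have hwb : w ≠ b := hQb.ne
  set S : Set V := c ⁻¹' {w} with hS
  have hconn : (G.induce S).Connected := hfib w
  -- every crossing edge from S goes to the fiber of b
  have hcross : ∀ x z, x ∈ S → ¬ z ∈ S → G.Adj x z → c z = b := by
    intro x z hxS hzS hadj
    have hne : w ≠ c z := by
      intro hh
      exact hzS (by simp [hS, ← hh])
    have : (quotientGraph G c).Adj w (c z) := ⟨hne, x, z, hxS, rfl, hadj⟩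
    have : c z ∈ (quotientGraph G c).neighborSet w := this
    rw [hb] at this
    exact this
  by_cases hsub : S.Subsingleton
  · -- the fiber is a single vertex
    obtain ⟨⟨v, hv⟩⟩ := hconn.nonempty
    refine ⟨v, hv, ?_⟩
    have hvS : v ∈ S := hv
    have hnb : ∀ z₁ z₂, G.Adj v z₁ → G.Adj v z₂ → z₁ = z₂ := by
      intro z₁ z₂ h1 h2
      have hz₁ : ¬ z₁ ∈ S := fun hh => G.loopless.irrefl v ((hsub hh hvS) ▸ h1)
      have hz₂ : ¬ z₂ ∈ S := fun hh => G.loopless.irrefl v ((hsub hh hvS) ▸ h2)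
      exact (unique_cross hfib hG.IsAcyclic hwb hvS.out (hcross v z₁ hvS hz₁ h1)
        hvS.out (hcross v z₂ hvS hz₂ h2) h1 h2).2
    obtain ⟨u, hu⟩ := Fintype.exists_ne_of_one_lt_card (by omega) v
    obtain ⟨z, hz⟩ := exists_adj_of_ne (hG.isConnected.preconnected v u) hu.symm
    have : G.neighborSet v = {z} := by
      ext t
      simp only [mem_neighborSet, Set.mem_singleton_iff]
      exact ⟨fun ht => hnb t z ht hz, fun ht => ht ▸ hz⟩
    rw [deg, this, Set.ncard_singleton]
  · -- the fiber has at least two vertices; the induced graph is a tree with two leaves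
    rw [Set.not_subsingleton_iff] at hsub
    obtain ⟨x, hx, y, hy, hxy⟩ := hsub
    have htree : (G.induce S).IsTree := ⟨hconn, induce_isAcyclic hG.IsAcyclic S⟩
    obtain ⟨z0, hz0⟩ := exists_adj_of_ne (hconn.preconnected ⟨x, hx⟩ ⟨y, hy⟩)
      (fun hh => hxy (congrArg Subtype.val hh))
    obtain ⟨ℓ₁, ℓ₂, hℓne, hd₁, hd₂⟩ := tree_two_leaves htree hz0
    -- a leaf of the induced tree with no crossing edge is a leaf of G
    by_cases hc₁ : ∀ z, G.Adj ℓ₁.val z → z ∈ S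
    · exact ⟨ℓ₁.val, ℓ₁.2, by rw [← deg_induce_eq_of_no_cross ℓ₁.2 hc₁]; exact hd₁⟩
    by_cases hc₂ : ∀ z, G.Adj ℓ₂.val z → z ∈ S
    · exact ⟨ℓ₂.val, ℓ₂.2, by rw [← deg_induce_eq_of_no_cross ℓ₂.2 hc₂]; exact hd₂⟩
    push_neg at hc₁ hc₂
    obtain ⟨z₁, hz₁a, hz₁S⟩ := hc₁
    obtain ⟨z₂, hz₂a, hz₂S⟩ := hc₂
    have := (unique_cross hfib hG.IsAcyclic hwb ℓ₁.2.out (hcross _ _ ℓ₁.2 hz₁S hz₁a)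
      ℓ₂.2.out (hcross _ _ ℓ₂.2 hz₂S hz₂a) hz₁a hz₂a).1
    exact absurd (Subtype.val_injective this) hℓne

lemma quotient_leafCount_le [Fintype V] [Fintype W]
    (hfib : ∀ w, (G.induce (c ⁻¹' {w})).Connected)
    (hG : G.IsTree) (hcard : 2 ≤ Fintype.card V) :
    leafCount (quotientGraph G c) ≤ leafCount G := by
  classical
  haveI : Nonempty V := Fintype.card_pos_iff.mp (by omega)
  have h := fun (w : W) (hw : deg (quotientGraph G c) w = 1) =>
    quotient_leaf_part hfib hG hcard hw
  rw [leafCount, leafCount]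
  refine Set.ncard_le_ncard_of_injOn
    (fun w => if hw : deg (quotientGraph G c) w = 1 then (h w hw).choose else Classical.arbitrary V) ?_ ?_ (Set.toFinite _)
  · intro w hw
    simp only [Set.mem_setOf_eq] at hw ⊢
    rw [dif_pos hw]
    exact (h w hw).choose_spec.2
  · intro w₁ h₁ w₂ h₂ heq
    simp only [Set.mem_setOf_eq] at h₁ h₂
    dsimp only at heq
    rw [dif_pos h₁, dif_pos h₂] at heq
    rw [← (h w₁ h₁).choose_spec.1, ← (h w₂ h₂).choose_spec.1, heq]

end AuxB2
section AuxC

open SimpleGraph Walk Function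

variable {V : Type*} {G : SimpleGraph V}

lemma maximal_path_end_mem_support {u v : V} {p : G.Walk u v} (hp : p.IsPath)
    (hmax : ∀ (a b : V) (q : G.Walk a b), q.IsPath → q.length ≤ p.length)
    {z : V} (hz : G.Adj u z) : z ∈ p.support := by
  by_contra hzs
  have := hmax _ _ (Walk.cons hz.symm p) ((Walk.cons_isPath_iff _ _).mpr ⟨hp, hzs⟩)
  simp at this

lemma maximal_path_end_unique (hA : G.IsAcyclic) {u v : V} {p : G.Walk u v}
    (hp : p.IsPath)
    (hmax : ∀ (a b : V) (q : G.Walk a b), q.IsPath → q.length ≤ p.length)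
    {z z' : V} (hz : G.Adj u z) (hz' : G.Adj u z') : z = z' := by
  classical
  cases p with
  | nil =>
      have := hmax _ _ (Walk.cons hz Walk.nil) (by simp [hz.ne])
      simp at this
  | @cons _ w _ h r =>
      have hp' : (Walk.cons h r).IsPath := hp
      suffices hcl : ∀ t, G.Adj u t → t = w by rw [hcl z hz, hcl z' hz']
      intro t ht
      by_contra htw
      have hts : t ∈ (Walk.cons h r).support :=
        maximal_path_end_mem_support hp hmax ht
      have hedge : s(u, t) ∉ ((Walk.cons h r).takeUntil t hts).edges := by
        intro hmem
        have hsub := Walk.edges_takeUntil_subset (Walk.cons h r) hts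
        have : s(u, t) ∈ (Walk.cons h r).edges := hsub hmem
        exact htw (start_unique_edge hp' this
          (by rw [Walk.edges_cons]; exact List.mem_cons_self))
      have htp : ((Walk.cons h r).takeUntil t hts).IsPath := hp'.takeUntil hts
      have hedge' : s(u, t) ∉ (((Walk.cons h r).takeUntil t hts).reverse).edges := by
        rw [Walk.edges_reverse]
        intro hmem
        exact hedge (List.mem_reverse.mp hmem)
      exact hA _ (SimpleGraph.Path.cons_isCycle
        (⟨_, htp.reverse⟩ : G.Path t u) ht hedge')

lemma walk_entry {P : V → Prop} {a b : V} (q : G.Walk a b) (ha : ¬ P a) (hb : P b) :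
    ∃ x y, ¬ P x ∧ P y ∧ G.Adj x y := by
  induction q with
  | nil => exact absurd hb ha
  | @cons a c b h r ih =>
      by_cases hc : P c
      · exact ⟨a, c, ha, hc, h⟩
      · exact ih hc hb

/-- A nonempty finite path graph has a hamiltonian path which is also a longest path. -/
lemma pathGraph_ham {X : Type*} [Fintype X] [Nonempty X] {H : SimpleGraph X}
    (hH : IsPathGraph H) :
    ∃ (x y : X) (p : H.Walk x y), p.IsPath ∧ (∀ z, z ∈ p.support) ∧
      (∀ (a b : X) (q : H.Walk a b), q.IsPath → q.length ≤ p.length) := by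
  obtain ⟨x, y, p, hp, hmax⟩ := exists_maximal_path H
  refine ⟨x, y, p, hp, ?_, hmax⟩
  intro z
  by_contra hzs
  obtain ⟨q⟩ := hH.2.1 z x
  obtain ⟨x', y', hx', hy', hadj⟩ :=
    walk_entry (P := (· ∈ p.support)) q hzs p.start_mem_support
  by_cases hy'x : y' = x
  · subst hy'x
    exact hx' (maximal_path_end_mem_support hp hmax hadj.symm)
  by_cases hy'y : y' = y
  · subst hy'y
    have hmax' : ∀ (a b : X) (q' : H.Walk a b), q'.IsPath → q'.length ≤ p.reverse.length := by
      intro a b q' hq'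
      rw [Walk.length_reverse]
      exact hmax a b q' hq'
    have := maximal_path_end_mem_support hp.reverse hmax' hadj.symm
    rw [Walk.support_reverse, List.mem_reverse] at this
    exact hx' this
  · obtain ⟨a, b, hab, ha, hb, has, hbs⟩ :=
      internal_two_neighbors p hp hy' hy'x hy'y
    rcases hH.2.2 y' a b x' ha hb hadj.symm with h1 | h1 | h1
    · exact hab h1
    · exact hx' (h1 ▸ has)
    · exact hx' (h1 ▸ hbs)

lemma caterpillar_treeDiam [Fintype V] (hG : IsCaterpillar G)
    (hcard : 2 ≤ Fintype.card V) :
    treeDiam G = {v | 2 ≤ deg G v}.ncard + 1 := by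
  classical
  haveI : Nonempty V := Fintype.card_pos_iff.mp (by omega)
  set S : Set V := {v | 2 ≤ deg G v} with hSdef
  have hA : G.IsAcyclic := hG.1.IsAcyclic
  have hpre : G.Preconnected := hG.1.isConnected.preconnected
  -- upper bound
  have hle : treeDiam G ≤ S.ncard + 1 := by
    refine treeDiam_le ?_
    intro u v
    by_cases h0 : G.dist u v = 0
    · omega
    obtain ⟨p, hp, hl⟩ := (hpre u v).exists_path_of_dist
    rw [← hl]
    rcases Nat.lt_or_ge p.length 2 with h2 | h2
    · omega
    have huv : u ≠ v := isPath_ne_of_length_pos hp (by omega)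
    have hsubset : {x | x ∈ p.support} \ {u, v} ⊆ S := by
      rintro x ⟨hxs, hxe⟩
      simp only [Set.mem_insert_iff, Set.mem_singleton_iff, not_or] at hxe
      obtain ⟨a, b, hab, ha, hb, -, -⟩ :=
        internal_two_neighbors p hp hxs hxe.1 hxe.2
      exact two_le_deg_of_two_adj hab ha hb
    have hsupcard : ({x | x ∈ p.support} : Set V).ncard = p.length + 1 := by
      have : ({x | x ∈ p.support} : Set V) = ↑p.support.toFinset := by
        ext t; simp
      rw [this, Set.ncard_coe_finset, List.toFinset_card_of_nodup hp.support_nodup,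
        Walk.length_support]
    have hcount : ({x | x ∈ p.support} \ {u, v}).ncard = p.length - 1 := by
      have hsub' : ({u, v} : Set V) ⊆ {x | x ∈ p.support} := by
        rintro t (rfl | ht)
        · exact p.start_mem_support
        · simp only [Set.mem_singleton_iff] at ht
          subst ht
          exact p.end_mem_support
      rw [Set.ncard_diff hsub' (Set.toFinite _), hsupcard, Set.ncard_pair huv]
      omega
    have := Set.ncard_le_ncard hsubset (Set.toFinite _)
    omega
  -- lower bound
  have hge : S.ncard + 1 ≤ treeDiam G := by
    rcases Set.eq_empty_or_nonempty S with hSe | hSne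
    · rw [hSe, Set.ncard_empty]
      obtain ⟨u, hu⟩ := Fintype.exists_ne_of_one_lt_card (by omega : 1 < Fintype.card V)
        (Classical.arbitrary V)
      have := hG.1.isConnected.pos_dist_of_ne hu
      have := dist_le_treeDiam (G := G) u (Classical.arbitrary V)
      omega
    · haveI : Fintype ↥S := Fintype.ofFinite _
      haveI : Nonempty ↥S := hSne.to_subtype
      obtain ⟨x, y, pH, hpH, hham, hmaxH⟩ := pathGraph_ham hG.2
      set px := pH.map (inclHom G S) with hpx
      have hpxp : px.IsPath := Walk.map_isPath_of_injective (inclHom_injective G S) hpH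
      have hpxsup : ∀ t ∈ px.support, t ∈ S := by
        intro t ht
        rw [hpx, Walk.support_map] at ht
        obtain ⟨s, -, rfl⟩ := List.mem_map.mp ht
        exact s.2
      have hlen : pH.length + 1 = S.ncard := by
        have h1 : pH.support.toFinset = Finset.univ := by
          ext s; simp [hham s]
        have h2 : pH.support.toFinset.card = Fintype.card ↥S := by
          rw [h1]; exact Finset.card_univ
        rw [List.toFinset_card_of_nodup hpH.support_nodup, Walk.length_support] at h2
        rw [h2, Set.ncard_eq_toFinset_card', Set.toFinset_card]
      -- pendant leaves at the two ends
      have hmaxH' : ∀ (a b : ↥S) (q' : (G.induce S).Walk a b), q'.IsPath →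
          q'.length ≤ pH.reverse.length := by
        intro a b q' hq'
        rw [Walk.length_reverse]
        exact hmaxH a b q' hq'
      have hout : ∀ (e : ↥S), (∀ (z' : ↥S), (G.induce S).Adj e z' →
            ∀ (z'' : ↥S), (G.induce S).Adj e z'' → z' = z'') →
          ∃ ℓ, ℓ ∉ S ∧ G.Adj e.val ℓ := by
        intro e huniq
        by_contra hno
        push_neg at hno
        have hsub : ∀ z₁ ∈ G.neighborSet e.val, ∀ z₂ ∈ G.neighborSet e.val, z₁ = z₂ := by
          intro z₁ h₁ z₂ h₂
          have hz₁S : z₁ ∈ S := by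
            by_contra hh; exact (hno z₁ hh) h₁
          have hz₂S : z₂ ∈ S := by
            by_contra hh; exact (hno z₂ hh) h₂
          have e₁ : (G.induce S).Adj e ⟨z₁, hz₁S⟩ := h₁
          have e₂ : (G.induce S).Adj e ⟨z₂, hz₂S⟩ := h₂
          have := huniq _ e₁ _ e₂
          exact congrArg Subtype.val this
        have hle1 : deg G e.val ≤ 1 := (Set.ncard_le_one (Set.toFinite _)).mpr hsub
        have h2' : 2 ≤ deg G e.val := e.2
        omega
      have houtx : ∃ ℓ, ℓ ∉ S ∧ G.Adj x.val ℓ :=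
        hout x (fun z' hz' z'' hz'' =>
          maximal_path_end_unique hG.2.1 hpH hmaxH hz' hz'')
      have houty : ∃ ℓ, ℓ ∉ S ∧ G.Adj y.val ℓ :=
        hout y (fun z' hz' z'' hz'' =>
          maximal_path_end_unique hG.2.1 hpH.reverse hmaxH' hz' hz'')
      -- two distinct pendant leaves
      have hpend : ∃ ℓ₁ ℓ₂, ℓ₁ ∉ S ∧ ℓ₂ ∉ S ∧ ℓ₁ ≠ ℓ₂ ∧
          G.Adj ℓ₁ x.val ∧ G.Adj ℓ₂ y.val := by
        by_cases hxy : x = y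
        · subst hxy
          -- S = {x.val}
          have hS1 : S.ncard = 1 := by
            have hplen : pH.length = 0 := by
              by_contra hh
              exact isPath_ne_of_length_pos hpH (by omega) rfl
            omega
          obtain ⟨t, ht⟩ := Set.ncard_eq_one.mp hS1
          have hxt : x.val = t := by
            have hx : x.val ∈ S := x.2
            rw [ht] at hx
            exact hx
          have hallout : ∀ z, G.Adj x.val z → z ∉ S := by
            intro z hz hzS
            rw [ht, Set.mem_singleton_iff] at hzS
            rw [hzS, ← hxt] at hz
            exact G.loopless.irrefl _ hz
          have h2' : 2 ≤ deg G x.val := x.2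
          have h2'' : 1 < (G.neighborSet x.val).ncard := h2'
          obtain ⟨ℓ₁, hℓ₁, ℓ₂, hℓ₂, hne⟩ := (Set.one_lt_ncard (Set.toFinite _)).mp h2''
          exact ⟨ℓ₁, ℓ₂, hallout ℓ₁ hℓ₁, hallout ℓ₂ hℓ₂, hne,
            (hℓ₁ : G.Adj x.val ℓ₁).symm, (hℓ₂ : G.Adj x.val ℓ₂).symm⟩
        · obtain ⟨ℓ₁, hℓ₁S, hℓ₁a⟩ := houtx
          obtain ⟨ℓ₂, hℓ₂S, hℓ₂a⟩ := houty
          refine ⟨ℓ₁, ℓ₂, hℓ₁S, hℓ₂S, ?_, hℓ₁a.symm, hℓ₂a.symm⟩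
          rintro rfl
          have hvalne : x.val ≠ y.val := fun hh => hxy (Subtype.val_injective hh)
          have : 2 ≤ deg G ℓ₁ :=
            two_le_deg_of_two_adj hvalne hℓ₁a.symm hℓ₂a.symm
          exact hℓ₁S this
      obtain ⟨ℓ₁, ℓ₂, hℓ₁S, hℓ₂S, hℓne, h₁, h₂⟩ := hpend
      have hℓ₁px : ℓ₁ ∉ px.support := fun hh => hℓ₁S (hpxsup _ hh)
      have hℓ₂px : ℓ₂ ∉ px.support := fun hh => hℓ₂S (hpxsup _ hh)
      set q₁ : G.Walk ℓ₁ y.val := Walk.cons h₁ px with hq₁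
      have hq₁p : q₁.IsPath := (Walk.cons_isPath_iff _ _).mpr ⟨hpxp, hℓ₁px⟩
      set q₂ : G.Walk ℓ₂ ℓ₁ := Walk.cons h₂ q₁.reverse with hq₂
      have hq₂p : q₂.IsPath := by
        refine (Walk.cons_isPath_iff _ _).mpr ⟨hq₁p.reverse, ?_⟩
        rw [Walk.support_reverse, List.mem_reverse]
        change ℓ₂ ∉ ℓ₁ :: px.support
        rw [List.mem_cons]
        rintro (rfl | hh)
        · exact hℓne rfl
        · exact hℓ₂px hh
      have hq₂len : q₂.length = S.ncard + 1 := by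
        have h1 : q₂.length = px.length + 2 := by
          rw [hq₂, Walk.length_cons, Walk.length_reverse]
          change px.length + 1 + 1 = px.length + 2
          omega
        have h2 : px.length = pH.length := by rw [hpx, Walk.length_map]
        omega
      have := IsAcyclic.length_eq_dist hA q₂ hq₂p
      have := dist_le_treeDiam (G := G) ℓ₂ ℓ₁
      omega
  omega

end AuxC
section AuxC2

open SimpleGraph Walk Function

variable {V : Type*} {G : SimpleGraph V}

lemma edgeCount_tree [Fintype V] (hG : G.IsTree) : edgeCount G + 1 = Fintype.card V := by
  classical
  haveI : Fintype G.edgeSet := (Set.toFinite _).fintype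
  have h := hG.card_edgeFinset
  rw [edgeCount, ← h]
  congr 1
  rw [← Set.ncard_coe_finset, SimpleGraph.coe_edgeFinset]

lemma tree_min_deg [Fintype V] (hG : G.Connected) (hcard : 2 ≤ Fintype.card V) (v : V) :
    1 ≤ deg G v := by
  obtain ⟨u, hu⟩ := Fintype.exists_ne_of_one_lt_card (by omega) v
  obtain ⟨z, hz⟩ := exists_adj_of_ne (hG.preconnected v u) hu.symm
  exact one_le_deg_of_adj hz

lemma tree_leafCount [Fintype V] (hG : G.IsTree) (hcard : 2 ≤ Fintype.card V) :
    leafCount G + {v | 2 ≤ deg G v}.ncard = Fintype.card V := by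
  have hset : {v | deg G v = 1} = {v | 2 ≤ deg G v}ᶜ := by
    ext v
    have := tree_min_deg hG.isConnected hcard v
    simp only [Set.mem_setOf_eq, Set.mem_compl_iff]
    omega
  rw [leafCount, hset]
  have h := Set.ncard_add_ncard_compl ({v | 2 ≤ deg G v} : Set V)
    (Set.toFinite _) (Set.toFinite _)
  rw [Nat.card_eq_fintype_card] at h
  omega

lemma two_le_leafCount [Fintype V] (hG : G.IsTree) (hcard : 2 ≤ Fintype.card V) :
    2 ≤ leafCount G := by
  haveI : Nonempty V := Fintype.card_pos_iff.mp (by omega)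
  obtain ⟨u, hu⟩ := Fintype.exists_ne_of_one_lt_card (by omega) (Classical.arbitrary V)
  obtain ⟨z, hz⟩ := exists_adj_of_ne (hG.isConnected.preconnected u _) hu
  obtain ⟨x, y, hxy, hx, hy⟩ := tree_two_leaves hG hz
  have hsub : ({x, y} : Set V) ⊆ {v | deg G v = 1} := by
    rintro t (rfl | ht)
    · exact hx
    · simp only [Set.mem_singleton_iff] at ht; subst ht; exact hy
  calc 2 = ({x, y} : Set V).ncard := (Set.ncard_pair hxy).symm
    _ ≤ _ := Set.ncard_le_ncard hsub (Set.toFinite _)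

lemma caterpillar_edgeCount_eq_kappa [Fintype V] (hG : IsCaterpillar G)
    (hcard : 2 ≤ Fintype.card V) : edgeCount G = kappa G := by
  have h1 := edgeCount_tree hG.1
  have h2 := tree_leafCount hG.1 hcard
  have h3 := caterpillar_treeDiam hG hcard
  have h4 := two_le_leafCount hG.1 hcard
  rw [kappa, h3]
  omega

end AuxC2
section AuxD

open SimpleGraph Walk Function

variable {V X : Type*} {G : SimpleGraph V} {H : SimpleGraph X}

lemma Iso.deg_eq (e : G ≃g H) (v : V) : deg H (e v) = deg G v := by
  rw [deg, deg, ← Nat.card_coe_set_eq, ← Nat.card_coe_set_eq]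
  exact (Nat.card_congr (e.mapNeighborSet v)).symm

lemma Iso.edgeCount_eq (e : G ≃g H) : edgeCount H = edgeCount G := by
  rw [edgeCount, edgeCount, ← Nat.card_coe_set_eq, ← Nat.card_coe_set_eq]
  exact (Nat.card_congr e.mapEdgeSet).symm

lemma Iso.leafCount_eq (e : G ≃g H) : leafCount H = leafCount G := by
  rw [leafCount, leafCount]
  have hset : {x | deg H x = 1} = ⇑e '' {v | deg G v = 1} := by
    ext x
    simp only [Set.mem_setOf_eq, Set.mem_image]
    constructor
    · intro hx
      refine ⟨e.symm x, ?_, by simp⟩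
      rw [Iso.deg_eq e.symm x]
      exact hx
    · rintro ⟨v, hv, rfl⟩
      rw [Iso.deg_eq e v]
      exact hv
  rw [hset]
  exact Set.ncard_image_of_injOn (fun a _ b _ h => e.toEquiv.injective h)

lemma Iso.dist_eq' (e : G ≃g H) (u v : V) : H.dist (e u) (e v) = G.dist u v := by
  by_cases hr : G.Reachable u v
  · have hr' : H.Reachable (e u) (e v) := by
      obtain ⟨p⟩ := hr
      exact ⟨p.map e.toHom⟩
    apply le_antisymm
    · obtain ⟨p, -, hl⟩ := hr.exists_path_of_dist
      calc H.dist (e u) (e v) ≤ (p.map e.toHom).length := SimpleGraph.dist_le _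
        _ = p.length := by rw [Walk.length_map]
        _ = _ := hl
    · obtain ⟨p, -, hl⟩ := hr'.exists_path_of_dist
      have h1 : G.dist u v ≤
          ((p.map e.symm.toHom).copy (by simp) (by simp) : G.Walk u v).length :=
        SimpleGraph.dist_le _
      rw [Walk.length_copy, Walk.length_map] at h1
      omega
  · have hr' : ¬ H.Reachable (e u) (e v) := by
      intro hh
      obtain ⟨p⟩ := hh
      exact hr ⟨(p.map e.symm.toHom).copy (by simp) (by simp)⟩
    rw [SimpleGraph.dist_eq_zero_of_not_reachable hr,
      SimpleGraph.dist_eq_zero_of_not_reachable hr']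

lemma Iso.treeDiam_eq (e : G ≃g H) : treeDiam H = treeDiam G := by
  rw [treeDiam, treeDiam]
  congr 1
  ext n
  simp only [Set.mem_setOf_eq]
  constructor
  · rintro ⟨a, b, rfl⟩
    exact ⟨e.symm a, e.symm b, by rw [← Iso.dist_eq' e]; simp⟩
  · rintro ⟨u, v, rfl⟩
    exact ⟨e u, e v, Iso.dist_eq' e u v⟩

lemma Iso.isAcyclic (e : G ≃g H) (hA : G.IsAcyclic) : H.IsAcyclic := by
  intro x c hc
  exact hA _ ((Walk.map_isCycle_iff_of_injective
    (f := e.symm.toHom) e.symm.toEquiv.injective).mpr hc)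

lemma Iso.isTree' (e : G ≃g H) (hT : G.IsTree) : H.IsTree :=
  ⟨e.connected_iff.mp hT.isConnected, Iso.isAcyclic e hT.IsAcyclic⟩

end AuxD
section AuxD2

open SimpleGraph Walk Function

variable {V X : Type*} {G : SimpleGraph V} {H : SimpleGraph X}

lemma Iso.isPathGraph (e : G ≃g H) (hP : IsPathGraph G) : IsPathGraph H := by
  refine ⟨Iso.isAcyclic e hP.1, e.preconnected_iff.mp hP.2.1, ?_⟩
  intro v a b c hva hvb hvc
  have h1 : G.Adj (e.symm v) (e.symm a) := e.symm.map_rel_iff.mpr hva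
  have h2 : G.Adj (e.symm v) (e.symm b) := e.symm.map_rel_iff.mpr hvb
  have h3 : G.Adj (e.symm v) (e.symm c) := e.symm.map_rel_iff.mpr hvc
  rcases hP.2.2 _ _ _ _ h1 h2 h3 with h | h | h
  · exact Or.inl (e.symm.toEquiv.injective h)
  · exact Or.inr (Or.inl (e.symm.toEquiv.injective h))
  · exact Or.inr (Or.inr (e.symm.toEquiv.injective h))

/-- a graph isomorphism restricts to an isomorphism of the spines. -/
def isoInduceSpine (e : G ≃g H) :
    (G.induce {v | 2 ≤ deg G v}) ≃g (H.induce {x | 2 ≤ deg H x}) where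
  toEquiv := e.toEquiv.subtypeEquiv (fun v => by
    simp only [Set.mem_setOf_eq]
    rw [show deg H (e.toEquiv v) = deg G v from Iso.deg_eq e v])
  map_rel_iff' := e.map_rel_iff

lemma Iso.isCaterpillar (e : G ≃g H) (hC : IsCaterpillar G) : IsCaterpillar H :=
  ⟨Iso.isTree' e hC.1, Iso.isPathGraph (isoInduceSpine e) hC.2⟩

lemma Iso.kappa_eq (e : G ≃g H) : kappa H = kappa G := by
  rw [kappa, kappa, Iso.leafCount_eq e, Iso.treeDiam_eq e]

/-- the quotient along a bijection is isomorphic to the original graph. -/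
def quotientEquivIso (e : V ≃ X) (G : SimpleGraph V) : G ≃g quotientGraph G ⇑e where
  toEquiv := e
  map_rel_iff' := by
    intro a b
    constructor
    · rintro ⟨hne, u, v, hu, hv, h⟩
      have hua : u = a := e.injective hu
      have hvb : v = b := e.injective hv
      rw [← hua, ← hvb]
      exact h
    · intro h
      exact ⟨fun hh => h.ne (e.injective hh), a, b, rfl, rfl, h⟩

lemma equiv_fibers_connected (e : V ≃ X) (G : SimpleGraph V) :
    ∀ x, (G.induce (⇑e ⁻¹' {x})).Connected := by
  intro x
  haveI : Nonempty ↥(⇑e ⁻¹' {x}) := ⟨⟨e.symm x, by simp⟩⟩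
  constructor
  rintro ⟨u, hu⟩ ⟨v, hv⟩
  have huv : u = v := e.injective (by
    have h1 : e u = x := hu
    have h2 : e v = x := hv
    rw [h1, h2])
  subst huv
  rfl

lemma induce_pair_connected {x y : V} (h : G.Adj x y) : (G.induce {x, y}).Connected := by
  haveI : Nonempty ↥({x, y} : Set V) := ⟨⟨x, by simp⟩⟩
  constructor
  have hadj : (G.induce ({x, y} : Set V)).Adj ⟨x, by simp⟩ ⟨y, by simp⟩ := h
  rintro ⟨u, hu⟩ ⟨v, hv⟩
  simp only [Set.mem_insert_iff, Set.mem_singleton_iff] at hu hv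
  rcases hu with rfl | rfl <;> rcases hv with rfl | rfl
  · rfl
  · exact hadj.reachable
  · exact hadj.symm.reachable
  · rfl

end AuxD2
section AuxE

open SimpleGraph Walk Function

variable {V : Type*} {G : SimpleGraph V}

lemma induce_singleton_connected (G : SimpleGraph V) (v : V) :
    (G.induce ({v} : Set V)).Connected := by
  haveI : Nonempty ↥({v} : Set V) := ⟨⟨v, rfl⟩⟩
  constructor
  rintro ⟨u, hu⟩ ⟨w, hw⟩
  simp only [Set.mem_singleton_iff] at hu hw
  subst hu; subst hw
  rfl

lemma spine_preconnected [Fintype V] (hG : G.IsTree) :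
    (G.induce {v | 2 ≤ deg G v}).Preconnected := by
  rintro ⟨u, hu⟩ ⟨v, hv⟩
  obtain ⟨p, hp, -⟩ := (hG.isConnected.preconnected u v).exists_path_of_dist
  refine reachable_induce_of_walk hu hv p ?_
  intro x hx
  by_cases hxu : x = u
  · subst hxu; exact hu
  by_cases hxv : x = v
  · subst hxv; exact hv
  obtain ⟨a, b, hab, ha, hb, -, -⟩ := internal_two_neighbors p hp hx hxu hxv
  exact two_le_deg_of_two_adj hab ha hb

lemma edge_mem_of_start_adj (hA : G.IsAcyclic) {x w y : V} {q : G.Walk x w}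
    (hq : q.IsPath) (hy : y ∈ q.support) (hxy : G.Adj x y) : s(x, y) ∈ q.edges := by
  classical
  have hrp : (q.takeUntil y hy).IsPath := hq.takeUntil hy
  have heq : (⟨q.takeUntil y hy, hrp⟩ : G.Path x y) =
      ⟨Walk.cons hxy Walk.nil, by simp [hxy.ne]⟩ :=
    isAcyclic_iff_path_unique.mp hA _ _
  have hmem : s(x, y) ∈ (q.takeUntil y hy).edges := by
    have hval : q.takeUntil y hy = Walk.cons hxy Walk.nil := congrArg Subtype.val heq
    rw [hval]
    simp
  exact Walk.edges_takeUntil_subset q hy hmem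

lemma edge_mem_of_adj_support (hA : G.IsAcyclic) {u w x y : V} {p : G.Walk u w}
    (hp : p.IsPath) (hx : x ∈ p.support) (hy : y ∈ p.support) (hxy : G.Adj x y) :
    s(x, y) ∈ p.edges := by
  classical
  by_cases hyd : y ∈ (p.dropUntil x hx).support
  · exact Walk.edges_dropUntil_subset p hx
      (edge_mem_of_start_adj hA (hp.dropUntil hx) hyd hxy)
  · have hyt : y ∈ (p.takeUntil x hx).support := by
      have hspec := p.take_spec hx
      have : y ∈ ((p.takeUntil x hx).append (p.dropUntil x hx)).support := by
        rw [hspec]; exact hy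
      rw [Walk.support_append, List.mem_append] at this
      rcases this with h | h
      · exact h
      · exact absurd (List.mem_of_mem_tail h) hyd
    have hyt' : y ∈ (p.takeUntil x hx).reverse.support := by
      rw [Walk.support_reverse, List.mem_reverse]; exact hyt
    have := edge_mem_of_start_adj hA (hp.takeUntil hx).reverse hyt' hxy
    rw [Walk.edges_reverse, List.mem_reverse] at this
    exact Walk.edges_takeUntil_subset p hx this

lemma not_three_edges {v a b c : V} (hab : a ≠ b) (hac : a ≠ c) (hbc : b ≠ c) :
    ∀ {u w : V} (p : G.Walk u w), p.IsPath →
      s(v, a) ∈ p.edges → s(v, b) ∈ p.edges → s(v, c) ∈ p.edges → False := by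
  intro u w p
  induction p with
  | nil => intro _ ha _ _; simp at ha
  | @cons u₁ w₁ _ h r ih =>
      intro hp ha hb hc
      have hrpath : r.IsPath := ((Walk.cons_isPath_iff _ _).mp hp).1
      have hu₁ : u₁ ∉ r.support := ((Walk.cons_isPath_iff _ _).mp hp).2
      rw [Walk.edges_cons, List.mem_cons] at ha hb hc
      have key : ∀ {s t : V}, s ≠ t → s(v, s) = s(u₁, w₁) →
          s(v, t) ∈ r.edges → ∀ {t' : V}, t ≠ t' → s(v, t') ∈ r.edges → False := by
        intro s t hst hhead ht t' htt' ht'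
        rcases Sym2.eq_iff.mp hhead with ⟨hv, -⟩ | ⟨hv, -⟩
        · subst hv
          exact hu₁ (Walk.fst_mem_support_of_mem_edges r ht)
        · subst hv
          exact htt' (start_unique_edge hrpath ht ht')
      rcases ha with ha | ha
      · rcases hb with hb | hb
        · exact hab (Sym2.congr_right.mp (ha.trans hb.symm))
        rcases hc with hc | hc
        · exact hac (Sym2.congr_right.mp (ha.trans hc.symm))
        · exact key hab ha hb hbc hc
      rcases hb with hb | hb
      · rcases hc with hc | hc
        · exact hbc (Sym2.congr_right.mp (hb.trans hc.symm))
        · exact key (Ne.symm hab) hb ha hac hc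
      rcases hc with hc | hc
      · exact key (Ne.symm hac) hc ha hab hb
      · exact ih hrpath ha hb hc

end AuxE
section AuxE2

open SimpleGraph Walk Function

variable {V : Type*} {G : SimpleGraph V}

lemma contract_one [Fintype V] (hG : G.IsTree) (hE : 1 ≤ edgeCount G)
    (hnc : ¬ IsCaterpillar G) :
    ∃ (y : V) (c₁ : V → {z : V // z ≠ y}),
      Surjective c₁ ∧ (∀ w, (G.induce (c₁ ⁻¹' {w})).Connected) ∧
      (quotientGraph G c₁).IsTree ∧
      3 ≤ Fintype.card V ∧
      1 ≤ edgeCount (quotientGraph G c₁) ∧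
      kappa (quotientGraph G c₁) = kappa G := by
  classical
  have hA : G.IsAcyclic := hG.IsAcyclic
  have hcard2 : 2 ≤ Fintype.card V := by
    have h := edgeCount_tree hG
    omega
  haveI : Nonempty V := Fintype.card_pos_iff.mp (by omega)
  -- a spine vertex with three spine neighbours
  have hcond : ¬ ∀ (v a b c : ↥{v | 2 ≤ deg G v}),
      (G.induce {v | 2 ≤ deg G v}).Adj v a → (G.induce {v | 2 ≤ deg G v}).Adj v b →
      (G.induce {v | 2 ≤ deg G v}).Adj v c → a = b ∨ a = c ∨ b = c := by
    intro h
    exact hnc ⟨hG, induce_isAcyclic hA _, spine_preconnected hG, h⟩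
  push_neg at hcond
  obtain ⟨v, a, b, c, hva, hvb, hvc, hab, hac, hbc⟩ := hcond
  have hab' : a.val ≠ b.val := fun h => hab (Subtype.ext h)
  have hac' : a.val ≠ c.val := fun h => hac (Subtype.ext h)
  have hbc' : b.val ≠ c.val := fun h => hbc (Subtype.ext h)
  -- a diametral path
  obtain ⟨u₀, v₀, hd⟩ := exists_dist_eq_treeDiam (G := G)
  obtain ⟨p, hp, hpl⟩ := (hG.isConnected.preconnected u₀ v₀).exists_path_of_dist
  rw [hd] at hpl
  -- a spine edge at v missing the diametral path
  have hpick : ∃ t : V, G.Adj v.val t ∧ 2 ≤ deg G t ∧ s(v.val, t) ∉ p.edges := by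
    by_cases ha : s(v.val, a.val) ∈ p.edges
    · by_cases hb : s(v.val, b.val) ∈ p.edges
      · refine ⟨c.val, hvc, c.2, ?_⟩
        intro hcm
        exact not_three_edges hab' hac' hbc' p hp ha hb hcm
      · exact ⟨b.val, hvb, b.2, hb⟩
    · exact ⟨a.val, hva, a.2, ha⟩
  obtain ⟨t, hvt, ht2, hte⟩ := hpick
  -- orient the edge so that `y` avoids the diametral path
  obtain ⟨x, y, hxy, hx2, hy2, hyp⟩ :
      ∃ x y : V, G.Adj x y ∧ 2 ≤ deg G x ∧ 2 ≤ deg G y ∧ y ∉ p.support := by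
    by_cases hvp : v.val ∈ p.support
    · refine ⟨v.val, t, hvt, v.2, ht2, ?_⟩
      intro htp
      exact hte (edge_mem_of_adj_support hA hp hvp htp hvt)
    · exact ⟨t, v.val, hvt.symm, ht2, v.2, hvp⟩
  have hxney : x ≠ y := hxy.ne
  have hno_common : ∀ z, G.Adj x z → G.Adj y z → False := by
    intro z h1 h2
    exact IsAcyclic.no_triangle hA hxy h2 h1
  -- the contraction map
  set c₁ : V → {z : V // z ≠ y} := fun z => if hz : z = y then ⟨x, hxney⟩ else ⟨z, hz⟩
    with hc₁
  have hc₁y : c₁ y = ⟨x, hxney⟩ := by simp [hc₁]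
  have hc₁ne : ∀ z (hz : z ≠ y), c₁ z = ⟨z, hz⟩ := by
    intro z hz; simp [hc₁, hz]
  have hsurj : Surjective c₁ := by
    rintro ⟨z, hz⟩
    exact ⟨z, hc₁ne z hz⟩
  -- fibers
  have hfib : ∀ w, (G.induce (c₁ ⁻¹' {w})).Connected := by
    rintro ⟨z, hz⟩
    by_cases hzx : z = x
    · subst hzx
      have : c₁ ⁻¹' {⟨z, hz⟩} = {z, y} := by
        ext s
        simp only [Set.mem_preimage, Set.mem_singleton_iff, Set.mem_insert_iff,
          Set.mem_singleton_iff]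
        constructor
        · intro hs
          by_cases hsy : s = y
          · exact Or.inr hsy
          · rw [hc₁ne s hsy] at hs
            exact Or.inl (congrArg Subtype.val hs)
        · rintro (rfl | rfl)
          · exact hc₁ne s hz
          · rw [hc₁y]
        
      rw [this]
      exact induce_pair_connected hxy
    · have : c₁ ⁻¹' {⟨z, hz⟩} = {z} := by
        ext s
        simp only [Set.mem_preimage, Set.mem_singleton_iff]
        constructor
        · intro hs
          by_cases hsy : s = y
          · subst hsy
            rw [hc₁y] at hs
            exact absurd (congrArg Subtype.val hs).symm hzx
          · rw [hc₁ne s hsy] at hs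
            exact congrArg Subtype.val hs
        · rintro rfl
          exact hc₁ne s hz
      rw [this]
      exact induce_singleton_connected G z
  -- the quotient is a tree
  have htree : (quotientGraph G c₁).IsTree :=
    ⟨quotient_connected hsurj hG.isConnected, quotient_isAcyclic hfib hA⟩
  haveI instFW : Fintype {z : V // z ≠ y} := Fintype.ofFinite _
  have hcardW : Fintype.card {z : V // z ≠ y} + 1 = Fintype.card V := by
    have h1 := Fintype.card_subtype_compl (fun z : V => z = y)
    rw [Fintype.card_subtype_eq] at h1
    have h2 : Fintype.card {z : V // z ≠ y} = Fintype.card {z : V // ¬ z = y} := rfl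
    omega
  have hcard3 : 3 ≤ Fintype.card V := by
    have hxnotnb : x ∉ G.neighborSet x := fun h => G.loopless.irrefl x h
    have h1 : (insert x (G.neighborSet x)).ncard = deg G x + 1 :=
      Set.ncard_insert_of_notMem hxnotnb (Set.toFinite _)
    have h2 : (insert x (G.neighborSet x)).ncard ≤ (Set.univ : Set V).ncard :=
      Set.ncard_le_ncard (Set.subset_univ _) (Set.toFinite _)
    rw [Set.ncard_univ, Nat.card_eq_fintype_card] at h2
    omega
  have hedge₂ : edgeCount (quotientGraph G c₁) + 1 = Fintype.card {z : V // z ≠ y} :=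
    edgeCount_tree htree
  -- adjacency transfer
  have hT₂adj : ∀ {a' b' : V} (ha' : a' ≠ y) (hb' : b' ≠ y), G.Adj a' b' →
      (quotientGraph G c₁).Adj ⟨a', ha'⟩ ⟨b', hb'⟩ := by
    intro a' b' ha' hb' hadj
    exact ⟨fun hh => hadj.ne (congrArg Subtype.val hh), a', b',
      hc₁ne a' ha', hc₁ne b' hb', hadj⟩
  -- degrees are preserved away from the contracted edge
  have hNv : ∀ (v' : V) (hv'x : v' ≠ x) (hv'y : v' ≠ y),
      (quotientGraph G c₁).neighborSet ⟨v', hv'y⟩ = c₁ '' (G.neighborSet v') := by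
    intro v' hv'x hv'y
    ext b'
    simp only [mem_neighborSet, Set.mem_image]
    constructor
    · rintro ⟨hne, u', z, hu', hzb, hadj⟩
      have hu'v : u' = v' := by
        by_cases huy : u' = y
        · subst huy
          rw [hc₁y] at hu'
          exact absurd (congrArg Subtype.val hu').symm hv'x
        · rw [hc₁ne u' huy] at hu'
          exact congrArg Subtype.val hu'
      subst hu'v
      exact ⟨z, hadj, hzb⟩
    · rintro ⟨z, hz, rfl⟩
      refine ⟨?_, v', z, hc₁ne v' hv'y, rfl, hz⟩
      intro hh
      by_cases hzy : z = y
      · subst hzy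
        rw [hc₁y] at hh
        exact hv'x (congrArg Subtype.val hh)
      · rw [hc₁ne z hzy] at hh
        have hvz : v' = z := congrArg Subtype.val hh
        rw [← hvz] at hz
        exact G.loopless.irrefl v' hz
  have hdeg_eq : ∀ (v' : V) (hv'x : v' ≠ x) (hv'y : v' ≠ y),
      deg (quotientGraph G c₁) ⟨v', hv'y⟩ = deg G v' := by
    intro v' hv'x hv'y
    rw [deg, deg, hNv v' hv'x hv'y]
    apply Set.ncard_image_of_injOn
    intro z₁ hz₁ z₂ hz₂ heq
    by_cases h₁ : z₁ = y <;> by_cases h₂ : z₂ = y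
    · rw [h₁, h₂]
    · subst h₁
      rw [hc₁y, hc₁ne z₂ h₂] at heq
      have hz₂x : z₂ = x := (congrArg Subtype.val heq).symm
      subst hz₂x
      exact (hno_common v' hz₂.symm hz₁.symm).elim
    · subst h₂
      rw [hc₁y, hc₁ne z₁ h₁] at heq
      have hz₁x : z₁ = x := congrArg Subtype.val heq
      subst hz₁x
      exact (hno_common v' hz₁.symm hz₂.symm).elim
    · rw [hc₁ne z₁ h₁, hc₁ne z₂ h₂] at heq
      exact congrArg Subtype.val heq
  -- the merged vertex keeps degree at least two
  obtain ⟨x', hxx', hx'y⟩ : ∃ x', G.Adj x x' ∧ x' ≠ y := by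
    have h2' : 1 < (G.neighborSet x).ncard := hx2
    obtain ⟨z₁, hz₁, z₂, hz₂, hz12⟩ := (Set.one_lt_ncard (Set.toFinite _)).mp h2'
    by_cases h : z₁ = y
    · exact ⟨z₂, hz₂, fun hh => hz12 (h.trans hh.symm)⟩
    · exact ⟨z₁, hz₁, h⟩
  obtain ⟨y', hyy', hy'x⟩ : ∃ y', G.Adj y y' ∧ y' ≠ x := by
    have h2' : 1 < (G.neighborSet y).ncard := hy2
    obtain ⟨z₁, hz₁, z₂, hz₂, hz12⟩ := (Set.one_lt_ncard (Set.toFinite _)).mp h2'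
    by_cases h : z₁ = x
    · exact ⟨z₂, hz₂, fun hh => hz12 (h.trans hh.symm)⟩
    · exact ⟨z₁, hz₁, h⟩
  have hy'y : y' ≠ y := fun hh => G.loopless.irrefl y (hh ▸ hyy')
  have hx'y' : x' ≠ y' := fun hh => hno_common x' hxx' (hh ▸ hyy')
  have hdegx : 2 ≤ deg (quotientGraph G c₁) ⟨x, hxney⟩ := by
    refine two_le_deg_of_two_adj
      (a := (⟨x', hx'y⟩ : {z : V // z ≠ y})) (b := ⟨y', hy'y⟩)
      (fun hh => hx'y' (congrArg Subtype.val hh)) (hT₂adj hxney hx'y hxx') ?_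
    exact ⟨fun hh => hy'x (congrArg Subtype.val hh).symm, y, y',
      hc₁y, hc₁ne y' hy'y, hyy'⟩
  -- leaf count is preserved
  have hleaf : leafCount (quotientGraph G c₁) = leafCount G := by
    rw [leafCount, leafCount]
    have hset : {w : {z : V // z ≠ y} | deg (quotientGraph G c₁) w = 1} =
        c₁ '' {v' | deg G v' = 1} := by
      ext w
      simp only [Set.mem_setOf_eq, Set.mem_image]
      constructor
      · intro hw
        have hwx : w.val ≠ x := by
          intro hh
          have hww : w = ⟨x, hxney⟩ := Subtype.ext hh
          rw [hww] at hw
          omega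
        refine ⟨w.val, ?_, hc₁ne w.val w.2⟩
        rw [← hdeg_eq w.val hwx w.2]
        exact hw
      · rintro ⟨v', hv', rfl⟩
        have hv'x : v' ≠ x := by
          intro hh; rw [hh] at hv'; omega
        have hv'y : v' ≠ y := by
          intro hh; rw [hh] at hv'; omega
        rw [hc₁ne v' hv'y, hdeg_eq v' hv'x hv'y]
        exact hv'
    rw [hset]
    apply Set.ncard_image_of_injOn
    intro z₁ hz₁ z₂ hz₂ heq
    simp only [Set.mem_setOf_eq] at hz₁ hz₂
    have h₁y : z₁ ≠ y := by intro hh; rw [hh] at hz₁; omega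
    have h₂y : z₂ ≠ y := by intro hh; rw [hh] at hz₂; omega
    rw [hc₁ne z₁ h₁y, hc₁ne z₂ h₂y] at heq
    exact congrArg Subtype.val heq
  -- the diameter is preserved
  have hmapwalk : ∀ {u' v' : V} (q : G.Walk u' v'), (y ∉ q.support) →
      ∃ q₂ : (quotientGraph G c₁).Walk (c₁ u') (c₁ v'), q₂.length = q.length ∧
        q₂.support = q.support.map c₁ := by
    intro u' v' q
    induction q with
    | nil =>
        intro _
        exact ⟨Walk.nil, rfl, by simp⟩
    | @cons s₁ s₂ s₃ h r ih =>
        intro hy'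
        have hs₁ : s₁ ≠ y := fun hh => hy' (by simp [hh])
        have hs₂ : s₂ ≠ y := fun hh => hy' (by
          rw [Walk.support_cons, List.mem_cons]
          exact Or.inr (hh ▸ r.start_mem_support))
        obtain ⟨q₂, hl, hs⟩ := ih (fun hh => hy' (by
          rw [Walk.support_cons, List.mem_cons]
          exact Or.inr hh))
        have hadj₂ : (quotientGraph G c₁).Adj (c₁ s₁) (c₁ s₂) := by
          rw [hc₁ne s₁ hs₁, hc₁ne s₂ hs₂]
          exact hT₂adj hs₁ hs₂ h
        exact ⟨Walk.cons hadj₂ q₂, by simp [hl], by simp [hs]⟩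
  have hdiam : treeDiam (quotientGraph G c₁) = treeDiam G := by
    apply le_antisymm
    · exact quotient_treeDiam_le hsurj hG.isConnected
    · obtain ⟨q₂, hl, hsup⟩ := hmapwalk p hyp
      have hq₂path : q₂.IsPath := by
        rw [Walk.isPath_def, hsup]
        refine List.Nodup.map_on ?_ hp.support_nodup
        intro z₁ h₁ z₂ h₂ heq
        have hz₁ : z₁ ≠ y := fun hh => hyp (hh ▸ h₁)
        have hz₂ : z₂ ≠ y := fun hh => hyp (hh ▸ h₂)
        rw [hc₁ne z₁ hz₁, hc₁ne z₂ hz₂] at heq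
        exact congrArg Subtype.val heq
      have h1 := IsAcyclic.length_eq_dist htree.IsAcyclic q₂ hq₂path
      have h2 := dist_le_treeDiam (G := quotientGraph G c₁) (c₁ u₀) (c₁ v₀)
      omega
  have hkap : kappa (quotientGraph G c₁) = kappa G := by
    rw [kappa, kappa, hleaf, hdiam]
  exact ⟨y, c₁, hsurj, hfib, htree, hcard3, by omega, hkap⟩

end AuxE2
section AuxF

open SimpleGraph Walk Function

universe u

lemma mem_aux : ∀ (n : ℕ) {V : Type u} [Fintype V] (G : SimpleGraph V),
    G.IsTree → 1 ≤ edgeCount G → Fintype.card V = n →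
    ∃ (W : Type) (_ : Fintype W) (c : V → W),
      Surjective c ∧ (∀ w, (G.induce (c ⁻¹' {w})).Connected) ∧
      IsCaterpillar (quotientGraph G c) ∧ edgeCount (quotientGraph G c) = kappa G := by
  intro n
  induction n using Nat.strong_induction_on with
  | _ n ih =>
    intro V _ G hG hE hn
    by_cases hcat : IsCaterpillar G
    · classical
      have hcard2 : 2 ≤ Fintype.card V := by
        have := edgeCount_tree hG; omega
      set e := (Fintype.equivFin V) with he
      refine ⟨Fin (Fintype.card V), inferInstance, ⇑e, e.surjective,
        equiv_fibers_connected e G, ?_, ?_⟩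
      · exact Iso.isCaterpillar (quotientEquivIso e G) hcat
      · rw [Iso.edgeCount_eq (quotientEquivIso e G)]
        exact caterpillar_edgeCount_eq_kappa hcat hcard2
    · obtain ⟨y, c₁, hsurj₁, hfib₁, htree₂, hcard3, hE₂, hkap₂⟩ :=
        contract_one hG hE hcat
      classical
      haveI : Fintype {z : V // z ≠ y} := Fintype.ofFinite _
      have hcardW : Fintype.card {z : V // z ≠ y} < n := by
        have h1 := Fintype.card_subtype_compl (fun z : V => z = y)
        rw [Fintype.card_subtype_eq] at h1
        have h2 : Fintype.card {z : V // z ≠ y} = Fintype.card {z : V // ¬ z = y} := rfl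
        omega
      obtain ⟨W, instW, c₂, hsurj₂, hfib₂, hcat₂, hedge₂⟩ :=
        ih _ hcardW (quotientGraph G c₁) htree₂ hE₂ rfl
      refine ⟨W, instW, c₂ ∘ c₁, hsurj₂.comp hsurj₁, ?_, ?_, ?_⟩
      · exact comp_fibers_connected hfib₁ hfib₂ hsurj₁ hsurj₂
      · rw [quotient_comp]
        exact hcat₂
      · rw [quotient_comp, hedge₂, hkap₂]

lemma upper_aux {V : Type*} [Fintype V] (G : SimpleGraph V) (hG : G.IsTree)
    (hE : 1 ≤ edgeCount G) {W : Type} [Fintype W] (c : V → W)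
    (hs : Surjective c) (hfib : ∀ w, (G.induce (c ⁻¹' {w})).Connected)
    (hcat : IsCaterpillar (quotientGraph G c)) :
    edgeCount (quotientGraph G c) ≤ kappa G := by
  classical
  have hcard2 : 2 ≤ Fintype.card V := by
    have := edgeCount_tree hG; omega
  by_cases h0 : edgeCount (quotientGraph G c) = 0
  · omega
  · have hcardW : 2 ≤ Fintype.card W := by
      have h := edgeCount_tree hcat.1
      omega
    have h1 : edgeCount (quotientGraph G c) = kappa (quotientGraph G c) :=
      caterpillar_edgeCount_eq_kappa hcat hcardW
    have h2 : leafCount (quotientGraph G c) ≤ leafCount G :=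
      quotient_leafCount_le hfib hG hcard2
    have h3 : treeDiam (quotientGraph G c) ≤ treeDiam G :=
      quotient_treeDiam_le hs hG.isConnected
    rw [h1, kappa, kappa]
    omega

end AuxF

/-- For every finite tree `T` with at least one edge, the maximum number of
edges of a caterpillar obtainable from `T` by contracting edges (i.e., as a quotient by a
partition of the vertex set into nonempty connected parts) equals `κ(T)`, the number of leaves
plus the diameter minus 2. -/
theorem max_contraction_caterpillar_eq_kappa
    {V : Type*} [Fintype V] (G : SimpleGraph V) (hG : G.IsTree) (hE : 1 ≤ edgeCount G) :
    IsGreatest {k : ℕ | ∃ (W : Type) (_ : Fintype W) (c : V → W),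
        Function.Surjective c ∧
        (∀ w : W, (G.induce (c ⁻¹' {w})).Connected) ∧
        IsCaterpillar (quotientGraph G c) ∧
        edgeCount (quotientGraph G c) = k}
      (kappa G) := by
  constructor
  · obtain ⟨W, instW, c, h1, h2, h3, h4⟩ := mem_aux (Fintype.card V) G hG hE rfl
    exact ⟨W, instW, c, h1, h2, h3, h4⟩
  · rintro k ⟨W, instW, c, h1, h2, h3, h4⟩
    rw [← h4]
    exact upper_aux G hG hE c h1 h2 h3
end
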